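/- arXiv:2407.07904 — 10 statements merged into one kernel-verified Lean document; each statement's English description precedes it below -/
import Mathlib

section
/- For all positive parameters r, K, a, γ, β, N and delay τ > 0, and for every continuous initial condition φ = (φ₁, φ₂) : [−τ, 0] → ℝ² with φ₁(θ) ≥ 0 and φ₂(θ) ≥ 0 for all θ ∈ [−τ, 0], the delayed predator–prey system x'(t) = r(1 − x(t)/K)x(t) − γ x(t)² y(t)/(a² + x(t)²), y'(t) = −β y(t) + (γ x(t−τ)²/(a² + x(t−τ)²)) y(t−τ) e^{−y(t−τ)/N} has a unique solution (x, y) defined on all of [−τ, +∞), and this solution satisfies x(t) ≥ 0 and y(t) ≥ 0 for all t ≥ 0. -/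
open Set Filter

/-- `(x, y)` is a solution on `[-τ, ∞)` of the delayed predator–prey system
`x'(t) = r(1 − x(t)/K)x(t) − γ x(t)² y(t)/(a² + x(t)²)`,
`y'(t) = −β y(t) + (γ x(t−τ)²/(a² + x(t−τ)²)) y(t−τ) e^{−y(t−τ)/N}`,
with initial condition `(φ₁, φ₂)` on `[-τ, 0]`. -/
def IsSolution (r K a γ β N τ : ℝ) (φ₁ φ₂ : ℝ → ℝ) (x y : ℝ → ℝ) : Prop :=
  ContinuousOn x (Ici (-τ)) ∧ ContinuousOn y (Ici (-τ)) ∧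
  (∀ θ ∈ Icc (-τ) 0, x θ = φ₁ θ ∧ y θ = φ₂ θ) ∧
  (∀ t > (0 : ℝ),
    HasDerivAt x (r * (1 - x t / K) * x t - γ * (x t) ^ 2 * y t / (a ^ 2 + (x t) ^ 2)) t ∧
    HasDerivAt y (-β * y t + γ * (x (t - τ)) ^ 2 / (a ^ 2 + (x (t - τ)) ^ 2) * y (t - τ) *
      Real.exp (-(y (t - τ)) / N)) t)

open Topology

namespace DelayPP

/-! ### Generic helpers -/

/-- Pasting continuity on a union of two closed sets. -/
theorem continuousOn_union_closed {f : ℝ → ℝ} {s t : Set ℝ} (hs : IsClosed s) (ht : IsClosed t)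
    (hfs : ContinuousOn f s) (hft : ContinuousOn f t) : ContinuousOn f (s ∪ t) := by
  intro x hx
  have h1 : ContinuousWithinAt f s x := by
    by_cases h : x ∈ s
    · exact hfs x h
    · exact continuousWithinAt_of_notMem_closure (by rwa [hs.closure_eq])
  have h2 : ContinuousWithinAt f t x := by
    by_cases h : x ∈ t
    · exact hft x h
    · exact continuousWithinAt_of_notMem_closure (by rwa [ht.closure_eq])
  exact h1.union h2

/-- Continuous extension of a function continuous on `Icc a b`. -/
theorem exists_continuous_extension {g : ℝ → ℝ} {a b : ℝ} (hab : a ≤ b)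
    (hg : ContinuousOn g (Icc a b)) :
    ∃ G : ℝ → ℝ, Continuous G ∧ ∀ t ∈ Icc a b, G t = g t := by
  refine ⟨Set.IccExtend hab ((Icc a b).restrict g), ?_, ?_⟩
  · exact Continuous.Icc_extend' (continuousOn_iff_continuous_restrict.mp hg)
  · intro t ht
    rw [Set.IccExtend_of_mem hab _ ht]
    rfl

/-- FTC for continuous integrands. -/
theorem primitive_hasDerivAt {c : ℝ → ℝ} (hc : Continuous c) (A t : ℝ) :
    HasDerivAt (fun u => ∫ s in A..u, c s) (c t) t :=
  intervalIntegral.integral_hasDerivAt_right (hc.intervalIntegrable _ _)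
    (hc.stronglyMeasurableAtFilter _ _) hc.continuousAt

/-- If the right derivative is nonpositive on `Ico a b` then `f` is below `f a` on `Icc a b`. -/
theorem le_left_of_deriv_right_nonpos {f f' : ℝ → ℝ} {a b : ℝ}
    (hc : ContinuousOn f (Icc a b))
    (hd : ∀ t ∈ Ico a b, HasDerivWithinAt f (f' t) (Ici t) t)
    (h0 : ∀ t ∈ Ico a b, f' t ≤ 0) : ∀ t ∈ Icc a b, f t ≤ f a := by
  have := image_le_of_deriv_right_le_deriv_boundary (B := fun _ => f a) (B' := fun _ => 0)
    hc hd le_rfl continuousOn_const (fun x _ => hasDerivWithinAt_const _ _ _) h0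
  exact fun t ht => this ht

/-- If the right derivative is nonnegative on `Ioo a b` then `f a ≤ f` on `Icc a b`. -/
theorem left_le_of_deriv_right_nonneg_Ioo {f f' : ℝ → ℝ} {a b : ℝ}
    (hc : ContinuousOn f (Icc a b))
    (hd : ∀ t ∈ Ioo a b, HasDerivWithinAt f (f' t) (Ici t) t)
    (h0 : ∀ t ∈ Ioo a b, 0 ≤ f' t) : ∀ t ∈ Icc a b, f a ≤ f t := by
  intro t ht
  rcases eq_or_lt_of_le ht.1 with h | hat
  · exact (h ▸ le_rfl)
  -- use the interval [ε, t] and let ε → a⁺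
  have key : ∀ ε ∈ Ioc a t, f ε ≤ f t := by
    intro ε hε
    have hsub : Icc ε t ⊆ Icc a b := Icc_subset_Icc hε.1.le ht.2
    have := le_left_of_deriv_right_nonpos (f := fun s => -f s) (f' := fun s => -(f' s))
      (hc.mono hsub).neg
      (fun s hs => ((hd s ⟨lt_of_lt_of_le hε.1 hs.1, lt_of_lt_of_le hs.2 ht.2⟩).neg))
      (fun s hs => neg_nonpos.mpr (h0 s ⟨lt_of_lt_of_le hε.1 hs.1, lt_of_lt_of_le hs.2 ht.2⟩))
    simpa using this t ⟨hε.2, le_rfl⟩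
  have hne : (𝓝[Ioc a t] a).NeBot := by
    rw [nhdsWithin_Ioc_eq_nhdsGT hat]
    infer_instance
  have htd : Filter.Tendsto f (𝓝[Ioc a t] a) (𝓝 (f a)) := by
    have h1 : ContinuousWithinAt f (Icc a b) a := hc a ⟨le_rfl, le_trans ht.1 ht.2⟩
    exact h1.mono_left (nhdsWithin_mono _ (Ioc_subset_Icc_self.trans (Icc_subset_Icc le_rfl ht.2)))
  exact le_of_tendsto htd (Filter.eventually_of_mem self_mem_nhdsWithin key)

/-- Integrating-factor representation: if `x' = c t * x t` with `c` continuous, then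
`x t = x a * exp (∫ a..t, c)`. Right derivative on `Ioo` only. -/
theorem exp_representation_Ico {x c : ℝ → ℝ} {A b : ℝ}
    (hc : Continuous c) (hx : ContinuousOn x (Icc A b))
    (hd : ∀ t ∈ Ico A b, HasDerivWithinAt x (c t * x t) (Ici t) t) :
    ∀ t ∈ Icc A b, x t = x A * Real.exp (∫ s in A..t, c s) := by
  set I : ℝ → ℝ := fun u => ∫ s in A..u, c s with hI
  have hId : ∀ u, HasDerivAt I (c u) u := fun u => primitive_hasDerivAt hc A u
  have hexp : ∀ u : ℝ, HasDerivAt (fun v => Real.exp (-I v)) (Real.exp (-I u) * -(c u)) u :=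
    fun u => ((hId u).neg).exp
  have hzero : ∀ t ∈ Icc A b, x t * Real.exp (-I t) = x A := by
    have := constant_of_has_deriv_right_zero (f := fun u => x u * Real.exp (-I u)) (a := A) (b := b)
      (hx.mul (Continuous.continuousOn (by
        have hcI : Continuous I := continuous_iff_continuousAt.mpr fun u => (hId u).continuousAt
        exact hcI.neg.rexp)))
      (fun t ht => by
        have h1 : HasDerivWithinAt (fun u => x u * Real.exp (-I u))
            ((c t * x t) * Real.exp (-I t) + x t * (Real.exp (-I t) * -(c t))) (Ici t) t :=
          (hd t ht).mul ((hexp t).hasDerivWithinAt)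
        have h2 : (c t * x t) * Real.exp (-I t) + x t * (Real.exp (-I t) * -(c t)) = 0 := by ring
        rwa [h2] at h1)
    intro t ht
    have := this t ht
    simpa [hI, intervalIntegral.integral_same] using this
  intro t ht
  have h := hzero t ht
  have hne : Real.exp (-I t) ≠ 0 := (Real.exp_pos _).ne'
  have : x t = x A * Real.exp (I t) := by
    rw [← h, mul_assoc, ← Real.exp_add]
    simp
  simpa [hI] using this

theorem exp_representation {x c : ℝ → ℝ} {A b : ℝ}
    (hc : Continuous c) (hx : ContinuousOn x (Icc A b))
    (hd : ∀ t ∈ Ioo A b, HasDerivWithinAt x (c t * x t) (Ici t) t) :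
    ∀ t ∈ Icc A b, x t = x A * Real.exp (∫ s in A..t, c s) := by
  intro t ht
  rcases eq_or_lt_of_le ht.1 with h | hat
  · simp [← h]
  have key : ∀ ε ∈ Ioc A t, x t = x ε * Real.exp (∫ s in ε..t, c s) := by
    intro ε hε
    exact exp_representation_Ico hc (hx.mono (Icc_subset_Icc hε.1.le ht.2))
      (fun s hs => hd s ⟨lt_of_lt_of_le hε.1 hs.1, lt_of_lt_of_le hs.2 ht.2⟩) t ⟨hε.2, le_rfl⟩
  have hne : (𝓝[Ioc A t] A).NeBot := by
    rw [nhdsWithin_Ioc_eq_nhdsGT hat]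
    infer_instance
  have hIc : Continuous fun u => ∫ s in A..u, c s :=
    continuous_iff_continuousAt.mpr fun u => (primitive_hasDerivAt hc A u).continuousAt
  have hsplit : ∀ ε, (∫ s in ε..t, c s) = (∫ s in A..t, c s) - ∫ s in A..ε, c s := by
    intro ε
    rw [eq_sub_iff_add_eq, add_comm, intervalIntegral.integral_add_adjacent_intervals
      (hc.intervalIntegrable _ _) (hc.intervalIntegrable _ _)]
  have htd : Filter.Tendsto (fun ε => x ε * Real.exp (∫ s in ε..t, c s)) (𝓝[Ioc A t] A)
      (𝓝 (x A * Real.exp (∫ s in A..t, c s))) := by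
    have h1 : Filter.Tendsto x (𝓝[Ioc A t] A) (𝓝 (x A)) :=
      (hx A ⟨le_rfl, le_trans ht.1 ht.2⟩).mono_left
        (nhdsWithin_mono _ (Ioc_subset_Icc_self.trans (Icc_subset_Icc le_rfl ht.2)))
    have h2 : Filter.Tendsto (fun ε => Real.exp (∫ s in ε..t, c s)) (𝓝[Ioc A t] A)
        (𝓝 (Real.exp (∫ s in A..t, c s))) := by
      have hcont : Continuous fun ε => Real.exp ((∫ s in A..t, c s) - ∫ s in A..ε, c s) :=
        ((continuous_const.sub hIc).rexp)
      have heq : (fun ε => Real.exp (∫ s in ε..t, c s)) =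
          fun ε => Real.exp ((∫ s in A..t, c s) - ∫ s in A..ε, c s) :=
        funext fun ε => by rw [hsplit ε]
      rw [heq]
      have h3 : Filter.Tendsto (fun ε => Real.exp ((∫ s in A..t, c s) - ∫ s in A..ε, c s))
          (𝓝 A) (𝓝 (Real.exp ((∫ s in A..t, c s) - ∫ s in A..A, c s))) := hcont.tendsto A
      simp only [intervalIntegral.integral_same, sub_zero] at h3
      exact h3.mono_left nhdsWithin_le_nhds
    exact h1.mul h2
  have hconst : Filter.Tendsto (fun _ : ℝ => x t) (𝓝[Ioc A t] A) (𝓝 (x t)) := tendsto_const_nhds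
  refine tendsto_nhds_unique (hconst.congr' ?_) htd
  filter_upwards [self_mem_nhdsWithin] with ε hε
  exact key ε hε


/-! ### The vector fields -/

/-- Prey equation RHS. -/
noncomputable def F1 (r K a γ u w : ℝ) : ℝ :=
  r * (1 - u / K) * u - γ * u ^ 2 * w / (a ^ 2 + u ^ 2)

/-- Predator delayed-term RHS. -/
noncomputable def F2 (a γ N u w : ℝ) : ℝ :=
  γ * u ^ 2 / (a ^ 2 + u ^ 2) * w * Real.exp (-w / N)

variable {r K a γ β N : ℝ}

lemma denom_pos (ha : 0 < a) (u : ℝ) : 0 < a ^ 2 + u ^ 2 := by positivity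

lemma F1_zero (w : ℝ) : F1 r K a γ 0 w = 0 := by simp [F1]

lemma F2_nonneg (hγ : 0 < γ) (ha : 0 < a) {u w : ℝ} (hw : 0 ≤ w) : 0 ≤ F2 a γ N u w := by
  have h := denom_pos ha u
  have : (0:ℝ) ≤ γ * u ^ 2 / (a ^ 2 + u ^ 2) := by positivity
  exact mul_nonneg (mul_nonneg this hw) (Real.exp_pos _).le

lemma F1_factor (ha : 0 < a) (u w : ℝ) :
    F1 r K a γ u w = (r * (1 - u / K) - γ * u * w / (a ^ 2 + u ^ 2)) * u := by
  have h := (denom_pos ha u).ne'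
  simp only [F1]
  field_simp

lemma F1_coeff_le (hr : 0 < r) (hK : 0 < K) (hγ : 0 < γ) (ha : 0 < a) {u w : ℝ}
    (hu : 0 ≤ u) (hw : 0 ≤ w) :
    r * (1 - u / K) - γ * u * w / (a ^ 2 + u ^ 2) ≤ r := by
  have h := denom_pos ha u
  have h1 : 0 ≤ γ * u * w / (a ^ 2 + u ^ 2) := by positivity
  have h2 : r * (1 - u / K) ≤ r := by
    have : 0 ≤ u / K := by positivity
    nlinarith
  linarith

lemma F1_nonpos (hr : 0 < r) (hK : 0 < K) (hγ : 0 < γ) (ha : 0 < a) {B w : ℝ}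
    (hB : K ≤ B) (hw : 0 ≤ w) : F1 r K a γ B w ≤ 0 := by
  have hB0 : 0 ≤ B := le_trans hK.le hB
  have h := denom_pos ha B
  have h1 : 0 ≤ γ * B ^ 2 * w / (a ^ 2 + B ^ 2) := by positivity
  have h2 : r * (1 - B / K) * B ≤ 0 := by
    have hd : 1 - B / K ≤ 0 := by
      rw [sub_nonpos, le_div_iff₀ hK]
      linarith
    nlinarith [mul_nonneg (mul_nonneg hr.le hB0) (neg_nonneg.2 hd)]
  have hF : F1 r K a γ B w = r * (1 - B / K) * B - γ * B ^ 2 * w / (a ^ 2 + B ^ 2) := rfl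
  rw [hF]
  linarith

lemma F1_bound (hr : 0 < r) (hK : 0 < K) (hγ : 0 < γ) (ha : 0 < a) {B W u w : ℝ}
    (hu : u ∈ Icc (0:ℝ) B) (hw : w ∈ Icc (0:ℝ) W) :
    |F1 r K a γ u w| ≤ r * B + r * B ^ 2 / K + γ * W * B ^ 2 / a ^ 2 := by
  obtain ⟨hu0, huB⟩ := hu
  obtain ⟨hw0, hwW⟩ := hw
  have h := denom_pos ha u
  have ha2 : (0:ℝ) < a ^ 2 := by positivity
  have hB0 : 0 ≤ B := le_trans hu0 huB
  have hW0 : 0 ≤ W := le_trans hw0 hwW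
  have hnum0 : 0 ≤ γ * u ^ 2 * w := mul_nonneg (mul_nonneg hγ.le (sq_nonneg u)) hw0
  have h2 : γ * u ^ 2 * w / (a ^ 2 + u ^ 2) ≤ γ * W * B ^ 2 / a ^ 2 := by
    apply div_le_div₀ (by positivity) ?_ ha2 (by nlinarith)
    have hu2 : u ^ 2 ≤ B ^ 2 := by nlinarith
    calc γ * u ^ 2 * w ≤ γ * B ^ 2 * w := by nlinarith [mul_nonneg hγ.le hw0]
      _ ≤ γ * B ^ 2 * W := by nlinarith [mul_nonneg hγ.le (sq_nonneg B)]
      _ = γ * W * B ^ 2 := by ring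
  have h2' : 0 ≤ γ * u ^ 2 * w / (a ^ 2 + u ^ 2) := div_nonneg hnum0 h.le
  have h3 : |r * (1 - u / K) * u| ≤ r * B + r * B ^ 2 / K := by
    have hrw : r * (1 - u / K) * u = r * u - r * u ^ 2 / K := by field_simp
    have hru : 0 ≤ r * u := by positivity
    have hrB : 0 ≤ r * B := by positivity
    have hu2 : u ^ 2 ≤ B ^ 2 := by nlinarith
    have l1 : r * u ^ 2 / K ≤ r * B ^ 2 / K := by gcongr
    have l2 : 0 ≤ r * u ^ 2 / K := by positivity
    have l3 : r * u ≤ r * B := by nlinarith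
    rw [abs_le, hrw]
    constructor <;> linarith
  calc |F1 r K a γ u w| ≤ |r * (1 - u / K) * u| + |γ * u ^ 2 * w / (a ^ 2 + u ^ 2)| :=
        abs_sub _ _
    _ ≤ (r * B + r * B ^ 2 / K) + γ * W * B ^ 2 / a ^ 2 := by
        rw [abs_of_nonneg h2']
        exact add_le_add h3 h2
    _ = _ := by ring

lemma F1_lipschitzOnWith (hr : 0 < r) (hK : 0 < K) (hγ : 0 < γ) (ha : 0 < a) {B W w : ℝ}
    (hB : 0 ≤ B) (hw : w ∈ Icc (0:ℝ) W) :
    LipschitzOnWith (Real.toNNReal (r + 2 * r * B / K + 2 * γ * W * B / a ^ 2))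
      (fun u => F1 r K a γ u w) (Icc 0 B) := by
  rw [lipschitzOnWith_iff_dist_le_mul]
  intro u₁ h₁ u₂ h₂
  obtain ⟨hw0, hwW⟩ := hw
  have hd₁ := denom_pos ha u₁
  have hd₂ := denom_pos ha u₂
  have key : F1 r K a γ u₁ w - F1 r K a γ u₂ w =
      (r - r / K * (u₁ + u₂) - γ * w * a ^ 2 * (u₁ + u₂) / ((a ^ 2 + u₁ ^ 2) * (a ^ 2 + u₂ ^ 2)))
        * (u₁ - u₂) := by
    simp only [F1]
    field_simp
    ring
  have ha4 : (0:ℝ) < a ^ 2 * a ^ 2 := by positivity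
  set E := γ * w * a ^ 2 * (u₁ + u₂) / ((a ^ 2 + u₁ ^ 2) * (a ^ 2 + u₂ ^ 2)) with hE
  have hE0 : 0 ≤ E := by
    apply div_nonneg ?_ (by positivity)
    have := h₁.1; have := h₂.1
    positivity
  have hEle : E ≤ 2 * γ * W * B / a ^ 2 := by
    rw [hE]
    have hu10 := h₁.1; have hu1B := h₁.2; have hu20 := h₂.1; have hu2B := h₂.2
    have hsum0 : (0:ℝ) ≤ u₁ + u₂ := by linarith
    have hsumB : u₁ + u₂ ≤ 2 * B := by linarith
    have hW0 : 0 ≤ W := le_trans hw0 hwW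
    have hnum : γ * w * a ^ 2 * (u₁ + u₂) ≤ γ * W * a ^ 2 * (2 * B) := by
      have s1 : γ * w * a ^ 2 ≤ γ * W * a ^ 2 := by nlinarith [mul_nonneg hγ.le (sq_nonneg a)]
      calc γ * w * a ^ 2 * (u₁ + u₂) ≤ γ * W * a ^ 2 * (u₁ + u₂) :=
            mul_le_mul_of_nonneg_right s1 hsum0
        _ ≤ γ * W * a ^ 2 * (2 * B) := by
            apply mul_le_mul_of_nonneg_left hsumB
            positivity
    calc γ * w * a ^ 2 * (u₁ + u₂) / ((a ^ 2 + u₁ ^ 2) * (a ^ 2 + u₂ ^ 2))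
        ≤ γ * W * a ^ 2 * (2 * B) / (a ^ 2 * a ^ 2) := by
          apply div_le_div₀ ?_ hnum ha4 ?_
          · positivity
          · nlinarith [sq_nonneg u₁, sq_nonneg u₂]
      _ = 2 * γ * W * B / a ^ 2 := by
          field_simp
  have hcoef0 : 0 ≤ r / K * (u₁ + u₂) := by
    have := h₁.1; have := h₂.1
    positivity
  have hcoefle : r / K * (u₁ + u₂) ≤ 2 * r * B / K := by
    rw [div_mul_eq_mul_div, div_le_div_iff₀ hK hK]
    nlinarith [mul_nonneg (by linarith [h₁.2, h₂.2] : (0:ℝ) ≤ 2 * B - (u₁ + u₂))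
      (mul_pos hr hK).le]
  have hLnn : (0:ℝ) ≤ r + 2 * r * B / K + 2 * γ * W * B / a ^ 2 := by
    have hW0 : 0 ≤ W := le_trans hw0 hwW
    positivity
  have habs : |r - r / K * (u₁ + u₂) - E| ≤ r + 2 * r * B / K + 2 * γ * W * B / a ^ 2 := by
    rw [abs_le]
    constructor <;> linarith
  rw [Real.dist_eq, Real.dist_eq, key, abs_mul]
  rw [Real.coe_toNNReal _ hLnn]
  exact mul_le_mul_of_nonneg_right habs (abs_nonneg _)

lemma continuous_F1_comp (ha : 0 < a) {X Y : ℝ → ℝ} (hX : Continuous X) (hY : Continuous Y) :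
    Continuous fun t => F1 r K a γ (X t) (Y t) := by
  unfold F1
  have hden : ∀ t, a ^ 2 + X t ^ 2 ≠ 0 := fun t => (denom_pos ha (X t)).ne'
  exact ((continuous_const.mul (continuous_const.sub (hX.div_const K))).mul hX).sub
    (((continuous_const.mul (hX.pow 2)).mul hY).div (continuous_const.add (hX.pow 2)) hden)

lemma continuous_F2_comp (ha : 0 < a) {X Y : ℝ → ℝ} (hX : Continuous X) (hY : Continuous Y) :
    Continuous fun t => F2 a γ N (X t) (Y t) := by
  unfold F2
  have hden : ∀ t, a ^ 2 + X t ^ 2 ≠ 0 := fun t => (denom_pos ha (X t)).ne'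
  exact (((continuous_const.mul (hX.pow 2)).div (continuous_const.add (hX.pow 2)) hden).mul
    hY).mul ((hY.neg.div_const N).rexp)


/-! ### Solutions on a finite interval -/

/-- `(x,y)` solves the delayed system on `[-τ, T]`. -/
def SolOn (r K a γ β N τ : ℝ) (φ₁ φ₂ x y : ℝ → ℝ) (T : ℝ) : Prop :=
  ContinuousOn x (Icc (-τ) T) ∧ ContinuousOn y (Icc (-τ) T) ∧
  (∀ θ ∈ Icc (-τ) 0, x θ = φ₁ θ ∧ y θ = φ₂ θ) ∧
  ∀ t ∈ Ioc (0:ℝ) T,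
    HasDerivWithinAt x (F1 r K a γ (x t) (y t)) (Icc (-τ) T) t ∧
    HasDerivWithinAt y (-β * y t + F2 a γ N (x (t - τ)) (y (t - τ))) (Icc (-τ) T) t

variable {τ : ℝ} {φ₁ φ₂ : ℝ → ℝ}

lemma hasDerivWithinAt_Ici_of_Icc {f : ℝ → ℝ} {d A T t : ℝ} (hAt : A ≤ t) (htT : t < T)
    (h : HasDerivWithinAt f d (Icc A T) t) : HasDerivWithinAt f d (Ici t) t := by
  apply h.mono_of_mem_nhdsWithin
  apply Filter.mem_of_superset
    (inter_mem self_mem_nhdsWithin (mem_nhdsWithin_of_mem_nhds (Iio_mem_nhds htT)))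
  exact fun s hs => ⟨le_trans hAt hs.1, hs.2.le⟩

theorem SolOn.mono {x y : ℝ → ℝ} {T T' : ℝ} (h : SolOn r K a γ β N τ φ₁ φ₂ x y T)
    (hT'0 : 0 ≤ T') (hT' : T' ≤ T) : SolOn r K a γ β N τ φ₁ φ₂ x y T' := by
  obtain ⟨hxc, hyc, hinit, hd⟩ := h
  have hsub : Icc (-τ) T' ⊆ Icc (-τ) T := Icc_subset_Icc le_rfl hT'
  exact ⟨hxc.mono hsub, hyc.mono hsub, hinit, fun t ht =>
    ⟨((hd t ⟨ht.1, le_trans ht.2 hT'⟩).1).mono hsub,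
     ((hd t ⟨ht.1, le_trans ht.2 hT'⟩).2).mono hsub⟩⟩

/-- Exponential representation of the prey component. -/
theorem solOn_rep (hr : 0 < r) (hK : 0 < K) (ha : 0 < a) (hγ : 0 < γ) (hτ : 0 < τ)
    {x y : ℝ → ℝ} {T : ℝ} (hT : 0 ≤ T) (sol : SolOn r K a γ β N τ φ₁ φ₂ x y T) :
    ∃ c : ℝ → ℝ, Continuous c ∧
      (∀ s ∈ Icc (0:ℝ) T, c s = r * (1 - x s / K) - γ * x s * y s / (a ^ 2 + (x s) ^ 2)) ∧
      ∀ t ∈ Icc (0:ℝ) T, x t = x 0 * Real.exp (∫ s in (0:ℝ)..t, c s) := by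
  obtain ⟨hxc, hyc, hinit, hderiv⟩ := sol
  have hτT : -τ ≤ T := by linarith
  obtain ⟨X, hXc, hXeq⟩ := exists_continuous_extension hτT hxc
  obtain ⟨Y, hYc, hYeq⟩ := exists_continuous_extension hτT hyc
  set c : ℝ → ℝ := fun s => r * (1 - X s / K) - γ * X s * Y s / (a ^ 2 + (X s) ^ 2) with hc
  have hccont : Continuous c := by
    have hden : ∀ s, a ^ 2 + (X s) ^ 2 ≠ 0 := fun s => (denom_pos ha (X s)).ne'
    exact (continuous_const.mul (continuous_const.sub (hXc.div_const K))).sub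
      (((continuous_const.mul hXc).mul hYc).div (continuous_const.add (hXc.pow 2)) hden)
  have hmem : ∀ s ∈ Icc (0:ℝ) T, s ∈ Icc (-τ) T := fun s hs => ⟨by linarith [hs.1], hs.2⟩
  have hceq : ∀ s ∈ Icc (0:ℝ) T,
      c s = r * (1 - x s / K) - γ * x s * y s / (a ^ 2 + (x s) ^ 2) := by
    intro s hs
    rw [hc]
    simp only [hXeq s (hmem s hs), hYeq s (hmem s hs)]
  refine ⟨c, hccont, hceq, ?_⟩
  apply exp_representation hccont (hxc.mono (fun s hs => hmem s hs))
  intro t ht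
  have htI : t ∈ Ioc (0:ℝ) T := ⟨ht.1, ht.2.le⟩
  have hd := (hderiv t htI).1
  have hval : c t * x t = F1 r K a γ (x t) (y t) := by
    rw [hceq t ⟨ht.1.le, ht.2.le⟩, F1_factor ha]
  rw [hval]
  exact hasDerivWithinAt_Ici_of_Icc (by linarith [ht.1]) ht.2 hd

/-- Nonnegativity of any solution. -/
theorem solOn_nonneg (hr : 0 < r) (hK : 0 < K) (ha : 0 < a) (hγ : 0 < γ) (hβ : 0 < β)
    (hN : 0 < N) (hτ : 0 < τ)
    (hφ₁0 : 0 ≤ φ₁ 0) (hφ₂ : ∀ θ ∈ Icc (-τ) (0:ℝ), 0 ≤ φ₂ θ)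
    {x y : ℝ → ℝ} {T : ℝ} (hT : 0 ≤ T) (sol : SolOn r K a γ β N τ φ₁ φ₂ x y T) :
    ∀ t ∈ Icc (0:ℝ) T, 0 ≤ x t ∧ 0 ≤ y t := by
  have hτ0 : -τ ≤ 0 := by linarith
  obtain ⟨c, hcc, hceq, hrep⟩ := solOn_rep hr hK ha hγ hτ hT sol
  obtain ⟨hxc, hyc, hinit, hderiv⟩ := sol
  have hx0 : x 0 = φ₁ 0 := (hinit 0 ⟨hτ0, le_rfl⟩).1
  have hy0 : y 0 = φ₂ 0 := (hinit 0 ⟨hτ0, le_rfl⟩).2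
  have hxnn : ∀ t ∈ Icc (0:ℝ) T, 0 ≤ x t := by
    intro t ht
    rw [hrep t ht, hx0]
    positivity
  -- nonnegativity of y, by induction on delay steps
  have hynn : ∀ n : ℕ, ∀ t ∈ Icc (0:ℝ) T, t ≤ n * τ → 0 ≤ y t := by
    intro n
    induction n with
    | zero =>
      intro t ht htn
      have ht0 : t = 0 := le_antisymm (by simpa using htn) ht.1
      rw [ht0, hy0]
      exact hφ₂ 0 ⟨hτ0, le_rfl⟩
    | succ n ih =>
      intro t ht htn
      set s := min ((n : ℝ) * τ) T with hs
      have hs0 : 0 ≤ s := le_min (by positivity) hT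
      have hsT : s ≤ T := min_le_right _ _
      have hsy : 0 ≤ y s := ih s ⟨hs0, hsT⟩ (min_le_left _ _)
      by_cases hts : t ≤ s
      · exact ih t ht (le_trans hts (min_le_left _ _))
      push_neg at hts
      -- work on [s, t]
      have hmono := left_le_of_deriv_right_nonneg_Ioo
        (f := fun u => y u * Real.exp (β * u))
        (f' := fun u => F2 a γ N (x (u - τ)) (y (u - τ)) * Real.exp (β * u))
        (a := s) (b := t)
        ((hyc.mono (Icc_subset_Icc (by linarith) ht.2)).mul
          ((continuous_const.mul continuous_id).rexp.continuousOn))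
        ?_ ?_ t ⟨hts.le, le_rfl⟩
      · have hexp := Real.exp_pos (β * t)
        have hexp' := Real.exp_pos (β * s)
        have h1 : 0 ≤ y s * Real.exp (β * s) := mul_nonneg hsy hexp'.le
        have h2 : 0 ≤ y t * Real.exp (β * t) := le_trans h1 hmono
        exact (mul_nonneg_iff_of_pos_right hexp).mp h2
      · -- derivative of the integrating-factor product
        intro u hu
        have huI : u ∈ Ioc (0:ℝ) T := ⟨lt_of_le_of_lt hs0 hu.1, le_trans hu.2.le ht.2⟩
        have huT : u < T := lt_of_lt_of_le hu.2 ht.2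
        have hdy : HasDerivWithinAt y
            (-β * y u + F2 a γ N (x (u - τ)) (y (u - τ))) (Ici u) u :=
          hasDerivWithinAt_Ici_of_Icc (by linarith [huI.1.le]) huT (hderiv u huI).2
        have hde : HasDerivAt (fun v => Real.exp (β * v)) (Real.exp (β * u) * β) u := by
          simpa using (((hasDerivAt_id u).const_mul β).exp)
        have := hdy.mul hde.hasDerivWithinAt
        have hval : (-β * y u + F2 a γ N (x (u - τ)) (y (u - τ))) * Real.exp (β * u)
            + y u * (Real.exp (β * u) * β)
            = F2 a γ N (x (u - τ)) (y (u - τ)) * Real.exp (β * u) := by ring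
        rwa [hval] at this
      · -- nonnegativity of the derivative
        intro u hu
        apply mul_nonneg ?_ (Real.exp_pos _).le
        apply F2_nonneg hγ ha
        have hu0 : 0 ≤ u := le_trans hs0 hu.1.le
        by_cases huτ : u - τ ≤ 0
        · have : y (u - τ) = φ₂ (u - τ) := (hinit (u - τ) ⟨by linarith, huτ⟩).2
          rw [this]
          exact hφ₂ _ ⟨by linarith, huτ⟩
        · push_neg at huτ
          apply ih (u - τ) ⟨by linarith, by linarith [hu.2, ht.2]⟩
          have hus : s = (n : ℝ) * τ := by
            rcases min_cases ((n : ℝ) * τ) T with h | h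
            · exact h.1
            · exfalso
              have : u ≤ T := by linarith [hu.2, ht.2]
              have : s = T := h.1
              linarith [hu.2, ht.2, htn, h.2]
          have : u ≤ t := hu.2.le
          have htn' : t ≤ (n : ℝ) * τ + τ := by
            push_cast at htn
            linarith
          linarith
  intro t ht
  refine ⟨hxnn t ht, ?_⟩
  obtain ⟨n, hn⟩ := exists_nat_ge (T / τ)
  have : T ≤ n * τ := by
    rw [div_le_iff₀ hτ] at hn
    linarith
  exact hynn n t ht (le_trans ht.2 this)

/-- Upper bound on the prey component. -/
theorem solOn_bound (hr : 0 < r) (hK : 0 < K) (ha : 0 < a) (hγ : 0 < γ) (hβ : 0 < β)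
    (hN : 0 < N) (hτ : 0 < τ)
    (hφ₁0 : 0 ≤ φ₁ 0) (hφ₂ : ∀ θ ∈ Icc (-τ) (0:ℝ), 0 ≤ φ₂ θ)
    {x y : ℝ → ℝ} {T : ℝ} (hT : 0 ≤ T) (sol : SolOn r K a γ β N τ φ₁ φ₂ x y T) :
    ∀ t ∈ Icc (0:ℝ) T, x t ≤ φ₁ 0 * Real.exp (r * T) := by
  have hτ0 : -τ ≤ 0 := by linarith
  have hnn := solOn_nonneg hr hK ha hγ hβ hN hτ hφ₁0 hφ₂ hT sol
  obtain ⟨c, hcc, hceq, hrep⟩ := solOn_rep hr hK ha hγ hτ hT sol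
  have hx0 : x 0 = φ₁ 0 := (sol.2.2.1 0 ⟨hτ0, le_rfl⟩).1
  intro t ht
  have hcle : ∀ s ∈ Icc (0:ℝ) t, c s ≤ r := by
    intro s hs
    have hs' : s ∈ Icc (0:ℝ) T := ⟨hs.1, le_trans hs.2 ht.2⟩
    rw [hceq s hs']
    exact F1_coeff_le hr hK hγ ha (hnn s hs').1 (hnn s hs').2
  have hint : (∫ s in (0:ℝ)..t, c s) ≤ r * t := by
    have h1 : (∫ s in (0:ℝ)..t, c s) ≤ ∫ s in (0:ℝ)..t, r := by
      apply intervalIntegral.integral_mono_on ht.1 (hcc.intervalIntegrable _ _)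
        (intervalIntegrable_const) hcle
    simpa [mul_comm] using h1
  rw [hrep t ht, hx0]
  have : Real.exp (∫ s in (0:ℝ)..t, c s) ≤ Real.exp (r * T) := by
    apply Real.exp_le_exp.mpr
    have : r * t ≤ r * T := by nlinarith [ht.2]
    linarith
  nlinarith [Real.exp_pos (∫ s in (0:ℝ)..t, c s)]


/-! ### Uniqueness -/

/-- Two ODE trajectories with Lipschitz field agreeing at the left endpoint coincide;
derivatives only needed in the open interval. -/
theorem eq_of_ode_Ioo {v : ℝ → ℝ → ℝ} {s : ℝ → Set ℝ} {Kc : NNReal} {f g : ℝ → ℝ} {A b : ℝ}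
    (hv : ∀ t, LipschitzOnWith Kc (v t) (s t))
    (hf : ContinuousOn f (Icc A b)) (hg : ContinuousOn g (Icc A b))
    (hf' : ∀ t ∈ Ioo A b, HasDerivWithinAt f (v t (f t)) (Ici t) t)
    (hg' : ∀ t ∈ Ioo A b, HasDerivWithinAt g (v t (g t)) (Ici t) t)
    (hfs : ∀ t ∈ Icc A b, f t ∈ s t) (hgs : ∀ t ∈ Icc A b, g t ∈ s t)
    (heq : f A = g A) : ∀ t ∈ Icc A b, f t = g t := by
  intro t ht
  rcases eq_or_lt_of_le ht.1 with h | hat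
  · rw [← h]; exact heq
  have key : ∀ ε ∈ Ioc A t,
      dist (f t) (g t) ≤ dist (f ε) (g ε) * Real.exp (Kc * (t - A)) := by
    intro ε hε
    have hsub : Icc ε t ⊆ Icc A b := Icc_subset_Icc hε.1.le ht.2
    have h1 := dist_le_of_trajectories_ODE_of_mem (v := v) (s := s) (K := Kc)
      (f := f) (g := g) (a := ε) (b := t) (δ := dist (f ε) (g ε))
      (fun u _ => hv u) (hf.mono hsub)
      (fun u hu => hf' u ⟨lt_of_lt_of_le hε.1 hu.1, lt_of_lt_of_le hu.2 ht.2⟩)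
      (fun u hu => hfs u (hsub (Ico_subset_Icc_self hu)))
      (hg.mono hsub)
      (fun u hu => hg' u ⟨lt_of_lt_of_le hε.1 hu.1, lt_of_lt_of_le hu.2 ht.2⟩)
      (fun u hu => hgs u (hsub (Ico_subset_Icc_self hu)))
      le_rfl t ⟨hε.2, le_rfl⟩
    calc dist (f t) (g t) ≤ dist (f ε) (g ε) * Real.exp (Kc * (t - ε)) := h1
      _ ≤ dist (f ε) (g ε) * Real.exp (Kc * (t - A)) := by
          apply mul_le_mul_of_nonneg_left ?_ dist_nonneg
          apply Real.exp_le_exp.mpr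
          have hK0 : (0:ℝ) ≤ (Kc : ℝ) := Kc.coe_nonneg
          nlinarith [hε.1]
  have hne : (𝓝[Ioc A t] A).NeBot := by
    rw [nhdsWithin_Ioc_eq_nhdsGT hat]
    infer_instance
  have htdf : Filter.Tendsto f (𝓝[Ioc A t] A) (𝓝 (f A)) :=
    (hf A ⟨le_rfl, le_trans ht.1 ht.2⟩).mono_left
      (nhdsWithin_mono _ (Ioc_subset_Icc_self.trans (Icc_subset_Icc le_rfl ht.2)))
  have htdg : Filter.Tendsto g (𝓝[Ioc A t] A) (𝓝 (g A)) :=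
    (hg A ⟨le_rfl, le_trans ht.1 ht.2⟩).mono_left
      (nhdsWithin_mono _ (Ioc_subset_Icc_self.trans (Icc_subset_Icc le_rfl ht.2)))
  have htd : Filter.Tendsto (fun ε => dist (f ε) (g ε) * Real.exp (Kc * (t - A)))
      (𝓝[Ioc A t] A) (𝓝 (dist (f A) (g A) * Real.exp (Kc * (t - A)))) :=
    (htdf.dist htdg).mul tendsto_const_nhds
  have hlim : dist (f t) (g t) ≤ dist (f A) (g A) * Real.exp (Kc * (t - A)) :=
    ge_of_tendsto htd (Filter.eventually_of_mem self_mem_nhdsWithin key)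
  rw [heq, dist_self, zero_mul] at hlim
  exact dist_le_zero.mp hlim

/-- Uniqueness of solutions of the delayed system. -/
theorem solOn_uniq (hr : 0 < r) (hK : 0 < K) (ha : 0 < a) (hγ : 0 < γ) (hβ : 0 < β)
    (hN : 0 < N) (hτ : 0 < τ)
    (hφ₁0 : 0 ≤ φ₁ 0) (hφ₂ : ∀ θ ∈ Icc (-τ) (0:ℝ), 0 ≤ φ₂ θ)
    {x y x' y' : ℝ → ℝ} {T : ℝ} (hT : 0 ≤ T)
    (sol : SolOn r K a γ β N τ φ₁ φ₂ x y T) (sol' : SolOn r K a γ β N τ φ₁ φ₂ x' y' T) :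
    ∀ t ∈ Icc (-τ) T, x t = x' t ∧ y t = y' t := by
  have hτ0 : -τ ≤ 0 := by linarith
  have hτT : -τ ≤ T := by linarith
  have hnn := solOn_nonneg hr hK ha hγ hβ hN hτ hφ₁0 hφ₂ hT sol
  have hnn' := solOn_nonneg hr hK ha hγ hβ hN hτ hφ₁0 hφ₂ hT sol'
  have hbd := solOn_bound hr hK ha hγ hβ hN hτ hφ₁0 hφ₂ hT sol
  have hbd' := solOn_bound hr hK ha hγ hβ hN hτ hφ₁0 hφ₂ hT sol'
  obtain ⟨hxc, hyc, hinit, hderiv⟩ := sol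
  obtain ⟨hxc', hyc', hinit', hderiv'⟩ := sol'
  set B : ℝ := φ₁ 0 * Real.exp (r * T) with hB
  have hB0 : 0 ≤ B := by positivity
  -- a common bound for the predator components
  obtain ⟨W₁, hW₁⟩ := (isCompact_Icc (a := -τ) (b := T)).exists_bound_of_continuousOn hyc
  obtain ⟨W₂, hW₂⟩ := (isCompact_Icc (a := -τ) (b := T)).exists_bound_of_continuousOn hyc'
  set W : ℝ := max W₁ W₂ with hW
  have hyW : ∀ u ∈ Icc (0:ℝ) T, y u ∈ Icc (0:ℝ) W := by
    intro u hu
    refine ⟨(hnn u hu).2, ?_⟩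
    have := hW₁ u ⟨by linarith [hu.1], hu.2⟩
    have h2 := le_trans (le_abs_self _) this
    exact le_trans h2 (le_max_left _ _)
  have hyW' : ∀ u ∈ Icc (0:ℝ) T, y' u ∈ Icc (0:ℝ) W := by
    intro u hu
    refine ⟨(hnn' u hu).2, ?_⟩
    have := hW₂ u ⟨by linarith [hu.1], hu.2⟩
    exact le_trans (le_trans (le_abs_self _) this) (le_max_right _ _)
  have hW0 : 0 ≤ W := le_trans (hyW 0 ⟨le_rfl, hT⟩).1 (hyW 0 ⟨le_rfl, hT⟩).2
  -- main induction on delay steps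
  have main : ∀ n : ℕ, ∀ t ∈ Icc (-τ) T, t ≤ n * τ → x t = x' t ∧ y t = y' t := by
    intro n
    induction n with
    | zero =>
      intro t ht htn
      have ht0 : t ∈ Icc (-τ) (0:ℝ) := ⟨ht.1, by simpa using htn⟩
      rw [(hinit t ht0).1, (hinit t ht0).2, (hinit' t ht0).1, (hinit' t ht0).2]
      exact ⟨rfl, rfl⟩
    | succ n ih =>
      intro t ht htn
      set s := min ((n : ℝ) * τ) T with hs
      have hs0 : 0 ≤ s := le_min (by positivity) hT
      have hsT : s ≤ T := min_le_right _ _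
      by_cases hts : t ≤ s
      · exact ih t ht (le_trans hts (min_le_left _ _))
      push_neg at hts
      have hsnτ : s = (n : ℝ) * τ := by
        rcases min_cases ((n : ℝ) * τ) T with h | h
        · exact h.1
        · exfalso; rw [hs] at hts; linarith [ht.2, h.1, hts]
      set s' := min ((n : ℝ) * τ + τ) T with hs'
      have hss' : s ≤ s' := by
        apply le_min ?_ hsT
        rw [hsnτ]; linarith
      have hts' : t ≤ s' := le_min (by push_cast at htn; linarith) ht.2
      have hs'T : s' ≤ T := min_le_right _ _
      -- history equality at time u - τ for u in [s, s']
      have hist : ∀ u ∈ Icc s s', x (u - τ) = x' (u - τ) ∧ y (u - τ) = y' (u - τ) := by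
        intro u hu
        apply ih (u - τ) ⟨by linarith [hu.1, hs0], by linarith [hu.2, hs'T]⟩
        have := hu.2
        have h2 : u ≤ (n : ℝ) * τ + τ := le_trans hu.2 (min_le_left _ _)
        linarith
      -- predator equality on [s, s']
      have hyeq : ∀ u ∈ Icc s s', y u = y' u := by
        apply eq_of_ode_Ioo (v := fun u w => -β * w + F2 a γ N (x (u - τ)) (y (u - τ)))
          (s := fun _ => univ) (Kc := Real.toNNReal β)
        · intro u
          rw [lipschitzOnWith_iff_dist_le_mul]
          intro w₁ _ w₂ _
          rw [Real.dist_eq, Real.dist_eq, Real.coe_toNNReal _ hβ.le]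
          have : -β * w₁ + F2 a γ N (x (u - τ)) (y (u - τ)) -
              (-β * w₂ + F2 a γ N (x (u - τ)) (y (u - τ))) = -β * (w₁ - w₂) := by ring
          rw [this, abs_mul, abs_neg, abs_of_pos hβ]
        · exact hyc.mono (Icc_subset_Icc (by linarith) hs'T)
        · exact hyc'.mono (Icc_subset_Icc (by linarith) hs'T)
        · intro u hu
          have huI : u ∈ Ioc (0:ℝ) T := ⟨lt_of_le_of_lt hs0 hu.1, le_trans hu.2.le hs'T⟩
          exact hasDerivWithinAt_Ici_of_Icc (by linarith [huI.1.le]) (lt_of_lt_of_le hu.2 hs'T)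
            (hderiv u huI).2
        · intro u hu
          have huI : u ∈ Ioc (0:ℝ) T := ⟨lt_of_le_of_lt hs0 hu.1, le_trans hu.2.le hs'T⟩
          have h := (hderiv' u huI).2
          have hh := hist u (Ioo_subset_Icc_self hu)
          rw [← hh.1, ← hh.2] at h
          exact hasDerivWithinAt_Ici_of_Icc (by linarith [huI.1.le]) (lt_of_lt_of_le hu.2 hs'T) h
        · exact fun u _ => mem_univ _
        · exact fun u _ => mem_univ _
        · rcases eq_or_lt_of_le hs0 with h0 | h0
          · rw [← h0]
            rw [(hinit 0 ⟨hτ0, le_rfl⟩).2, (hinit' 0 ⟨hτ0, le_rfl⟩).2]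
          · exact (ih s ⟨by linarith, hsT⟩ (min_le_left _ _)).2
      -- prey equality on [s, s']
      have hxeq : ∀ u ∈ Icc s s', x u = x' u := by
        apply eq_of_ode_Ioo (v := fun u w => F1 r K a γ w (y u))
          (s := fun u => if u ∈ Icc (0:ℝ) T then Icc (0:ℝ) B else {x u})
          (Kc := Real.toNNReal (r + 2*r*B/K + 2*γ*W*B/a^2))
        · intro u
          by_cases hu : u ∈ Icc (0:ℝ) T
          · rw [if_pos hu]
            exact F1_lipschitzOnWith hr hK hγ ha hB0 (hyW u hu)
          · rw [if_neg hu, lipschitzOnWith_iff_dist_le_mul]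
            intro w₁ h₁ w₂ h₂
            simp only [mem_singleton_iff] at h₁ h₂
            subst h₁; subst h₂
            simp
        · exact hxc.mono (Icc_subset_Icc (by linarith) hs'T)
        · exact hxc'.mono (Icc_subset_Icc (by linarith) hs'T)
        · intro u hu
          have huI : u ∈ Ioc (0:ℝ) T := ⟨lt_of_le_of_lt hs0 hu.1, le_trans hu.2.le hs'T⟩
          exact hasDerivWithinAt_Ici_of_Icc (by linarith [huI.1.le]) (lt_of_lt_of_le hu.2 hs'T)
            (hderiv u huI).1
        · intro u hu
          have huI : u ∈ Ioc (0:ℝ) T := ⟨lt_of_le_of_lt hs0 hu.1, le_trans hu.2.le hs'T⟩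
          have h := (hderiv' u huI).1
          have hyu : y' u = y u := (hyeq u (Ioo_subset_Icc_self hu)).symm
          rw [hyu] at h
          rw [show x' u = x' u from rfl] at h
          exact hasDerivWithinAt_Ici_of_Icc (by linarith [huI.1.le]) (lt_of_lt_of_le hu.2 hs'T) h
        · intro u hu
          have huI : u ∈ Icc (0:ℝ) T := ⟨le_trans hs0 hu.1, le_trans hu.2 hs'T⟩
          rw [if_pos huI]
          exact ⟨(hnn u huI).1, hbd u huI⟩
        · intro u hu
          have huI : u ∈ Icc (0:ℝ) T := ⟨le_trans hs0 hu.1, le_trans hu.2 hs'T⟩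
          rw [if_pos huI]
          exact ⟨(hnn' u huI).1, hbd' u huI⟩
        · rcases eq_or_lt_of_le hs0 with h0 | h0
          · rw [← h0]
            rw [(hinit 0 ⟨hτ0, le_rfl⟩).1, (hinit' 0 ⟨hτ0, le_rfl⟩).1]
          · exact (ih s ⟨by linarith, hsT⟩ (min_le_left _ _)).1
      exact ⟨hxeq t ⟨hts.le, hts'⟩, hyeq t ⟨hts.le, hts'⟩⟩
  intro t ht
  obtain ⟨n, hn⟩ := exists_nat_ge (T / τ)
  have hTn : T ≤ n * τ := by
    rw [div_le_iff₀ hτ] at hn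
    linarith
  exact main n t ht (le_trans ht.2 hTn)


/-! ### Extension by one delay step -/

theorem solOn_ext (hr : 0 < r) (hK : 0 < K) (ha : 0 < a) (hγ : 0 < γ) (hβ : 0 < β)
    (hN : 0 < N) (hτ : 0 < τ)
    (hφ₁0 : 0 ≤ φ₁ 0) (hφ₂ : ∀ θ ∈ Icc (-τ) (0:ℝ), 0 ≤ φ₂ θ)
    {x y : ℝ → ℝ} {T : ℝ} (hT : 0 ≤ T) (sol : SolOn r K a γ β N τ φ₁ φ₂ x y T) :
    ∃ X Y : ℝ → ℝ, SolOn r K a γ β N τ φ₁ φ₂ X Y (T + τ) := by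
  have hτ0 : -τ ≤ 0 := by linarith
  have hτT : -τ ≤ T := by linarith
  have hnn := solOn_nonneg hr hK ha hγ hβ hN hτ hφ₁0 hφ₂ hT sol
  have hbd := solOn_bound hr hK ha hγ hβ hN hτ hφ₁0 hφ₂ hT sol
  obtain ⟨hxc, hyc, hinit, hderiv⟩ := sol
  obtain ⟨Xe, hXec, hXeeq⟩ := exists_continuous_extension hτT hxc
  obtain ⟨Ye, hYec, hYeeq⟩ := exists_continuous_extension hτT hyc
  -- the (known) delayed forcing term
  set g : ℝ → ℝ := fun t => F2 a γ N (Xe (t - τ)) (Ye (t - τ)) with hg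
  have hgc : Continuous g :=
    continuous_F2_comp ha (hXec.comp (continuous_id.sub continuous_const))
      (hYec.comp (continuous_id.sub continuous_const))
  have hyeqnn : ∀ u ∈ Icc (-τ) T, 0 ≤ y u := by
    intro u hu
    by_cases h : u ≤ 0
    · rw [(hinit u ⟨hu.1, h⟩).2]
      exact hφ₂ u ⟨hu.1, h⟩
    · push_neg at h
      exact (hnn u ⟨h.le, hu.2⟩).2
  have hg0 : ∀ t ∈ Icc (0:ℝ) (T + τ), 0 ≤ g t := by
    intro t ht
    have hmem : t - τ ∈ Icc (-τ) T := ⟨by linarith [ht.1], by linarith [ht.2]⟩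
    rw [hg]
    simp only [hYeeq _ hmem]
    exact F2_nonneg hγ ha (hyeqnn _ hmem)
  have hgeq : ∀ t ∈ Icc (0:ℝ) (T + τ), g t = F2 a γ N (x (t - τ)) (y (t - τ)) := by
    intro t ht
    have hmem : t - τ ∈ Icc (-τ) T := ⟨by linarith [ht.1], by linarith [ht.2]⟩
    rw [hg]
    simp only [hXeeq _ hmem, hYeeq _ hmem]
  -- explicit solution of the predator equation on [T, T+τ]
  set Yf : ℝ → ℝ := fun t => Real.exp (-(β * t)) *
    (Real.exp (β * T) * y T + ∫ s in T..t, Real.exp (β * s) * g s) with hYf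
  have hic : Continuous fun s => Real.exp (β * s) * g s :=
    ((continuous_const.mul continuous_id).rexp).mul hgc
  have hprim : ∀ t : ℝ, HasDerivAt (fun u => ∫ s in T..u, Real.exp (β * s) * g s)
      (Real.exp (β * t) * g t) t := fun t => primitive_hasDerivAt hic T t
  have hYfd : ∀ t : ℝ, HasDerivAt Yf (-β * Yf t + g t) t := by
    intro t
    have h1 : HasDerivAt (fun u => Real.exp (-(β * u))) (Real.exp (-(β * t)) * (-(β * 1))) t :=
      (((hasDerivAt_id t).const_mul β).neg).exp
    have h2 : HasDerivAt (fun u => Real.exp (β * T) * y T + ∫ s in T..u,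
        Real.exp (β * s) * g s) (Real.exp (β * t) * g t) t :=
      (hprim t).const_add _
    have h3 := h1.mul h2
    have hval : Real.exp (-(β * t)) * (-(β * 1)) *
        (Real.exp (β * T) * y T + ∫ s in T..t, Real.exp (β * s) * g s)
        + Real.exp (-(β * t)) * (Real.exp (β * t) * g t) = -β * Yf t + g t := by
      have hee : Real.exp (-(β * t)) * Real.exp (β * t) = 1 := by
        rw [← Real.exp_add]
        simp
      simp only [hYf]
      linear_combination g t * hee
    rwa [hval] at h3
  have hYfT : Yf T = y T := by
    simp only [hYf, intervalIntegral.integral_same, add_zero, ← mul_assoc, ← Real.exp_add]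
    simp
  have hYfc : Continuous Yf := continuous_iff_continuousAt.mpr fun t => (hYfd t).continuousAt
  have hyT0 : 0 ≤ y T := (hnn T ⟨hT, le_rfl⟩).2
  have hYf0 : ∀ t ∈ Icc T (T + τ), 0 ≤ Yf t := by
    intro t ht
    rw [hYf]
    apply mul_nonneg (Real.exp_pos _).le
    apply add_nonneg (mul_nonneg (Real.exp_pos _).le hyT0)
    apply intervalIntegral.integral_nonneg ht.1
    intro u hu
    apply mul_nonneg (Real.exp_pos _).le
    exact hg0 u ⟨by linarith [hu.1, ht.1], by linarith [hu.2, ht.2]⟩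
  -- bound for Yf on the step interval
  obtain ⟨W₀, hW₀⟩ := (isCompact_Icc (a := T) (b := T + τ)).exists_bound_of_continuousOn
    hYfc.continuousOn
  set W : ℝ := max W₀ 0 with hWdef
  have hW0 : 0 ≤ W := le_max_right _ _
  have hYfW : ∀ t ∈ Icc T (T + τ), Yf t ∈ Icc (0:ℝ) W := fun t ht =>
    ⟨hYf0 t ht, le_trans (le_trans (le_abs_self _) (hW₀ t ht)) (le_max_left _ _)⟩
  -- the truncation and the Picard–Lindelöf data
  set B : ℝ := K + φ₁ 0 * Real.exp (r * T) with hB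
  have hxB0 : 0 ≤ φ₁ 0 * Real.exp (r * T) := mul_nonneg hφ₁0 (Real.exp_pos _).le
  have hKB : K ≤ B := by rw [hB]; linarith
  have hB0 : 0 ≤ B := by linarith
  have hxTB : x T ≤ B := by
    have := hbd T ⟨hT, le_rfl⟩
    rw [hB]; linarith
  have hxT0 : 0 ≤ x T := (hnn T ⟨hT, le_rfl⟩).1
  -- truncation
  set π : ℝ → ℝ := fun u => max 0 (min u B) with hπ
  have hπmem : ∀ u, π u ∈ Icc (0:ℝ) B := fun u =>
    ⟨le_max_left _ _, max_le hB0 (min_le_right _ _)⟩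
  have hπeq : ∀ u ∈ Icc (0:ℝ) B, π u = u := by
    intro u hu
    rw [hπ]
    simp only
    rw [min_eq_left hu.2, max_eq_right hu.1]
  have hπlip : LipschitzWith 1 π := (LipschitzWith.id.min_const B).const_max 0
  set C : ℝ := r * B + r * B ^ 2 / K + γ * W * B ^ 2 / a ^ 2 with hC
  have hC0 : 0 ≤ C := by
    have h1 : 0 ≤ r * B := mul_nonneg hr.le hB0
    have h2 : 0 ≤ r * B ^ 2 / K := div_nonneg (mul_nonneg hr.le (sq_nonneg B)) hK.le
    have h3 : 0 ≤ γ * W * B ^ 2 / a ^ 2 :=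
      div_nonneg (mul_nonneg (mul_nonneg hγ.le hW0) (sq_nonneg B)) (sq_nonneg a)
    rw [hC]; linarith
  set R : ℝ := C * τ + 1 with hRd
  have hR0 : 0 ≤ R := by
    have := mul_nonneg hC0 hτ.le
    rw [hRd]; linarith
  set L : NNReal := Real.toNNReal (r + 2*r*B/K + 2*γ*W*B/a^2) with hL
  set v : ℝ → ℝ → ℝ := fun t u => F1 r K a γ (π u) (Yf t) with hv
  have hpl : IsPicardLindelof v (tmin := T) (tmax := T+τ) ⟨T, le_rfl, by linarith⟩ (x T)
      R.toNNReal 0 C.toNNReal L := by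
    refine ⟨?_, ?_, ?_, ?_⟩
    · intro t ht
      have h1 := F1_lipschitzOnWith (W := W) hr hK hγ ha hB0 (hYfW t ht)
      have h2 := h1.comp (hπlip.lipschitzOnWith (s := Metric.closedBall (x T) (R.toNNReal : ℝ)))
        (fun u _ => hπmem u)
      simpa [hv, hL, Function.comp_def, mul_one] using h2
    · intro u _
      exact (continuous_F1_comp ha continuous_const hYfc).continuousOn
    · intro t ht u _
      rw [Real.norm_eq_abs, Real.coe_toNNReal _ hC0]
      exact F1_bound hr hK hγ ha (hπmem u) (hYfW t ht)
    · rw [hRd]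
      have : max (T + τ - T) (T - T) = τ := by
        rw [add_sub_cancel_left, sub_self, max_eq_left hτ.le]
      rw [this, Real.coe_toNNReal _ hC0, Real.coe_toNNReal _ (by linarith [mul_nonneg hC0 hτ.le]),
        NNReal.coe_zero]
      linarith
  obtain ⟨f, hfT, hf⟩ := hpl.exists_eq_forall_mem_Icc_hasDerivWithinAt₀
  replace hfT : f T = x T := hfT
  have hfc : ContinuousOn f (Icc T (T+τ)) := fun u hu => (hf u hu).continuousWithinAt
  -- lower barrier : f ≥ 0
  have hfpos : ∀ t ∈ Icc T (T+τ), 0 ≤ f t := by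
    by_contra hcon
    push_neg at hcon
    obtain ⟨t1, ht1, hlt⟩ := hcon
    set S : Set ℝ := Icc T t1 ∩ f ⁻¹' (Ici 0) with hS
    have hTS : T ∈ S := ⟨⟨le_rfl, ht1.1⟩, by rw [mem_preimage, hfT]; exact hxT0⟩
    have hSb : BddAbove S := ⟨t1, fun u hu => hu.1.2⟩
    have hSc : IsClosed S := (hfc.mono (Icc_subset_Icc le_rfl ht1.2)).preimage_isClosed_of_isClosed
      isClosed_Icc isClosed_Ici
    set t2 := sSup S with ht2d
    have ht2S : t2 ∈ S := hSc.csSup_mem ⟨T, hTS⟩ hSb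
    have ht2mem : t2 ∈ Icc T t1 := ht2S.1
    have ht2f : 0 ≤ f t2 := ht2S.2
    have ht2lt : t2 < t1 := lt_of_le_of_ne ht2mem.2 (by
      intro h
      rw [h] at ht2f
      exact absurd ht2f (not_le.mpr hlt))
    have hneg : ∀ u ∈ Ioc t2 t1, f u < 0 := by
      intro u hu
      by_contra hge
      push_neg at hge
      have huS : u ∈ S := ⟨⟨le_trans ht2mem.1 hu.1.le, hu.2⟩, hge⟩
      exact absurd (le_csSup hSb huS) (not_le.mpr hu.1)
    have ht2z : f t2 = 0 := by
      rcases eq_or_lt_of_le ht2f with h | h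
      · exact h.symm
      exfalso
      have hcw : ContinuousWithinAt f (Ioc t2 t1) t2 := by
        apply (hfc t2 ⟨ht2mem.1, le_trans ht2mem.2 ht1.2⟩).mono
        intro u hu
        exact ⟨le_trans ht2mem.1 hu.1.le, le_trans hu.2 ht1.2⟩
      have hev : ∀ᶠ u in 𝓝[Ioc t2 t1] t2, 0 < f u := hcw (Ioi_mem_nhds h)
      have hmem2 : ∀ᶠ u in 𝓝[Ioc t2 t1] t2, u ∈ Ioc t2 t1 := self_mem_nhdsWithin
      haveI : (𝓝[Ioc t2 t1] t2).NeBot := by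
        rw [nhdsWithin_Ioc_eq_nhdsGT ht2lt]
        infer_instance
      obtain ⟨u, hu0, humem⟩ := (hev.and hmem2).exists
      exact absurd hu0 (not_lt.mpr (hneg u humem).le)
    have hconst := constant_of_has_deriv_right_zero (f := f) (a := t2) (b := t1)
      (hfc.mono (Icc_subset_Icc ht2mem.1 ht1.2)) ?_
    · have h1 := hconst t1 ⟨ht2lt.le, le_rfl⟩
      rw [ht2z] at h1
      linarith
    · intro u hu
      have humem : u ∈ Icc T (T+τ) := ⟨le_trans ht2mem.1 hu.1, le_trans hu.2.le ht1.2⟩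
      have hd := hasDerivWithinAt_Ici_of_Icc (le_trans ht2mem.1 hu.1)
        (lt_of_lt_of_le hu.2 ht1.2) (hf u humem)
      have hval : v u (f u) = 0 := by
        rcases eq_or_lt_of_le hu.1 with he | hlt2
        · rw [hv]
          simp only
          rw [← he, ht2z, hπeq 0 ⟨le_rfl, hB0⟩, F1_zero]
        · have hfu : f u < 0 := hneg u ⟨hlt2, hu.2.le⟩
          have hπu : π (f u) = 0 := by
            rw [hπ]
            simp only
            rw [min_eq_left (le_trans hfu.le hB0), max_eq_left hfu.le]
          rw [hv]
          simp only
          rw [hπu, F1_zero]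
      rwa [hval] at hd
  -- upper barrier : f ≤ B
  have hfB : ∀ t ∈ Icc T (T+τ), f t ≤ B := by
    by_contra hcon
    push_neg at hcon
    obtain ⟨t1, ht1, hgt⟩ := hcon
    set S : Set ℝ := Icc T t1 ∩ f ⁻¹' (Iic B) with hS
    have hTS : T ∈ S := ⟨⟨le_rfl, ht1.1⟩, by rw [mem_preimage, hfT]; exact hxTB⟩
    have hSb : BddAbove S := ⟨t1, fun u hu => hu.1.2⟩
    have hSc : IsClosed S := (hfc.mono (Icc_subset_Icc le_rfl ht1.2)).preimage_isClosed_of_isClosed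
      isClosed_Icc isClosed_Iic
    set t2 := sSup S with ht2d
    have ht2S : t2 ∈ S := hSc.csSup_mem ⟨T, hTS⟩ hSb
    have ht2mem : t2 ∈ Icc T t1 := ht2S.1
    have ht2f : f t2 ≤ B := ht2S.2
    have ht2lt : t2 < t1 := lt_of_le_of_ne ht2mem.2 (by
      intro h
      rw [h] at ht2f
      exact absurd ht2f (not_le.mpr hgt))
    have hup : ∀ u ∈ Ioc t2 t1, B < f u := by
      intro u hu
      by_contra hge
      push_neg at hge
      have huS : u ∈ S := ⟨⟨le_trans ht2mem.1 hu.1.le, hu.2⟩, hge⟩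
      exact absurd (le_csSup hSb huS) (not_le.mpr hu.1)
    have ht2z : f t2 = B := by
      rcases eq_or_lt_of_le ht2f with h | h
      · exact h
      exfalso
      have hcw : ContinuousWithinAt f (Ioc t2 t1) t2 := by
        apply (hfc t2 ⟨ht2mem.1, le_trans ht2mem.2 ht1.2⟩).mono
        intro u hu
        exact ⟨le_trans ht2mem.1 hu.1.le, le_trans hu.2 ht1.2⟩
      have hev : ∀ᶠ u in 𝓝[Ioc t2 t1] t2, f u < B := hcw (Iio_mem_nhds h)
      have hmem2 : ∀ᶠ u in 𝓝[Ioc t2 t1] t2, u ∈ Ioc t2 t1 := self_mem_nhdsWithin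
      haveI : (𝓝[Ioc t2 t1] t2).NeBot := by
        rw [nhdsWithin_Ioc_eq_nhdsGT ht2lt]
        infer_instance
      obtain ⟨u, hu0, humem⟩ := (hev.and hmem2).exists
      exact absurd hu0 (not_lt.mpr (hup u humem).le)
    have hdec := le_left_of_deriv_right_nonpos (f := f) (f' := fun u => v u (f u))
      (a := t2) (b := t1) (hfc.mono (Icc_subset_Icc ht2mem.1 ht1.2)) ?_ ?_ t1 ⟨ht2lt.le, le_rfl⟩
    · rw [ht2z] at hdec
      linarith
    · intro u hu
      have humem : u ∈ Icc T (T+τ) := ⟨le_trans ht2mem.1 hu.1, le_trans hu.2.le ht1.2⟩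
      exact hasDerivWithinAt_Ici_of_Icc (le_trans ht2mem.1 hu.1)
        (lt_of_lt_of_le hu.2 ht1.2) (hf u humem)
    · intro u hu
      have humem : u ∈ Icc T (T+τ) := ⟨le_trans ht2mem.1 hu.1, le_trans hu.2.le ht1.2⟩
      have hπu : π (f u) = B := by
        rcases eq_or_lt_of_le hu.1 with he | hlt2
        · rw [← he, ht2z]
          exact hπeq B ⟨hB0, le_rfl⟩
        · have hfu : B < f u := hup u ⟨hlt2, hu.2.le⟩
          rw [hπ]
          simp only
          rw [min_eq_right hfu.le, max_eq_right hB0]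
      rw [hv]
      simp only
      rw [hπu]
      exact F1_nonpos hr hK hγ ha hKB (hYf0 u humem)
  have hfmem : ∀ t ∈ Icc T (T+τ), f t ∈ Icc (0:ℝ) B := fun t ht => ⟨hfpos t ht, hfB t ht⟩
  have hfval : ∀ t ∈ Icc T (T+τ), v t (f t) = F1 r K a γ (f t) (Yf t) := by
    intro t ht
    rw [hv]
    simp only
    rw [hπeq _ (hfmem t ht)]
  -- the glued solution
  set X : ℝ → ℝ := fun u => if u ≤ T then x u else f u with hX
  set Y : ℝ → ℝ := fun u => if u ≤ T then y u else Yf u with hY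
  have hEqX : ∀ u ∈ Icc (-τ) T, X u = x u := fun u hu => if_pos hu.2
  have hEqY : ∀ u ∈ Icc (-τ) T, Y u = y u := fun u hu => if_pos hu.2
  have hEqXf : ∀ u ∈ Icc T (T+τ), X u = f u := by
    intro u hu
    by_cases h : u ≤ T
    · have huT : u = T := le_antisymm h hu.1
      subst huT
      rw [hX]
      simp only [if_pos h]
      exact hfT.symm
    · rw [hX]
      simp only [if_neg h]
  have hEqYf : ∀ u ∈ Icc T (T+τ), Y u = Yf u := by
    intro u hu
    by_cases h : u ≤ T
    · have huT : u = T := le_antisymm h hu.1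
      subst huT
      rw [hY]
      simp only [if_pos h]
      exact hYfT.symm
    · rw [hY]
      simp only [if_neg h]
  have hunion : Icc (-τ) (T+τ) = Icc (-τ) T ∪ Icc T (T+τ) :=
    (Icc_union_Icc_eq_Icc hτT (by linarith)).symm
  have hXc : ContinuousOn X (Icc (-τ) (T+τ)) := by
    rw [hunion]
    exact continuousOn_union_closed isClosed_Icc isClosed_Icc
      (hxc.congr hEqX) (hfc.congr hEqXf)
  have hYc2 : ContinuousOn Y (Icc (-τ) (T+τ)) := by
    rw [hunion]
    exact continuousOn_union_closed isClosed_Icc isClosed_Icc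
      (hyc.congr hEqY) (hYfc.continuousOn.congr hEqYf)
  have hmemsub : ∀ t : ℝ, t < T → Icc (-τ) T ∈ 𝓝[Icc (-τ) (T+τ)] t := by
    intro t htT
    apply Filter.mem_of_superset
      (inter_mem self_mem_nhdsWithin (mem_nhdsWithin_of_mem_nhds (Iio_mem_nhds htT)))
    exact fun u hu => ⟨hu.1.1, hu.2.le⟩
  have hmemsup : ∀ t : ℝ, T < t → Icc T (T+τ) ∈ 𝓝[Icc (-τ) (T+τ)] t := by
    intro t htT
    apply Filter.mem_of_superset
      (inter_mem self_mem_nhdsWithin (mem_nhdsWithin_of_mem_nhds (Ioi_mem_nhds htT)))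
    exact fun u hu => ⟨hu.2.le, hu.1.2⟩
  refine ⟨X, Y, hXc, hYc2, ?_, ?_⟩
  · intro θ hθ
    have hθT : θ ∈ Icc (-τ) T := ⟨hθ.1, le_trans hθ.2 hT⟩
    rw [hEqX θ hθT, hEqY θ hθT]
    exact hinit θ hθ
  · intro t ht
    have htτ : t - τ ∈ Icc (-τ) T := ⟨by linarith [ht.1], by linarith [ht.2]⟩
    have hXtτ : X (t - τ) = x (t - τ) := hEqX _ htτ
    have hYtτ : Y (t - τ) = y (t - τ) := hEqY _ htτ
    rcases lt_trichotomy t T with hlt | heq | hgt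
    · -- old interval
      have htmem : t ∈ Icc (-τ) T := ⟨by linarith [ht.1], hlt.le⟩
      have hXt : X t = x t := hEqX t htmem
      have hYt : Y t = y t := hEqY t htmem
      have hdx := ((hderiv t ⟨ht.1, hlt.le⟩).1.congr hEqX (hXt)).mono_of_mem_nhdsWithin
        (hmemsub t hlt)
      have hdy := ((hderiv t ⟨ht.1, hlt.le⟩).2.congr hEqY (hYt)).mono_of_mem_nhdsWithin
        (hmemsub t hlt)
      rw [hXt, hYt, hXtτ, hYtτ]
      exact ⟨hdx, hdy⟩
    · -- junction point
      subst heq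
      have htmem : t ∈ Icc (-τ) t := ⟨by linarith [ht.1], le_rfl⟩
      have htmem' : t ∈ Icc t (t+τ) := ⟨le_rfl, by linarith⟩
      have hXt : X t = x t := hEqX t htmem
      have hYt : Y t = y t := hEqY t htmem
      constructor
      · have hleft : HasDerivWithinAt X (F1 r K a γ (x t) (y t)) (Icc (-τ) t) t :=
          (hderiv t ⟨ht.1, le_rfl⟩).1.congr hEqX hXt
        have hright : HasDerivWithinAt X (F1 r K a γ (x t) (y t)) (Icc t (t+τ)) t := by
          have h0 := hf t htmem'
          have hval : v t (f t) = F1 r K a γ (x t) (y t) := by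
            rw [hfval t htmem', hfT, hYfT]
          rw [hval] at h0
          exact h0.congr hEqXf (by rw [hEqXf t htmem'])
        have := hleft.union hright
        rw [Icc_union_Icc_eq_Icc hτT (by linarith)] at this
        rw [hXt, hYt]
        exact this
      · have hleft : HasDerivWithinAt Y (-β * y t + F2 a γ N (x (t - τ)) (y (t - τ)))
            (Icc (-τ) t) t := (hderiv t ⟨ht.1, le_rfl⟩).2.congr hEqY hYt
        have hright : HasDerivWithinAt Y (-β * y t + F2 a γ N (x (t - τ)) (y (t - τ)))
            (Icc t (t+τ)) t := by
          have h0 := (hYfd t).hasDerivWithinAt (s := Icc t (t+τ))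
          have hval : -β * Yf t + g t = -β * y t + F2 a γ N (x (t - τ)) (y (t - τ)) := by
            rw [hYfT, hgeq t ⟨ht.1.le, by linarith⟩]
          rw [hval] at h0
          exact h0.congr hEqYf (by rw [hEqYf t htmem'])
        have := hleft.union hright
        rw [Icc_union_Icc_eq_Icc hτT (by linarith)] at this
        rw [hYt, hXtτ, hYtτ]
        exact this
    · -- new interval
      have htmem : t ∈ Icc T (T+τ) := ⟨hgt.le, ht.2⟩
      have hXt : X t = f t := hEqXf t htmem
      have hYt : Y t = Yf t := hEqYf t htmem
      constructor
      · have h0 := hf t htmem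
        have hval : v t (f t) = F1 r K a γ (f t) (Yf t) := hfval t htmem
        rw [hval] at h0
        have h1 := (h0.congr hEqXf hXt).mono_of_mem_nhdsWithin (hmemsup t hgt)
        rw [hXt, hYt]
        exact h1
      · have h0 := (hYfd t).hasDerivWithinAt (s := Icc T (T+τ))
        have hval : -β * Yf t + g t = -β * Yf t + F2 a γ N (x (t - τ)) (y (t - τ)) := by
          rw [hgeq t ⟨ht.1.le, ht.2⟩]
        rw [hval] at h0
        have h1 := (h0.congr hEqYf hYt).mono_of_mem_nhdsWithin (hmemsup t hgt)
        rw [hYt, hXtτ, hYtτ]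
        exact h1


/-! ### Iterated existence -/

theorem solOn_steps (hr : 0 < r) (hK : 0 < K) (ha : 0 < a) (hγ : 0 < γ) (hβ : 0 < β)
    (hN : 0 < N) (hτ : 0 < τ)
    (hφ₁c : ContinuousOn φ₁ (Icc (-τ) 0)) (hφ₂c : ContinuousOn φ₂ (Icc (-τ) 0))
    (hφ₁0 : 0 ≤ φ₁ 0) (hφ₂ : ∀ θ ∈ Icc (-τ) (0:ℝ), 0 ≤ φ₂ θ) :
    ∀ n : ℕ, ∃ p : (ℝ → ℝ) × (ℝ → ℝ),
      SolOn r K a γ β N τ φ₁ φ₂ p.1 p.2 ((n : ℝ) * τ) := by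
  intro n
  induction n with
  | zero =>
    refine ⟨⟨φ₁, φ₂⟩, ?_, ?_, ?_, ?_⟩
    · simpa using hφ₁c
    · simpa using hφ₂c
    · exact fun θ _ => ⟨rfl, rfl⟩
    · intro t ht
      simp only [Nat.cast_zero, zero_mul] at ht
      exact absurd ht.2 (not_le.mpr ht.1)
  | succ n ih =>
    obtain ⟨⟨x, y⟩, hsol⟩ := ih
    obtain ⟨X, Y, hXY⟩ := solOn_ext hr hK ha hγ hβ hN hτ hφ₁0 hφ₂ (by positivity) hsol
    refine ⟨⟨X, Y⟩, ?_⟩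
    have : ((n : ℝ) + 1) * τ = (n : ℝ) * τ + τ := by ring
    push_cast
    rw [this]
    exact hXY

end DelayPP


open DelayPP in
/-- For all positive parameters and all continuous nonnegative initial
conditions, the delayed predator–prey system has a unique solution defined on `[-τ, ∞)`,
and this solution is nonnegative for `t ≥ 0`. -/
theorem delayed_predator_prey_existence_uniqueness_nonneg
    (r K a γ β N τ : ℝ) (hr : 0 < r) (hK : 0 < K) (ha : 0 < a) (hγ : 0 < γ)
    (hβ : 0 < β) (hN : 0 < N) (hτ : 0 < τ) (φ₁ φ₂ : ℝ → ℝ)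
    (hφ₁c : ContinuousOn φ₁ (Icc (-τ) 0)) (hφ₂c : ContinuousOn φ₂ (Icc (-τ) 0))
    (hφ₁ : ∀ θ ∈ Icc (-τ) 0, 0 ≤ φ₁ θ) (hφ₂ : ∀ θ ∈ Icc (-τ) 0, 0 ≤ φ₂ θ) :
    ∃ x y : ℝ → ℝ, IsSolution r K a γ β N τ φ₁ φ₂ x y ∧
      (∀ t ≥ (0 : ℝ), 0 ≤ x t ∧ 0 ≤ y t) ∧
      (∀ x' y' : ℝ → ℝ, IsSolution r K a γ β N τ φ₁ φ₂ x' y' →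
        ∀ t ≥ -τ, x' t = x t ∧ y' t = y t) := by
  classical
  have hτ0 : -τ ≤ 0 := by linarith
  have hφ₁0 : 0 ≤ φ₁ 0 := hφ₁ 0 ⟨hτ0, le_rfl⟩
  choose P hP using solOn_steps hr hK ha hγ hβ hN hτ hφ₁c hφ₂c hφ₁0 hφ₂
  set NT : ℝ → ℕ := fun t => ⌈t / τ⌉₊ + 1 with hNT
  have hNTlt : ∀ t : ℝ, t < (NT t : ℝ) * τ := by
    intro t
    have h1 : t / τ ≤ (⌈t / τ⌉₊ : ℝ) := Nat.le_ceil _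
    have h2 : t ≤ (⌈t / τ⌉₊ : ℝ) * τ := (div_le_iff₀ hτ).mp h1
    have : ((NT t : ℝ)) = (⌈t / τ⌉₊ : ℝ) + 1 := by rw [hNT]; push_cast; ring
    rw [this]
    nlinarith
  set X : ℝ → ℝ := fun t => (P (NT t)).1 t with hX
  set Y : ℝ → ℝ := fun t => (P (NT t)).2 t with hY
  -- compatibility of the various approximations
  have hagree : ∀ n : ℕ, ∀ t ∈ Icc (-τ) ((n:ℝ) * τ), X t = (P n).1 t ∧ Y t = (P n).2 t := by
    intro n t ht
    set m := NT t with hm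
    have hmin0 : (0:ℝ) ≤ min ((n:ℝ)*τ) ((m:ℝ)*τ) := le_min (by positivity) (by positivity)
    have h1 := (hP n).mono hmin0 (min_le_left _ _)
    have h2 := (hP m).mono hmin0 (min_le_right _ _)
    have := solOn_uniq hr hK ha hγ hβ hN hτ hφ₁0 hφ₂ hmin0 h2 h1 t
      ⟨ht.1, le_min ht.2 (hNTlt t).le⟩
    exact ⟨this.1, this.2⟩
  have hXeq : ∀ n : ℕ, ∀ t ∈ Icc (-τ) ((n:ℝ) * τ), X t = (P n).1 t :=
    fun n t ht => (hagree n t ht).1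
  have hYeq : ∀ n : ℕ, ∀ t ∈ Icc (-τ) ((n:ℝ) * τ), Y t = (P n).2 t :=
    fun n t ht => (hagree n t ht).2
  have hcontX : ContinuousOn X (Ici (-τ)) := by
    intro t ht
    set n := NT t with hn
    have htn := hNTlt t
    have hmem : Icc (-τ) ((n:ℝ)*τ) ∈ 𝓝[Ici (-τ)] t := by
      apply Filter.mem_of_superset
        (inter_mem self_mem_nhdsWithin (mem_nhdsWithin_of_mem_nhds (Iio_mem_nhds htn)))
      exact fun u hu => ⟨hu.1, hu.2.le⟩
    have hc : ContinuousWithinAt (P n).1 (Ici (-τ)) t :=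
      ((hP n).1 t ⟨ht, htn.le⟩).mono_of_mem_nhdsWithin hmem
    refine hc.congr_of_eventuallyEq ?_ (hXeq n t ⟨ht, htn.le⟩)
    filter_upwards [hmem] with u hu
    exact hXeq n u hu
  have hcontY : ContinuousOn Y (Ici (-τ)) := by
    intro t ht
    set n := NT t with hn
    have htn := hNTlt t
    have hmem : Icc (-τ) ((n:ℝ)*τ) ∈ 𝓝[Ici (-τ)] t := by
      apply Filter.mem_of_superset
        (inter_mem self_mem_nhdsWithin (mem_nhdsWithin_of_mem_nhds (Iio_mem_nhds htn)))
      exact fun u hu => ⟨hu.1, hu.2.le⟩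
    have hc : ContinuousWithinAt (P n).2 (Ici (-τ)) t :=
      ((hP n).2.1 t ⟨ht, htn.le⟩).mono_of_mem_nhdsWithin hmem
    refine hc.congr_of_eventuallyEq ?_ (hYeq n t ⟨ht, htn.le⟩)
    filter_upwards [hmem] with u hu
    exact hYeq n u hu
  have hinitXY : ∀ θ ∈ Icc (-τ) 0, X θ = φ₁ θ ∧ Y θ = φ₂ θ := by
    intro θ hθ
    exact (hP (NT θ)).2.2.1 θ hθ
  have hderivXY : ∀ t > (0:ℝ),
      HasDerivAt X (F1 r K a γ (X t) (Y t)) t ∧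
      HasDerivAt Y (-β * Y t + F2 a γ N (X (t - τ)) (Y (t - τ))) t := by
    intro t ht
    set n := NT t with hn
    have htn := hNTlt t
    have htmem : t ∈ Icc (-τ) ((n:ℝ)*τ) := ⟨by linarith, htn.le⟩
    have htτmem : t - τ ∈ Icc (-τ) ((n:ℝ)*τ) := ⟨by linarith, by linarith [htn.le]⟩
    have hEv : X =ᶠ[𝓝 t] (P n).1 := by
      filter_upwards [Ioo_mem_nhds (show -τ < t by linarith) htn] with u hu
      exact hXeq n u ⟨hu.1.le, hu.2.le⟩
    have hEvY : Y =ᶠ[𝓝 t] (P n).2 := by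
      filter_upwards [Ioo_mem_nhds (show -τ < t by linarith) htn] with u hu
      exact hYeq n u ⟨hu.1.le, hu.2.le⟩
    have hIccnhds : Icc (-τ) ((n:ℝ)*τ) ∈ 𝓝 t := Icc_mem_nhds (by linarith) htn
    have hd := (hP n).2.2.2 t ⟨ht, htn.le⟩
    constructor
    · have h1 : HasDerivAt (P n).1 (F1 r K a γ ((P n).1 t) ((P n).2 t)) t :=
        hd.1.hasDerivAt hIccnhds
      rw [hXeq n t htmem, hYeq n t htmem]
      exact hEv.hasDerivAt_iff.mpr h1
    · have h1 : HasDerivAt (P n).2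
          (-β * (P n).2 t + F2 a γ N ((P n).1 (t - τ)) ((P n).2 (t - τ))) t :=
        hd.2.hasDerivAt hIccnhds
      rw [hYeq n t htmem, hXeq n (t - τ) htτmem, hYeq n (t - τ) htτmem]
      exact hEvY.hasDerivAt_iff.mpr h1
  refine ⟨X, Y, ⟨hcontX, hcontY, hinitXY, fun t ht => hderivXY t ht⟩, ?_, ?_⟩
  · intro t ht
    set n := NT t with hn
    have htn := hNTlt t
    exact solOn_nonneg hr hK ha hγ hβ hN hτ hφ₁0 hφ₂ (by positivity) (hP n) t ⟨ht, htn.le⟩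
  · intro x' y' hsol' t ht
    have hsol'On : ∀ n : ℕ, SolOn r K a γ β N τ φ₁ φ₂ x' y' ((n:ℝ) * τ) := by
      intro n
      obtain ⟨hc1, hc2, hini, hdrv⟩ := hsol'
      refine ⟨hc1.mono (Icc_subset_Ici_self), hc2.mono (Icc_subset_Ici_self), hini, ?_⟩
      intro u hu
      exact ⟨(hdrv u hu.1).1.hasDerivWithinAt, (hdrv u hu.1).2.hasDerivWithinAt⟩
    set n := NT t with hn
    have htn := hNTlt t
    have := solOn_uniq hr hK ha hγ hβ hN hτ hφ₁0 hφ₂ (by positivity)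
      (hsol'On n) (hP n) t ⟨ht, htn.le⟩
    exact this
end

section
/- Let r, K, a, γ, β, N be positive real numbers. There exists a pair (x, y) with x > 0 and y > 0 satisfying the equilibrium equations r(1 − x/K)x = γ x² y/(a² + x²) and β y = (γ x²/(a² + x²)) y e^{−y/N} if and only if γ K²/(a² + K²) > β. -/
/-- For positive parameters `r, K, a, γ, β, N`, a positive equilibrium
`(x, y)` of the delayed predator–prey system exists (i.e. a positive solution of the
equilibrium equations) if and only if `γ K²/(a² + K²) > β`. -/
theorem positive_equilibrium_iff (r K a γ β N : ℝ) (hr : 0 < r) (hK : 0 < K)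
    (ha : 0 < a) (hγ : 0 < γ) (hβ : 0 < β) (hN : 0 < N) :
    (∃ x y : ℝ, 0 < x ∧ 0 < y ∧
      r * (1 - x / K) * x = γ * x ^ 2 * y / (a ^ 2 + x ^ 2) ∧
      β * y = γ * x ^ 2 / (a ^ 2 + x ^ 2) * y * Real.exp (-y / N)) ↔
    γ * K ^ 2 / (a ^ 2 + K ^ 2) > β := by
  have haK : (0:ℝ) < a ^ 2 + K ^ 2 := by positivity
  constructor
  · rintro ⟨x, y, hx, hy, h1, h2⟩
    have hax : (0:ℝ) < a ^ 2 + x ^ 2 := by positivity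
    set t := Real.exp (-y / N) with ht
    have ht1 : t < 1 := by
      rw [ht, Real.exp_lt_one_iff, neg_div]
      have : 0 < y / N := div_pos hy hN
      linarith
    have ht0 : 0 < t := Real.exp_pos _
    -- from eq2 : β (a²+x²) = γ x² t
    have h2' : β * (a ^ 2 + x ^ 2) = γ * x ^ 2 * t := by
      have key : β * (a ^ 2 + x ^ 2) * y = γ * x ^ 2 * t * y := by
        have : β * y * (a ^ 2 + x ^ 2) = γ * x ^ 2 / (a ^ 2 + x ^ 2) * y * t * (a ^ 2 + x ^ 2) := by
          rw [h2]
        field_simp at this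
        linear_combination y * this
      exact mul_right_cancel₀ (ne_of_gt hy) key
    -- from eq1 : x < K
    have hxK : x < K := by
      have hrhs : 0 < γ * x ^ 2 * y / (a ^ 2 + x ^ 2) := by positivity
      have h1' : 0 < r * (1 - x / K) * x := h1 ▸ hrhs
      by_contra h
      push_neg at h
      have h3 : 1 ≤ x / K := (one_le_div hK).mpr h
      have h4 : 0 ≤ r * (x / K - 1) * x :=
        mul_nonneg (mul_nonneg hr.le (by linarith)) hx.le
      nlinarith
    have hA : γ * x ^ 2 * t < γ * x ^ 2 * 1 :=
      mul_lt_mul_of_pos_left ht1 (mul_pos hγ (pow_pos hx 2))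
    have hβγ : β < γ := by nlinarith [sq_nonneg a, pow_pos hx 2]
    have hx2K : x ^ 2 < K ^ 2 := by nlinarith
    rw [gt_iff_lt, lt_div_iff₀ haK]
    nlinarith
  · intro hcond
    rw [gt_iff_lt, lt_div_iff₀ haK] at hcond
    have hβγ : β < γ := by nlinarith [sq_nonneg a, sq_nonneg K]
    have hγβpos : (0:ℝ) < γ - β := by linarith
    have hne : γ - β ≠ 0 := ne_of_gt hγβpos
    set x₁ : ℝ := a * Real.sqrt (β / (γ - β)) with hx₁def
    have hs : 0 < β / (γ - β) := by positivity
    have hx₁ : 0 < x₁ := mul_pos ha (Real.sqrt_pos.mpr hs)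
    have hx₁sq : x₁ ^ 2 = a ^ 2 * (β / (γ - β)) := by
      rw [hx₁def, mul_pow, Real.sq_sqrt hs.le]
    have hx₁K : x₁ < K := by
      have h2 : x₁ ^ 2 < K ^ 2 := by
        rw [hx₁sq, mul_comm, div_mul_eq_mul_div, div_lt_iff₀ hγβpos]
        nlinarith
      exact lt_of_pow_lt_pow_left₀ 2 hK.le h2
    set g : ℝ → ℝ := fun x =>
      r * (1 - x / K) * (a ^ 2 + x ^ 2) / (γ * x)
        - N * Real.log (γ * x ^ 2 / (β * (a ^ 2 + x ^ 2))) with hg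
    have hax₁ : (0:ℝ) < a ^ 2 + x₁ ^ 2 := by positivity
    have hkey : γ * x₁ ^ 2 = β * (a ^ 2 + x₁ ^ 2) := by
      rw [hx₁sq]; field_simp; ring
    have harg1 : γ * x₁ ^ 2 / (β * (a ^ 2 + x₁ ^ 2)) = 1 := by
      rw [hkey, div_self (by positivity)]
    have hgx₁ : 0 < g x₁ := by
      rw [hg]
      simp only [harg1, Real.log_one, mul_zero, sub_zero]
      have h1 : 0 < 1 - x₁ / K := by
        rw [sub_pos, div_lt_one hK]; exact hx₁K
      positivity
    have hgK : g K < 0 := by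
      have hKK : 1 - K / K = 0 := by field_simp; ring
      rw [hg]
      simp only [hKK, mul_zero, zero_mul, zero_div, zero_sub]
      have harg : 1 < γ * K ^ 2 / (β * (a ^ 2 + K ^ 2)) := by
        rw [lt_div_iff₀ (by positivity)]
        nlinarith
      have hlog : 0 < Real.log (γ * K ^ 2 / (β * (a ^ 2 + K ^ 2))) := Real.log_pos harg
      have : 0 < N * Real.log (γ * K ^ 2 / (β * (a ^ 2 + K ^ 2))) := mul_pos hN hlog
      linarith
    have hcont : ContinuousOn g (Set.Icc x₁ K) := by
      apply ContinuousOn.sub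
      · apply ContinuousOn.div
        · fun_prop
        · fun_prop
        · intro x hx
          have : 0 < x := lt_of_lt_of_le hx₁ hx.1
          positivity
      · apply ContinuousOn.mul continuousOn_const
        apply ContinuousOn.log
        · apply ContinuousOn.div
          · fun_prop
          · fun_prop
          · intro x hx; positivity
        · intro x hx
          have : 0 < x := lt_of_lt_of_le hx₁ hx.1
          positivity
    have hmem : (0:ℝ) ∈ Set.Icc (g K) (g x₁) := ⟨hgK.le, hgx₁.le⟩
    obtain ⟨x₀, hx₀mem, hx₀⟩ := intermediate_value_Icc' hx₁K.le hcont hmem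
    have hx₀pos : 0 < x₀ := lt_of_lt_of_le hx₁ hx₀mem.1
    have hx₀K : x₀ < K := by
      rcases lt_or_eq_of_le hx₀mem.2 with h | h
      · exact h
      · exfalso; rw [h] at hx₀; rw [hx₀] at hgK; exact lt_irrefl 0 hgK
    have hax₀ : (0:ℝ) < a ^ 2 + x₀ ^ 2 := by positivity
    set y : ℝ := r * (1 - x₀ / K) * (a ^ 2 + x₀ ^ 2) / (γ * x₀) with hy
    have h1x₀ : 0 < 1 - x₀ / K := by rw [sub_pos, div_lt_one hK]; exact hx₀K
    have hypos : 0 < y := by rw [hy]; positivity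
    have hylog : y = N * Real.log (γ * x₀ ^ 2 / (β * (a ^ 2 + x₀ ^ 2))) := by
      have := hx₀
      rw [hg] at this
      simp only at this
      rw [hy]; linarith
    have hargpos : 0 < γ * x₀ ^ 2 / (β * (a ^ 2 + x₀ ^ 2)) := by positivity
    have hexp : Real.exp (-y / N) = β * (a ^ 2 + x₀ ^ 2) / (γ * x₀ ^ 2) := by
      have hdiv : -y / N = -Real.log (γ * x₀ ^ 2 / (β * (a ^ 2 + x₀ ^ 2))) := by
        rw [hylog]; field_simp
      rw [hdiv, Real.exp_neg, Real.exp_log hargpos, inv_div]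
    refine ⟨x₀, y, hx₀pos, hypos, ?_, ?_⟩
    · rw [hy]
      field_simp
    · rw [hexp]
      field_simp
end

section
/- Let m, n, p, q be real numbers, τ ≥ 0, and ω a real number such that n·iω + q ≠ 0 (as a complex number). If iω is a root of the transcendental equation λ² + mλ + nλe^{−λτ} + p + qe^{−λτ} = 0, then ω satisfies ω⁴ + (m² − n² − 2p)ω² + p² − q² = 0 and cos(ωτ)·(q² + n²ω²) = qω² − pq − nmω². -/
open Complex

/-- If `iω` is a purely imaginary root of the transcendental equation
`λ² + mλ + nλe^{−λτ} + p + qe^{−λτ} = 0` (with `n·iω + q ≠ 0`), then `ω` satisfies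
`ω⁴ + (m² − n² − 2p)ω² + p² − q² = 0` and
`cos(ωτ)·(q² + n²ω²) = qω² − pq − nmω²`. -/
theorem purely_imaginary_root_necessary_conditions
    (m n p q τ ω : ℝ) (hτ : 0 ≤ τ)
    (hnq : (n : ℂ) * (Complex.I * (ω : ℂ)) + (q : ℂ) ≠ 0)
    (hroot : (Complex.I * (ω : ℂ)) ^ 2 + (m : ℂ) * (Complex.I * (ω : ℂ)) +
      (n : ℂ) * (Complex.I * (ω : ℂ)) * Complex.exp (-(Complex.I * (ω : ℂ)) * (τ : ℂ)) +
      (p : ℂ) + (q : ℂ) * Complex.exp (-(Complex.I * (ω : ℂ)) * (τ : ℂ)) = 0) :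
    ω ^ 4 + (m ^ 2 - n ^ 2 - 2 * p) * ω ^ 2 + p ^ 2 - q ^ 2 = 0 ∧
    Real.cos (ω * τ) * (q ^ 2 + n ^ 2 * ω ^ 2) = q * ω ^ 2 - p * q - n * m * ω ^ 2 := by
  obtain ⟨C, hC⟩ : ∃ C, Real.cos (ω * τ) = C := ⟨_, rfl⟩
  obtain ⟨S, hS⟩ : ∃ S, Real.sin (ω * τ) = S := ⟨_, rfl⟩
  have hexp : Complex.exp (-(Complex.I * (ω : ℂ)) * (τ : ℂ)) =
      (C : ℂ) - (S : ℂ) * Complex.I := by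
    have h : (-(Complex.I * (ω : ℂ)) * (τ : ℂ)) = ((-(ω * τ) : ℝ) : ℂ) * Complex.I := by
      push_cast; ring
    rw [h, Complex.exp_mul_I, ← Complex.ofReal_cos, ← Complex.ofReal_sin,
      Real.cos_neg, Real.sin_neg, hC, hS]
    push_cast; ring
  rw [hexp] at hroot
  have hre := congrArg Complex.re hroot
  have him := congrArg Complex.im hroot
  simp [Complex.add_re, Complex.add_im, Complex.mul_re, Complex.mul_im, pow_two] at hre him
  have h1 : q * C + n * ω * S = ω ^ 2 - p := by nlinarith [hre]
  have h2 : n * ω * C - q * S = -(m * ω) := by nlinarith [him]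
  have hsc : S ^ 2 + C ^ 2 = 1 := by rw [← hC, ← hS]; exact Real.sin_sq_add_cos_sq _
  rw [hC]
  constructor
  · have e1 : (q * C + n * ω * S) ^ 2 = (ω ^ 2 - p) ^ 2 := by rw [h1]
    have e2 : (n * ω * C - q * S) ^ 2 = (m * ω) ^ 2 := by rw [h2]; ring
    linear_combination -e1 - e2 + (q ^ 2 + n ^ 2 * ω ^ 2) * hsc
  · linear_combination q * h1 + n * ω * h2
end

section
/- Let m, n, p, q be real numbers with 2p + n² − m² < 0 and p² − q² > 0, and let τ ≥ 0. Then the transcendental equation λ² + mλ + nλe^{−λτ} + p + qe^{−λτ} = 0 has no purely imaginary root; that is, for every real ω, F(iω) ≠ 0. -/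
/-- If `2p + n² − m² < 0` and `p² − q² > 0`, then for every delay
`τ ≥ 0` the transcendental equation `λ² + mλ + nλe^{−λτ} + p + qe^{−λτ} = 0`
has no purely imaginary root: `F(iω) ≠ 0` for every real `ω`. -/
theorem no_purely_imaginary_root (m n p q τ : ℝ) (hτ : 0 ≤ τ)
    (h1 : 2 * p + n ^ 2 - m ^ 2 < 0) (h2 : p ^ 2 - q ^ 2 > 0) :
    ∀ ω : ℝ,
      (Complex.I * (ω : ℂ)) ^ 2 + (m : ℂ) * (Complex.I * (ω : ℂ)) +
      (n : ℂ) * (Complex.I * (ω : ℂ)) * Complex.exp (-(Complex.I * (ω : ℂ)) * (τ : ℂ)) +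
      (p : ℂ) + (q : ℂ) * Complex.exp (-(Complex.I * (ω : ℂ)) * (τ : ℂ)) ≠ 0 := by
  intro ω h
  set e : ℂ := Complex.exp (-(Complex.I * (ω : ℂ)) * (τ : ℂ)) with he
  have hne : Complex.normSq e = 1 := by
    rw [he, Complex.normSq_eq_norm_sq, Complex.norm_exp]
    simp
  have key : ((p - ω ^ 2 : ℝ) : ℂ) + ((m * ω : ℝ) : ℂ) * Complex.I =
      -((((q : ℝ)) : ℂ) + ((n * ω : ℝ) : ℂ) * Complex.I) * e := by
    push_cast
    linear_combination h - (ω : ℂ) ^ 2 * Complex.I_sq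
  have habs := congrArg Complex.normSq key
  rw [Complex.normSq_add_mul_I, Complex.normSq_mul, Complex.normSq_neg,
    Complex.normSq_add_mul_I, hne, mul_one] at habs
  nlinarith [sq_nonneg ω, sq_nonneg (ω ^ 2), habs]
end

section
/- Let m, n, p, q be real numbers satisfying (A1) m + n > 0, (A2) p + q > 0, and (A3) n² − m² + 2p < 0 and p² − q² > 0. Then for every delay τ ≥ 0, every complex root λ of the transcendental equation λ² + mλ + nλe^{−λτ} + p + qe^{−λτ} = 0 has negative real part. -/
/-- Under (A1) `m + n > 0`, (A2) `p + q > 0`, and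
(A3) `n² − m² + 2p < 0` and `p² − q² > 0`, every complex root of the transcendental
equation `λ² + mλ + nλe^{−λτ} + p + qe^{−λτ} = 0` has negative real part, for every
delay `τ ≥ 0`. -/
theorem all_roots_negative_real_part_A1_A2_A3 (m n p q : ℝ)
    (hA1 : m + n > 0) (hA2 : p + q > 0)
    (hA3 : n ^ 2 - m ^ 2 + 2 * p < 0 ∧ p ^ 2 - q ^ 2 > 0) :
    ∀ τ : ℝ, 0 ≤ τ → ∀ z : ℂ,
      z ^ 2 + (m : ℂ) * z + (n : ℂ) * z * Complex.exp (-z * (τ : ℂ)) +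
        (p : ℂ) + (q : ℂ) * Complex.exp (-z * (τ : ℂ)) = 0 →
      z.re < 0 := by
  obtain ⟨hA3a, hA3b⟩ := hA3
  have hpq : p - q > 0 := by nlinarith
  have hp : p > 0 := by nlinarith
  have hmn : m - n > 0 := by nlinarith
  intro τ hτ z heq
  by_contra hx
  push_neg at hx
  set x := z.re with hxdef
  set y := z.im with hydef
  -- rearrange the equation
  have heq2 : z ^ 2 + (m : ℂ) * z + (p : ℂ)
      = -(((n : ℂ) * z + (q : ℂ)) * Complex.exp (-z * (τ : ℂ))) := by
    linear_combination heq
  have habs : ‖z ^ 2 + (m : ℂ) * z + (p : ℂ)‖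
      = ‖(n : ℂ) * z + (q : ℂ)‖ * ‖Complex.exp (-z * (τ : ℂ))‖ := by
    rw [heq2, norm_neg, norm_mul]
  have hexp : ‖Complex.exp (-z * (τ : ℂ))‖ ≤ 1 := by
    rw [Complex.norm_exp]
    apply Real.exp_le_one_iff.mpr
    have : (-z * (τ : ℂ)).re = -x * τ := by simp [hxdef]
    rw [this]
    nlinarith
  have hle : ‖z ^ 2 + (m : ℂ) * z + (p : ℂ)‖
      ≤ ‖(n : ℂ) * z + (q : ℂ)‖ := by
    calc ‖z ^ 2 + (m : ℂ) * z + (p : ℂ)‖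
        = ‖(n : ℂ) * z + (q : ℂ)‖ * ‖Complex.exp (-z * (τ : ℂ))‖ := habs
      _ ≤ ‖(n : ℂ) * z + (q : ℂ)‖ * 1 :=
          mul_le_mul_of_nonneg_left hexp (norm_nonneg _)
      _ = _ := mul_one _
  have hsq : Complex.normSq (z ^ 2 + (m : ℂ) * z + (p : ℂ))
      ≤ Complex.normSq ((n : ℂ) * z + (q : ℂ)) := by
    rw [← Complex.sq_norm, ← Complex.sq_norm]
    exact pow_le_pow_left₀ (norm_nonneg _) hle 2
  have e1 : Complex.normSq (z ^ 2 + (m : ℂ) * z + (p : ℂ))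
      = (x ^ 2 - y ^ 2 + m * x + p) ^ 2 + (2 * x * y + m * y) ^ 2 := by
    simp [Complex.normSq_apply, pow_two, Complex.mul_re, Complex.mul_im]
    ring
  have e2 : Complex.normSq ((n : ℂ) * z + (q : ℂ)) = (n * x + q) ^ 2 + (n * y) ^ 2 := by
    simp [Complex.normSq_apply, Complex.mul_re, Complex.mul_im]
    ring
  rw [e1, e2] at hsq
  -- contradiction: the LHS minus RHS is strictly positive for x ≥ 0
  have h1 : (0:ℝ) ≤ y ^ 2 * y ^ 2 := by positivity
  have h2 : (0:ℝ) ≤ (2 * x ^ 2 + 2 * m * x + (m ^ 2 - n ^ 2 - 2 * p)) * y ^ 2 := by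
    apply mul_nonneg _ (sq_nonneg y)
    nlinarith
  have h3 : (0:ℝ) < (x ^ 2 + (m + n) * x + (p + q)) * (x ^ 2 + (m - n) * x + (p - q)) := by
    apply mul_pos <;> nlinarith
  have key : (x ^ 2 - y ^ 2 + m * x + p) ^ 2 + (2 * x * y + m * y) ^ 2
      - ((n * x + q) ^ 2 + (n * y) ^ 2)
      = y ^ 2 * y ^ 2 + (2 * x ^ 2 + 2 * m * x + (m ^ 2 - n ^ 2 - 2 * p)) * y ^ 2
        + (x ^ 2 + (m + n) * x + (p + q)) * (x ^ 2 + (m - n) * x + (p - q)) := by ring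
  linarith
end

section
/- Let r, K, a, γ, β, N be positive parameters and τ > 0, and assume β > γ. Then for every continuous initial condition φ = (φ₁, φ₂) : [−τ, 0] → ℝ² with φ₁, φ₂ nonnegative and φ₁(0) > 0, φ₂(0) > 0, the solution (x(t), y(t)) of the delayed predator–prey system x'(t) = r(1 − x(t)/K)x(t) − γ x(t)² y(t)/(a² + x(t)²), y'(t) = −β y(t) + (γ x(t−τ)²/(a² + x(t−τ)²)) y(t−τ) e^{−y(t−τ)/N} converges to (K, 0) as t → +∞. -/
open Set Filter Topology


lemma aux_stay_neg {g : ℝ → ℝ} {t₀ t₂ : ℝ}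
    (hc : ContinuousOn g (Icc t₀ t₂)) (h0 : g t₀ < 0)
    (hd : ∀ s ∈ Ioc t₀ t₂, g s = 0 → (∀ u ∈ Icc t₀ s, g u ≤ 0) →
      ∃ G, HasDerivAt g G s ∧ G < 0) :
    ∀ t ∈ Icc t₀ t₂, g t < 0 := by
  by_contra hcon
  push_neg at hcon
  obtain ⟨t', ht', hgt'⟩ := hcon
  set S : Set ℝ := Icc t₀ t₂ ∩ g ⁻¹' (Ici 0) with hS
  have hne : S.Nonempty := ⟨t', ht', hgt'⟩
  have hbdd : BddBelow S := ⟨t₀, fun u hu => hu.1.1⟩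
  have hclosed : IsClosed S := hc.preimage_isClosed_of_isClosed isClosed_Icc isClosed_Ici
  set t₁ : ℝ := sInf S with ht₁
  have ht₁S : t₁ ∈ S := hclosed.csInf_mem hne hbdd
  have ht₁I : t₁ ∈ Icc t₀ t₂ := ht₁S.1
  have ht₁0 : t₀ < t₁ := by
    rcases lt_or_eq_of_le ht₁I.1 with h | h
    · exact h
    · exfalso; rw [← h] at ht₁S; exact absurd ht₁S.2 (not_le.2 h0)
  have hbefore : ∀ u ∈ Ico t₀ t₁, g u < 0 := by
    intro u hu
    by_contra h
    push_neg at h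
    have : u ∈ S := ⟨⟨hu.1, hu.2.le.trans ht₁I.2⟩, h⟩
    exact absurd (csInf_le hbdd this) (not_le.2 hu.2)
  have hcw : Tendsto g (𝓝[<] t₁) (𝓝 (g t₁)) := by
    have h1 : Tendsto g (𝓝[Ioo t₀ t₁] t₁) (𝓝 (g t₁)) :=
      (hc t₁ ht₁I).mono_left (nhdsWithin_mono _ (fun u hu => ⟨hu.1.le, hu.2.le.trans ht₁I.2⟩))
    rwa [nhdsWithin_Ioo_eq_nhdsLT ht₁0] at h1
  have hev : ∀ᶠ u in 𝓝[<] t₁, g u < 0 := by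
    filter_upwards [Ioo_mem_nhdsLT ht₁0] with u hu
    exact hbefore u ⟨hu.1.le, hu.2⟩
  have hle : g t₁ ≤ 0 := le_of_tendsto hcw (hev.mono fun u hu => hu.le)
  have hg1 : g t₁ = 0 := le_antisymm hle ht₁S.2
  have hall : ∀ u ∈ Icc t₀ t₁, g u ≤ 0 := by
    intro u hu
    rcases lt_or_eq_of_le hu.2 with h | h
    · exact (hbefore u ⟨hu.1, h⟩).le
    · rw [h, hg1]
  obtain ⟨G, hG, hGneg⟩ := hd t₁ ⟨ht₁0, ht₁I.2⟩ hg1 hall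
  have hslope : Tendsto (slope g t₁) (𝓝[<] t₁) (𝓝 G) :=
    (hasDerivAt_iff_tendsto_slope.1 hG).mono_left
      (nhdsWithin_mono _ (fun u hu => ne_of_lt hu))
  have hevs : ∀ᶠ u in 𝓝[<] t₁, 0 ≤ slope g t₁ u := by
    filter_upwards [Ioo_mem_nhdsLT ht₁0] with u hu
    have hgu : g u < 0 := hbefore u ⟨hu.1.le, hu.2⟩
    rw [slope_def_field]
    exact le_of_lt (div_pos_of_neg_of_neg (by rw [hg1]; linarith) (by linarith [hu.2]))
  exact absurd (ge_of_tendsto hslope hevs) (not_le.2 hGneg)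

lemma aux_growth {f F : ℝ → ℝ} {t₀ t₂ δ : ℝ} (h : t₀ ≤ t₂)
    (hc : ContinuousOn f (Icc t₀ t₂))
    (hd : ∀ s ∈ Ioo t₀ t₂, HasDerivAt f (F s) s ∧ δ ≤ F s) :
    f t₀ + δ * (t₂ - t₀) ≤ f t₂ := by
  have hmono : MonotoneOn (fun t => f t - δ * t) (Icc t₀ t₂) := by
    apply monotoneOn_of_deriv_nonneg (convex_Icc t₀ t₂)
    · exact hc.sub ((continuous_const.mul continuous_id).continuousOn)
    · intro s hs
      rw [interior_Icc] at hs
      exact ((hd s hs).1.sub ((hasDerivAt_id s).const_mul δ)).differentiableAt.differentiableWithinAt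
    · intro s hs
      rw [interior_Icc] at hs
      have h1 : HasDerivAt (fun t => f t - δ * t) (F s - δ * 1) s :=
        (hd s hs).1.sub ((hasDerivAt_id s).const_mul δ)
      rw [h1.deriv]
      linarith [(hd s hs).2]
  have := hmono ⟨le_refl t₀, h⟩ ⟨h, le_refl t₂⟩ h
  simp only at this
  linarith

set_option maxHeartbeats 4000000 in
/-- If `β > γ`, then for every continuous nonnegative initial condition
`φ = (φ₁, φ₂)` with `φ₁(0) > 0` and `φ₂(0) > 0`, the solution of the delayed
predator–prey system converges to `(K, 0)` as `t → +∞`. -/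
theorem global_convergence_to_K_zero
    (r K a γ β N τ : ℝ) (hr : 0 < r) (hK : 0 < K) (ha : 0 < a) (hγ : 0 < γ)
    (hβ : 0 < β) (hN : 0 < N) (hτ : 0 < τ) (hβγ : β > γ) (φ₁ φ₂ : ℝ → ℝ)
    (hφ₁c : ContinuousOn φ₁ (Icc (-τ) 0)) (hφ₂c : ContinuousOn φ₂ (Icc (-τ) 0))
    (hφ₁ : ∀ θ ∈ Icc (-τ) 0, 0 ≤ φ₁ θ) (hφ₂ : ∀ θ ∈ Icc (-τ) 0, 0 ≤ φ₂ θ)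
    (hφ₁0 : 0 < φ₁ 0) (hφ₂0 : 0 < φ₂ 0) (x y : ℝ → ℝ)
    (hsol : IsSolution r K a γ β N τ φ₁ φ₂ x y) :
    Tendsto (fun t => (x t, y t)) atTop (nhds (K, 0)) := by
  obtain ⟨hxc, hyc, hist, hode⟩ := hsol
  have hτ0 : -τ ≤ 0 := by linarith
  have h0mem : (0:ℝ) ∈ Icc (-τ) 0 := ⟨hτ0, le_refl 0⟩
  have hx0 : 0 < x 0 := by rw [(hist 0 h0mem).1]; exact hφ₁0
  have hy0 : 0 < y 0 := by rw [(hist 0 h0mem).2]; exact hφ₂0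
  have hyhist : ∀ θ ∈ Icc (-τ) 0, 0 ≤ y θ := fun θ hθ => by
    rw [(hist θ hθ).2]; exact hφ₂ θ hθ
  have hden : ∀ u : ℝ, 0 < a ^ 2 + u ^ 2 := fun u => by positivity
  have hq1 : ∀ u : ℝ, u ^ 2 / (a ^ 2 + u ^ 2) ≤ 1 := fun u => by
    rw [div_le_one (hden u)]; nlinarith [sq_nonneg a]
  have hq0 : ∀ u : ℝ, 0 ≤ u ^ 2 / (a ^ 2 + u ^ 2) := fun u => by positivity
  -- continuity helpers
  have hIsub : ∀ t₀ : ℝ, 0 ≤ t₀ → ∀ t₂ : ℝ, Icc t₀ t₂ ⊆ Ici (-τ) := by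
    intro t₀ h t₂ u hu
    simp only [mem_Ici]; linarith [hu.1]
  -- ===== Step 1 : y is nonnegative on [-τ, ∞)
  have hynn : ∀ t, -τ ≤ t → 0 ≤ y t := by
    by_contra hcon
    push_neg at hcon
    obtain ⟨t', ht', hyt'⟩ := hcon
    set S : Set ℝ := {t | -τ ≤ t ∧ y t < 0} with hS
    have hne : S.Nonempty := ⟨t', ht', hyt'⟩
    have hbdd : BddBelow S := ⟨-τ, fun u hu => hu.1⟩
    set t₁ := sInf S with ht₁
    have hSpos : ∀ s ∈ S, 0 < s := by
      intro s hs
      by_contra h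
      push_neg at h
      exact absurd (hyhist s ⟨hs.1, h⟩) (not_le.2 hs.2)
    have ht₁0 : 0 ≤ t₁ := le_csInf hne fun u hu => (hSpos u hu).le
    have hbef : ∀ u, -τ ≤ u → u < t₁ → 0 ≤ y u := by
      intro u hu hut
      by_contra h
      push_neg at h
      exact absurd (csInf_le hbdd ⟨hu, h⟩) (not_le.2 hut)
    have ht₁τ : -τ < t₁ := by linarith
    have hyt₁ : 0 ≤ y t₁ := by
      have hca : Tendsto y (𝓝[<] t₁) (𝓝 (y t₁)) :=
        (((hyc t₁ ht₁τ.le).continuousAt (Ici_mem_nhds ht₁τ)).tendsto).mono_left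
          nhdsWithin_le_nhds
      refine ge_of_tendsto hca ?_
      filter_upwards [Ioo_mem_nhdsLT ht₁τ] with u hu
      exact hbef u hu.1.le hu.2
    have hmono : MonotoneOn (fun t => y t * Real.exp (β * t)) (Icc t₁ (t₁ + τ)) := by
      apply monotoneOn_of_deriv_nonneg (convex_Icc _ _)
      · exact (hyc.mono (hIsub t₁ ht₁0 (t₁ + τ))).mul
          (Real.continuous_exp.comp (continuous_const.mul continuous_id)).continuousOn
      · intro s hs
        rw [interior_Icc] at hs
        have hs0 : 0 < s := lt_of_le_of_lt ht₁0 hs.1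
        exact ((hode s hs0).2.mul (((hasDerivAt_id s).const_mul β).exp)).differentiableAt.differentiableWithinAt
      · intro s hs
        rw [interior_Icc] at hs
        have hs0 : 0 < s := lt_of_le_of_lt ht₁0 hs.1
        have hexp : HasDerivAt (fun t : ℝ => Real.exp (β * t)) (Real.exp (β * s) * β) s := by
          simpa using ((hasDerivAt_id s).const_mul β).exp
        have hder := (hode s hs0).2.mul hexp
        rw [show (fun t => y t * Real.exp (β * t)) = (y * fun t => Real.exp (β * t)) from rfl, hder.deriv]
        have hys' : 0 ≤ y (s - τ) := hbef (s - τ) (by linarith [hs.1]) (by linarith [hs.2])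
        have hc0 : 0 ≤ γ * (x (s - τ)) ^ 2 / (a ^ 2 + (x (s - τ)) ^ 2) * y (s - τ) *
            Real.exp (-(y (s - τ)) / N) :=
          mul_nonneg (mul_nonneg (by positivity) hys') (Real.exp_pos _).le
        have hEpos : (0:ℝ) < Real.exp (β * s) := Real.exp_pos _
        nlinarith [mul_nonneg hc0 hEpos.le]
    obtain ⟨s, hsS, hslt⟩ := (csInf_lt_iff hbdd hne).1 (show t₁ < t₁ + τ by linarith)
    have hsge : t₁ ≤ s := csInf_le hbdd hsS
    have := hmono (left_mem_Icc.2 (by linarith)) ⟨hsge, hslt.le⟩ hsge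
    simp only at this
    have hEy : 0 < Real.exp (β * s) := Real.exp_pos _
    have hbad : 0 ≤ y s := by
      have h1 : 0 ≤ y t₁ * Real.exp (β * t₁) := mul_nonneg hyt₁ (Real.exp_pos _).le
      nlinarith
    exact absurd hbad (not_le.2 hsS.2)
  -- ===== Maximum of y on the history interval, C := max + 1
  obtain ⟨θm, hθmI, hmaxOn⟩ := isCompact_Icc.exists_isMaxOn (nonempty_Icc.2 hτ0)
    (hyc.mono (fun u hu => hu.1))
  have hmax' : ∀ u ∈ Icc (-τ) 0, y u ≤ y θm := fun u hu => hmaxOn hu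
  set C := y θm + 1 with hC
  have hCpos : 0 < C := by
    have := hmax' 0 h0mem
    simp only [hC]; linarith
  -- ===== The decay rate lam
  obtain ⟨lam, hlam0, hlam⟩ : ∃ l : ℝ, 0 < l ∧ γ * Real.exp (l * τ) < β - l := by
    have hcf : Continuous fun l : ℝ => β - l - γ * Real.exp (l * τ) :=
      (continuous_const.sub continuous_id).sub
        (continuous_const.mul (Real.continuous_exp.comp (continuous_id.mul continuous_const)))
    have h0 : (0:ℝ) < β - 0 - γ * Real.exp (0 * τ) := by
      simp only [zero_mul, Real.exp_zero]; linarith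
    have h1 : ∀ᶠ l in 𝓝 (0:ℝ), 0 < β - l - γ * Real.exp (l * τ) :=
      (hcf.continuousAt (x := 0)).eventually (eventually_gt_nhds h0)
    have h2 : ∀ᶠ l in 𝓝[>] (0:ℝ), 0 < β - l - γ * Real.exp (l * τ) :=
      h1.filter_mono nhdsWithin_le_nhds
    obtain ⟨l, hl1, hl2⟩ := (h2.and eventually_mem_nhdsWithin).exists
    exact ⟨l, hl2, by linarith⟩
  -- ===== Step 2 : exponential decay bound for y
  have hyd : ∀ t₂, 0 ≤ t₂ → ∀ u ∈ Icc (0:ℝ) t₂, y u * Real.exp (lam * u) - C < 0 := by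
    intro t₂ ht₂
    apply aux_stay_neg
    · exact ((hyc.mono (hIsub 0 le_rfl t₂)).mul
        ((Real.continuous_exp.comp (continuous_const.mul continuous_id)).continuousOn)).sub
        continuousOn_const
    · show y 0 * Real.exp (lam * 0) - C < 0
      have := hmax' 0 h0mem
      simp only [mul_zero, Real.exp_zero, mul_one]
      simp only [hC]; linarith
    · intro s hs hgs hall
      have hs0 : 0 < s := hs.1
      have hexp : HasDerivAt (fun t : ℝ => Real.exp (lam * t)) (Real.exp (lam * s) * lam) s := by
        simpa using ((hasDerivAt_id s).const_mul lam).exp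
      have hder := ((hode s hs0).2.mul hexp).sub_const C
      refine ⟨_, hder, ?_⟩
      have hEpos : 0 < Real.exp (lam * s) := Real.exp_pos _
      have hysE : y s * Real.exp (lam * s) = C := by
        have h := hgs; linarith
      have hwnn : 0 ≤ y (s - τ) := hynn _ (by linarith)
      have hq1' : (x (s - τ)) ^ 2 / (a ^ 2 + (x (s - τ)) ^ 2) ≤ 1 := hq1 _
      have hA : γ * (x (s - τ)) ^ 2 / (a ^ 2 + (x (s - τ)) ^ 2) ≤ γ := by
        rw [div_le_iff₀ (hden _)]
        nlinarith [sq_nonneg a, sq_nonneg (x (s - τ))]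
      have hA0 : 0 ≤ γ * (x (s - τ)) ^ 2 / (a ^ 2 + (x (s - τ)) ^ 2) := by positivity
      have hexle : Real.exp (-(y (s - τ)) / N) ≤ 1 := by
        rw [Real.exp_le_one_iff]
        apply div_nonpos_of_nonpos_of_nonneg (by linarith) hN.le
      have hterm : γ * (x (s - τ)) ^ 2 / (a ^ 2 + (x (s - τ)) ^ 2) * y (s - τ) *
          Real.exp (-(y (s - τ)) / N) ≤ γ * y (s - τ) := by
        nlinarith [mul_nonneg (sub_nonneg.2 hA) hwnn,
          mul_nonneg (mul_nonneg hA0 hwnn) (sub_nonneg.2 hexle)]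
      have hwE : y (s - τ) * Real.exp (lam * (s - τ)) ≤ C := by
        rcases le_or_gt 0 (s - τ) with hst | hst
        · have := hall (s - τ) ⟨hst, by linarith⟩
          linarith
        · have h1 : y (s - τ) ≤ y θm := hmax' (s - τ) ⟨by linarith, by linarith⟩
          have h2 : Real.exp (lam * (s - τ)) ≤ 1 := by
            rw [Real.exp_le_one_iff]
            exact mul_nonpos_iff.2 (Or.inl ⟨hlam0.le, hst.le⟩)
          nlinarith [Real.exp_pos (lam * (s - τ))]
      have hsplit : Real.exp (lam * s) = Real.exp (lam * τ) * Real.exp (lam * (s - τ)) := by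
        rw [← Real.exp_add]; ring_nf
      have hwE2 : y (s - τ) * Real.exp (lam * s) ≤ Real.exp (lam * τ) * C := by
        calc y (s - τ) * Real.exp (lam * s)
            = Real.exp (lam * τ) * (y (s - τ) * Real.exp (lam * (s - τ))) := by
              rw [hsplit]; ring
          _ ≤ Real.exp (lam * τ) * C :=
              mul_le_mul_of_nonneg_left hwE (Real.exp_pos _).le
      have h1 : γ * (x (s - τ)) ^ 2 / (a ^ 2 + (x (s - τ)) ^ 2) * y (s - τ) *
          Real.exp (-(y (s - τ)) / N) * Real.exp (lam * s)
          ≤ γ * y (s - τ) * Real.exp (lam * s) :=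
        mul_le_mul_of_nonneg_right hterm hEpos.le
      have h2 : γ * y (s - τ) * Real.exp (lam * s) ≤ γ * (Real.exp (lam * τ) * C) := by
        have := mul_le_mul_of_nonneg_left hwE2 hγ.le
        nlinarith
      have h4 : γ * Real.exp (lam * τ) * C < (β - lam) * C :=
        mul_lt_mul_of_pos_right hlam hCpos
      nlinarith
  have hyd' : ∀ t, 0 ≤ t → y t * Real.exp (lam * t) < C := by
    intro t ht
    have := hyd t ht t ⟨ht, le_rfl⟩
    linarith
  -- global bound for y
  have hyC : ∀ t, -τ ≤ t → y t ≤ C := by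
    intro t ht
    rcases le_or_gt t 0 with h | h
    · have := hmax' t ⟨ht, h⟩; simp only [hC]; linarith
    · have h1 := hyd' t h.le
      have h2 : 1 ≤ Real.exp (lam * t) := Real.one_le_exp (by positivity)
      nlinarith [hynn t (by linarith)]
  -- decay bound in usable form
  have hydec : ∀ t, 0 ≤ t → y t ≤ C * Real.exp (-(lam * t)) := by
    intro t ht
    have h1 := hyd' t ht
    have hE : 0 < Real.exp (lam * t) := Real.exp_pos _
    have h2 := (lt_div_iff₀ hE).mpr h1
    rw [Real.exp_neg, ← div_eq_mul_inv]
    exact h2.le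
  -- ===== y tends to 0
  have hyt : Tendsto y atTop (𝓝 0) := by
    have htend0 : Tendsto (fun t : ℝ => C * Real.exp (-(lam * t))) atTop (𝓝 0) := by
      have h1 : Tendsto (fun t : ℝ => lam * t) atTop atTop :=
        tendsto_id.const_mul_atTop hlam0
      have h2 : Tendsto (fun t : ℝ => Real.exp (-(lam * t))) atTop (𝓝 0) :=
        Real.tendsto_exp_neg_atTop_nhds_zero.comp h1
      simpa using h2.const_mul C
    apply squeeze_zero' (g := fun t : ℝ => C * Real.exp (-(lam * t)))
    · filter_upwards [eventually_ge_atTop (0:ℝ)] with t ht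
      exact hynn t (by linarith)
    · filter_upwards [eventually_ge_atTop (0:ℝ)] with t ht
      exact hydec t ht
    · exact htend0
    -- ===== predation term bounds
  have hp : ∀ X Y : ℝ, 0 ≤ Y → 0 ≤ γ * X ^ 2 * Y / (a ^ 2 + X ^ 2) ∧
      γ * X ^ 2 * Y / (a ^ 2 + X ^ 2) ≤ γ * Y := by
    intro X Y hY
    constructor
    · positivity
    · rw [div_le_iff₀ (hden X)]
      nlinarith [mul_nonneg (mul_nonneg hγ.le hY) (sq_nonneg a)]
  -- ===== x is bounded above by B
  set B := max (x 0) K + 1 with hB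
  have hKB : K < B := by
    have := le_max_right (x 0) K; simp only [hB]; linarith
  have hxB' : x 0 < B := by
    have := le_max_left (x 0) K; simp only [hB]; linarith
  have hBpos : 0 < B := lt_trans hK hKB
  have hxB : ∀ t, 0 ≤ t → x t < B := by
    intro t ht
    have key := aux_stay_neg (g := fun u => x u - B) (t₀ := 0) (t₂ := t)
      ((hxc.mono (hIsub 0 le_rfl t)).sub continuousOn_const)
      (by linarith)
      ?_ t ⟨ht, le_rfl⟩
    · simpa using key
    · intro s hs hgs _
      have hxs : x s = B := by linarith
      refine ⟨_, (hode s hs.1).1.sub_const B, ?_⟩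
      have hpnn := (hp (x s) (y s) (hynn s (by linarith [hs.1]))).1
      have hneg : 1 - x s / K < 0 := by
        rw [sub_neg, hxs]
        exact (one_lt_div hK).2 hKB
      have : r * (1 - x s / K) * x s < 0 := by
        rw [hxs] at hneg ⊢
        exact mul_neg_of_neg_of_pos (mul_neg_of_pos_of_neg hr hneg) hBpos
      linarith
  -- ===== x is strictly positive
  set M := r * B / K + γ * C / (2 * a) with hM
  have hMpos : 0 < M := by positivity
  have hxpos : ∀ t, 0 ≤ t → 0 < x t := by
    intro t ht
    have key := aux_stay_neg (g := fun u => x 0 / 2 * Real.exp (-(M + 1) * u) - x u)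
      (t₀ := 0) (t₂ := t)
      ((continuousOn_const.mul (Real.continuous_exp.comp
        (continuous_const.mul continuous_id)).continuousOn).sub (hxc.mono (hIsub 0 le_rfl t)))
      (by simp only [mul_zero, zero_mul, Real.exp_zero, mul_one]; linarith)
      ?_ t ⟨ht, le_rfl⟩
    · have hE : 0 < Real.exp (-(M + 1) * t) := Real.exp_pos _
      nlinarith
    · intro s hs hgs _
      have hE : 0 < Real.exp (-(M + 1) * s) := Real.exp_pos _
      set w := x 0 / 2 * Real.exp (-(M + 1) * s) with hw
      have hxs : x s = w := by simp only [hw]; linarith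
      have hwpos : 0 < w := by positivity
      have hexp : HasDerivAt (fun u : ℝ => x 0 / 2 * Real.exp (-(M + 1) * u))
          (x 0 / 2 * (Real.exp (-(M + 1) * s) * (-(M + 1)))) s := by
        simpa using (((hasDerivAt_id s).const_mul (-(M+1))).exp).const_mul (x 0 / 2)
      refine ⟨_, hexp.sub (hode s hs.1).1, ?_⟩
      have hys0 : 0 ≤ y s := hynn s (by linarith [hs.1])
      have hysC : y s ≤ C := hyC s (by linarith [hs.1])
      have hwB : w ≤ B := by
        have h1 : Real.exp (-(M + 1) * s) ≤ 1 := by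
          rw [Real.exp_le_one_iff]
          exact mul_nonpos_iff.2 (Or.inr ⟨by linarith, hs.1.le⟩)
        nlinarith
      -- lower bound for the logistic part
      have hlog : -(r * B / K) * w ≤ r * (1 - w / K) * w := by
        have h1 : r * (1 - w / K) * w + (r * B / K) * w = (r / K) * w * ((K - w) + B) := by
          field_simp
        have h2 : 0 ≤ (r / K) * w * ((K - w) + B) :=
          mul_nonneg (mul_nonneg (by positivity) hwpos.le) (by linarith)
        linarith
      -- upper bound for the predation part
      have hpred : γ * w ^ 2 * y s / (a ^ 2 + w ^ 2) ≤ γ * C / (2 * a) * w := by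
        rw [div_le_iff₀ (hden w),
          show γ * C / (2 * a) * w * (a ^ 2 + w ^ 2) = γ * C * w * (a ^ 2 + w ^ 2) / (2 * a) by ring,
          le_div_iff₀ (by positivity : (0:ℝ) < 2 * a)]
        nlinarith [mul_nonneg (mul_nonneg (mul_nonneg hγ.le hwpos.le) hCpos.le) (sq_nonneg (w - a)),
          mul_nonneg (mul_nonneg (mul_nonneg (mul_nonneg hγ.le hwpos.le) (sub_nonneg.2 hysC)) ha.le) hwpos.le]
      have hxder : -(M * w) ≤ r * (1 - x s / K) * x s - γ * (x s) ^ 2 * y s / (a ^ 2 + (x s) ^ 2) := by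
        rw [hxs]
        simp only [hM]
        nlinarith
      have hEw : x 0 / 2 * (Real.exp (-(M + 1) * s) * -(M + 1)) = -(M + 1) * w := by
        rw [hw]; ring
      rw [hEw]
      nlinarith [hxder, hwpos]
  have hp2 : ∀ X Y : ℝ, 0 ≤ X → 0 ≤ Y →
      γ * X ^ 2 * Y / (a ^ 2 + X ^ 2) ≤ γ * Y * X / (2 * a) := by
    intro X Y hX hY
    rw [div_le_div_iff₀ (hden X) (by positivity : (0:ℝ) < 2 * a)]
    nlinarith [mul_nonneg (mul_nonneg (mul_nonneg hγ.le hY) hX) (sq_nonneg (X - a))]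
  -- ===== eventually x < K + ε
  have hupper : ∀ ε : ℝ, 0 < ε → ∀ᶠ t in atTop, x t < K + ε := by
    intro ε hε
    set δ := r * (K + ε) * ε / K with hδ
    have hδ0 : 0 < δ := by positivity
    have hdbound : ∀ u : ℝ, 0 < u → K + ε ≤ x u →
        r * (1 - x u / K) * x u - γ * (x u) ^ 2 * y u / (a ^ 2 + (x u) ^ 2) ≤ -δ := by
      intro u hu hxu
      have hpnn := (hp (x u) (y u) (hynn u (by linarith))).1
      have hlog2 : r * (1 - x u / K) * x u ≤ -δ := by
        have h1 : r * (1 - x u / K) * x u + δ = -((r / K) * ((x u - (K + ε)) * (x u + ε))) := by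
          simp only [hδ]; field_simp; ring
        have h2 : 0 ≤ (r / K) * ((x u - (K + ε)) * (x u + ε)) :=
          mul_nonneg (by positivity) (mul_nonneg (by linarith) (by linarith))
        linarith
      linarith
    have hex : ∃ s : ℝ, 0 ≤ s ∧ x s < K + ε := by
      by_contra hcon
      push_neg at hcon
      set S₀ := x 0 / δ with hS₀
      have hS₀0 : 0 ≤ S₀ := by positivity
      have hgrow := aux_growth (f := fun u => -x u)
        (F := fun u => -(r * (1 - x u / K) * x u - γ * (x u) ^ 2 * y u / (a ^ 2 + (x u) ^ 2)))
        (δ := δ) (t₀ := 0) (t₂ := S₀) hS₀0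
        ((hxc.mono (hIsub 0 le_rfl S₀)).neg)
        (fun u hu => ⟨(hode u hu.1).1.neg, by linarith [hdbound u hu.1 (hcon u hu.1.le)]⟩)
      have hδS : δ * (S₀ - 0) = x 0 := by
        simp only [hS₀]; field_simp; ring
      have hxS := hcon S₀ hS₀0
      nlinarith
    obtain ⟨s, hs0, hsx⟩ := hex
    have hstay : ∀ t, s ≤ t → x t < K + ε := by
      intro t hts
      have key := aux_stay_neg (g := fun u => x u - (K + ε)) (t₀ := s) (t₂ := t)
        ((hxc.mono (hIsub s hs0 t)).sub continuousOn_const)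
        (by linarith) ?_ t ⟨hts, le_rfl⟩
      · linarith
      · intro u hu hgu _
        refine ⟨_, (hode u (lt_of_le_of_lt hs0 hu.1)).1.sub_const (K + ε), ?_⟩
        have := hdbound u (lt_of_le_of_lt hs0 hu.1) (by linarith)
        linarith
    filter_upwards [eventually_ge_atTop s] with t hts
    exact hstay t hts
  -- ===== eventually x > K - ε
  have hlower : ∀ ε : ℝ, 0 < ε → ε < K → ∀ᶠ t in atTop, K - ε < x t := by
    intro ε hε hεK
    have hη₁ : (0:ℝ) < r * a / (2 * γ) := by positivity
    obtain ⟨T₁, hT₁⟩ := ((hyt.eventually_lt_const hη₁).and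
      (eventually_ge_atTop (0:ℝ))).exists_forall_of_atTop
    have hT₁0 : 0 ≤ T₁ := (hT₁ T₁ le_rfl).2
    have hxT₁ : 0 < x T₁ := hxpos T₁ hT₁0
    set m := min (x T₁ / 2) (K / 2) with hm
    have hm0 : 0 < m := lt_min (by linarith) (by linarith)
    have hmlt : m < x T₁ := lt_of_le_of_lt (min_le_left _ _) (by linarith)
    have hmK : m ≤ K / 2 := min_le_right _ _
    -- x stays above m after T₁
    have hxm : ∀ t, T₁ ≤ t → m < x t := by
      intro t htt
      have key := aux_stay_neg (g := fun u => m - x u) (t₀ := T₁) (t₂ := t)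
        (continuousOn_const.sub (hxc.mono (hIsub T₁ hT₁0 t)))
        (by linarith) ?_ t ⟨htt, le_rfl⟩
      · linarith
      · intro u hu hgu _
        have hu0 : 0 < u := lt_of_le_of_lt hT₁0 hu.1
        have hxu : x u = m := by linarith
        refine ⟨_, (hode u hu0).1.const_sub m, ?_⟩
        have hyu : y u < r * a / (2 * γ) := (hT₁ u (le_trans (le_refl T₁) hu.1.le)).1
        have hyu0 : 0 ≤ y u := hynn u (by linarith)
        have hplt : γ * (x u) ^ 2 * y u / (a ^ 2 + (x u) ^ 2) < r * m / 4 := by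
          have h1 : γ * (x u) ^ 2 * y u / (a ^ 2 + (x u) ^ 2) ≤ γ * y u * x u / (2 * a) :=
            hp2 (x u) (y u) (by rw [hxu]; exact hm0.le) hyu0
          have h2 : γ * y u * x u / (2 * a) < r * m / 4 := by
            rw [hxu, div_lt_div_iff₀ (by positivity : (0:ℝ) < 2 * a) (by norm_num : (0:ℝ) < 4)]
            have h3 : y u * (2 * γ) < r * a := by
              rw [lt_div_iff₀ (by positivity : (0:ℝ) < 2 * γ)] at hyu
              linarith
            nlinarith [hm0, ha]
          linarith
        have hlog3 : r * m / 2 ≤ r * (1 - x u / K) * x u := by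
          rw [hxu]
          have h4 : m / K ≤ 1 / 2 := by
            rw [div_le_iff₀ hK]; linarith
          nlinarith [mul_nonneg (mul_nonneg hr.le hm0.le) (by linarith : (0:ℝ) ≤ 1 / 2 - m / K)]
        have : 0 < r * m := by positivity
        linarith
    rcases le_or_gt (K - ε) m with hcase | hcase
    · filter_upwards [eventually_ge_atTop T₁] with t htt
      linarith [hxm t htt]
    · -- m < K - ε
      set ρ := r * m * ε / K with hρ
      have hρ0 : 0 < ρ := by positivity
      have hη₂ : (0:ℝ) < ρ / (2 * γ) := by positivity
      obtain ⟨T₂, hT₂⟩ := ((hyt.eventually_lt_const hη₂).and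
        (eventually_ge_atTop T₁)).exists_forall_of_atTop
      have hT₂1 : T₁ ≤ T₂ := (hT₂ T₂ le_rfl).2
      have hT₂0 : 0 ≤ T₂ := le_trans hT₁0 hT₂1
      have hpsmall : ∀ u : ℝ, T₂ ≤ u →
          γ * (x u) ^ 2 * y u / (a ^ 2 + (x u) ^ 2) < ρ / 2 := by
        intro u hu
        have hyu : y u < ρ / (2 * γ) := (hT₂ u hu).1
        have hyu0 : 0 ≤ y u := hynn u (by linarith [le_trans hT₂0 hu])
        have h1 := (hp (x u) (y u) hyu0).2
        have h2 : γ * y u < ρ / 2 := by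
          rw [lt_div_iff₀ (by positivity : (0:ℝ) < 2 * γ)] at hyu
          nlinarith
        linarith
      have hlogbig : ∀ X : ℝ, m ≤ X → X ≤ K - ε → ρ ≤ r * (1 - X / K) * X := by
        intro X hXm hXK
        have heq : 1 - X / K - ε / K = (K - X - ε) / K := by field_simp
        have hfac : ε / K ≤ 1 - X / K := by
          have : (0:ℝ) ≤ (K - X - ε) / K := div_nonneg (by linarith) hK.le
          linarith
        have hεK0 : (0:ℝ) < ε / K := by positivity
        have hgoal : r * (ε / K) * m ≤ r * (1 - X / K) * X := by
          nlinarith [mul_nonneg (mul_nonneg hr.le (by linarith : (0:ℝ) ≤ 1 - X / K))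
              (by linarith : (0:ℝ) ≤ X - m),
            mul_nonneg (mul_nonneg hr.le hm0.le)
              (by linarith : (0:ℝ) ≤ 1 - X / K - ε / K)]
        have : r * (ε / K) * m = ρ := by simp only [hρ]; ring
        linarith
      have hex : ∃ s : ℝ, T₂ ≤ s ∧ K - ε < x s := by
        by_contra hcon
        push_neg at hcon
        set S₁ := T₂ + 2 * K / ρ with hS₁
        have hS₁T : T₂ ≤ S₁ := by
          have : (0:ℝ) < 2 * K / ρ := by positivity
          simp only [hS₁]; linarith
        have hgrow := aux_growth (f := x)
          (F := fun u => r * (1 - x u / K) * x u - γ * (x u) ^ 2 * y u / (a ^ 2 + (x u) ^ 2))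
          (δ := ρ / 2) (t₀ := T₂) (t₂ := S₁) hS₁T
          (hxc.mono (hIsub T₂ hT₂0 S₁)) ?_
        · have hδS : ρ / 2 * (S₁ - T₂) = K := by
            simp only [hS₁]; field_simp; ring
          have h1 := hcon S₁ hS₁T
          have h2 : m < x T₂ := hxm T₂ hT₂1
          nlinarith
        · intro u hu
          refine ⟨(hode u (lt_of_le_of_lt hT₂0 hu.1)).1, ?_⟩
          have hxum : m < x u := hxm u (le_trans hT₂1 hu.1.le)
          have hxuK : x u ≤ K - ε := hcon u hu.1.le
          have h1 := hlogbig (x u) hxum.le hxuK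
          have h2 := hpsmall u hu.1.le
          linarith
      obtain ⟨s, hsT₂, hsx⟩ := hex
      have hs0 : 0 ≤ s := le_trans hT₂0 hsT₂
      have hstay : ∀ t, s ≤ t → K - ε < x t := by
        intro t hts
        have key := aux_stay_neg (g := fun u => (K - ε) - x u) (t₀ := s) (t₂ := t)
          (continuousOn_const.sub (hxc.mono (hIsub s hs0 t)))
          (by linarith) ?_ t ⟨hts, le_rfl⟩
        · linarith
        · intro u hu hgu _
          have hu0 : 0 < u := lt_of_le_of_lt hs0 hu.1
          have hxu : x u = K - ε := by linarith
          refine ⟨_, (hode u hu0).1.const_sub (K - ε), ?_⟩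
          have h1 := hlogbig (x u) (by rw [hxu]; linarith) (by rw [hxu])
          have h2 := hpsmall u (le_trans hsT₂ hu.1.le)
          linarith
      filter_upwards [eventually_ge_atTop s] with t hts
      exact hstay t hts
  -- ===== conclusion
  have hx : Tendsto x atTop (𝓝 K) := by
    refine tendsto_order.2 ⟨?_, ?_⟩
    · intro c hc
      have hε : 0 < min (K - c) (K / 2) := lt_min (by linarith) (by linarith)
      have h2 : min (K - c) (K / 2) < K := lt_of_le_of_lt (min_le_right _ _) (by linarith)
      filter_upwards [hlower _ hε h2] with t ht
      have h3 : min (K - c) (K / 2) ≤ K - c := min_le_left _ _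
      linarith
    · intro c hc
      filter_upwards [hupper (c - K) (by linarith)] with t ht
      linarith
  exact hx.prodMk_nhds hyt
end

section
/- Let r, K, a, γ, β be positive real numbers with β > γK²/(a² + K²). Then for every delay τ ≥ 0, every complex root λ of the characteristic equation λ² + (r + β)λ − (γK²/(a² + K²)) λ e^{−λτ} + rβ − (rγK²/(a² + K²)) e^{−λτ} = 0 has negative real part. -/
/-- For positive `r, K, a, γ, β` with `β > γK²/(a² + K²)`, every
complex root of the characteristic equation
`λ² + (r + β)λ − (γK²/(a² + K²))λe^{−λτ} + rβ − (rγK²/(a² + K²))e^{−λτ} = 0`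
of the linearization at `(K, 0)` has negative real part, for every delay `τ ≥ 0`. -/
theorem characteristic_roots_at_K_zero_negative
    (r K a γ β : ℝ) (hr : 0 < r) (hK : 0 < K) (ha : 0 < a) (hγ : 0 < γ) (hβ : 0 < β)
    (hcond : β > γ * K ^ 2 / (a ^ 2 + K ^ 2)) :
    ∀ τ : ℝ, 0 ≤ τ → ∀ z : ℂ,
      z ^ 2 + ((r : ℂ) + (β : ℂ)) * z -
        ((γ * K ^ 2 / (a ^ 2 + K ^ 2) : ℝ) : ℂ) * z * Complex.exp (-z * (τ : ℂ)) +
        ((r * β : ℝ) : ℂ) -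
        ((r * γ * K ^ 2 / (a ^ 2 + K ^ 2) : ℝ) : ℂ) * Complex.exp (-z * (τ : ℂ)) = 0 →
      z.re < 0 := by
  intro τ hτ z h
  by_contra hre
  push_neg at hre
  set c : ℝ := γ * K ^ 2 / (a ^ 2 + K ^ 2) with hc
  have hc0 : 0 < c := div_pos (by positivity) (by positivity)
  have hr' : ((r * γ * K ^ 2 / (a ^ 2 + K ^ 2) : ℝ) : ℂ) = (r : ℂ) * (c : ℂ) := by
    push_cast [hc]; ring
  rw [hr'] at h
  push_cast at h
  have hfac : (z + r) * (z + β - (c : ℂ) * Complex.exp (-z * τ)) = 0 := by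
    linear_combination h
  rcases mul_eq_zero.1 hfac with h1 | h2
  · have hz : z = -(r : ℂ) := by linear_combination h1
    rw [hz] at hre
    simp at hre
    linarith
  · have heq : z + β = (c : ℂ) * Complex.exp (-z * τ) := by
      linear_combination h2
    have habs : ‖z + β‖ ≤ c := by
      rw [heq, norm_mul, Complex.norm_exp]
      have h1 : ‖(c : ℂ)‖ = c := by
        rw [Complex.norm_real, Real.norm_eq_abs, abs_of_pos hc0]
      rw [h1]
      have h2 : (-z * (τ : ℂ)).re ≤ 0 := by
        simp only [Complex.mul_re, Complex.neg_re, Complex.neg_im, Complex.ofReal_re,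
          Complex.ofReal_im]
        nlinarith
      nlinarith [Real.exp_le_one_iff.2 h2, Real.exp_pos (-z * (τ : ℂ)).re]
    have hge : β ≤ ‖z + β‖ := by
      have : β ≤ (z + (β : ℂ)).re := by
        simp only [Complex.add_re, Complex.ofReal_re]; linarith
      exact this.trans (Complex.re_le_norm _)
    linarith
end

section
/- Let r, K, a, γ, β, N be positive parameters with β > γK²/(a² + K²) and let τ ≥ 0. Then the equilibrium (K, 0) of the delayed predator–prey system x'(t) = r(1 − x(t)/K)x(t) − γ x(t)² y(t)/(a² + x(t)²), y'(t) = −β y(t) + (γ x(t−τ)²/(a² + x(t−τ)²)) y(t−τ) e^{−y(t−τ)/N} is locally asymptotically stable: for every ε > 0 there exists δ > 0 such that every solution whose nonnegative continuous initial condition φ : [−τ, 0] → ℝ² satisfies sup_{θ ∈ [−τ,0]} ‖φ(θ) − (K, 0)‖ < δ remains within distance ε of (K, 0) for all t ≥ 0 and converges to (K, 0) as t → +∞. -/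
open Set Filter

section Helpers

open Topology

/-- If `f` has derivative `d` at `t > 0` and `f` attains at `t` its maximum over `[0, t]`,
then `0 ≤ d`. -/
private lemma deriv_nonneg_of_max (f : ℝ → ℝ) {t d : ℝ} (ht : 0 < t) (hd : HasDerivAt f d t)
    (hle : ∀ s ∈ Icc 0 t, f s ≤ f t) : 0 ≤ d := by
  have hsub : Ioo (0:ℝ) t ⊆ {t}ᶜ := fun s hs => ne_of_lt hs.2
  have h1 : Tendsto (slope f t) (𝓝[Ioo (0:ℝ) t] t) (𝓝 d) :=
    (hasDerivAt_iff_tendsto_slope.mp hd).mono_left (nhdsWithin_mono _ hsub)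
  have hne : (𝓝[Ioo (0:ℝ) t] t).NeBot := by
    refine mem_closure_iff_nhdsWithin_neBot.mp ?_
    rw [closure_Ioo (ne_of_lt ht)]
    exact ⟨ht.le, le_refl t⟩
  exact ge_of_tendsto h1 (by
    filter_upwards [self_mem_nhdsWithin] with s hs
    have h2 : f s - f t ≤ 0 := sub_nonpos.mpr (hle s ⟨hs.1.le, hs.2.le⟩)
    have h3 : s - t < 0 := sub_neg.mpr hs.2
    rw [slope_def_field]
    exact div_nonneg_of_nonpos h2 h3.le)

/-- First-crossing principle: a continuous function on `[0, ∞)` starting strictly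
below `c` stays strictly below `c` provided it can never touch `c` for the first time. -/
private lemma crossing (f : ℝ → ℝ) (c : ℝ) (hf : ContinuousOn f (Ici 0)) (h0 : f 0 < c)
    (key : ∀ t > (0:ℝ), (∀ s ∈ Icc 0 t, f s ≤ c) → f t = c → False) :
    ∀ t ≥ (0:ℝ), f t < c := by
  by_contra h
  push_neg at h
  obtain ⟨t₁, ht₁, hc⟩ := h
  set S := {t : ℝ | 0 ≤ t ∧ c ≤ f t} with hS
  have hne : S.Nonempty := ⟨t₁, ht₁, hc⟩
  have hbdd : BddBelow S := ⟨0, fun s hs => hs.1⟩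
  set t₀ := sInf S with ht₀def
  have ht₀0 : 0 ≤ t₀ := le_csInf hne (fun s hs => hs.1)
  have hlt : ∀ s, 0 ≤ s → s < t₀ → f s < c := by
    intro s hs hst
    by_contra hh
    push_neg at hh
    exact absurd (csInf_le hbdd ⟨hs, hh⟩) (not_le.2 hst)
  have hclos : t₀ ∈ closure S := csInf_mem_closure hne hbdd
  have hSsub : S ⊆ Ici (0:ℝ) := fun s hs => hs.1
  have hge : c ≤ f t₀ := by
    have htt : Tendsto f (𝓝[S] t₀) (𝓝 (f t₀)) := ((hf t₀ ht₀0).mono hSsub).tendsto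
    have : (𝓝[S] t₀).NeBot := mem_closure_iff_nhdsWithin_neBot.mp hclos
    exact ge_of_tendsto htt (by
      filter_upwards [self_mem_nhdsWithin] with s hs
      exact hs.2)
  have ht₀pos : 0 < t₀ := by
    rcases lt_or_eq_of_le ht₀0 with h | h
    · exact h
    · exfalso; rw [← h] at hge; linarith
  have hle' : f t₀ ≤ c := by
    have hsub2 : Ico (0:ℝ) t₀ ⊆ Ici 0 := fun s hs => hs.1
    have htt : Tendsto f (𝓝[Ico (0:ℝ) t₀] t₀) (𝓝 (f t₀)) := ((hf t₀ ht₀0).mono hsub2).tendsto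
    have hne2 : (𝓝[Ico (0:ℝ) t₀] t₀).NeBot := by
      refine mem_closure_iff_nhdsWithin_neBot.mp ?_
      rw [closure_Ico (ne_of_lt ht₀pos)]
      exact ⟨ht₀0, le_refl t₀⟩
    exact le_of_tendsto htt (by
      filter_upwards [self_mem_nhdsWithin] with s hs
      exact (hlt s hs.1 hs.2).le)
  have heq : f t₀ = c := le_antisymm hle' hge
  exact key t₀ ht₀pos
    (fun s hs => by
      rcases lt_or_eq_of_le hs.2 with h | h
      · exact (hlt s hs.1 h).le
      · rw [h, heq]) heq


private lemma ContinuousOn.max' {f g : ℝ → ℝ} {s : Set ℝ} (hf : ContinuousOn f s)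
    (hg : ContinuousOn g s) : ContinuousOn (fun u => max (f u) (g u)) s :=
  fun p hp => Filter.Tendsto.max (hf p hp) (hg p hp)

end Helpers

set_option maxHeartbeats 1000000 in
/-- If `β > γK²/(a² + K²)`, then for every `τ ≥ 0` the equilibrium
`(K, 0)` of the delayed predator–prey system is locally asymptotically stable: for every
`ε > 0` there is `δ > 0` such that every solution whose nonnegative continuous initial
condition lies uniformly within distance `δ` of `(K, 0)` (in the maximum norm) stays
within distance `ε` of `(K, 0)` for all `t ≥ 0` and converges to `(K, 0)`. -/
theorem K_zero_locally_asymptotically_stable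
    (r K a γ β N τ : ℝ) (hr : 0 < r) (hK : 0 < K) (ha : 0 < a) (hγ : 0 < γ)
    (hβ : 0 < β) (hN : 0 < N) (hτ : 0 ≤ τ)
    (hcond : β > γ * K ^ 2 / (a ^ 2 + K ^ 2)) :
    ∀ ε > (0 : ℝ), ∃ δ > (0 : ℝ), ∀ φ₁ φ₂ : ℝ → ℝ,
      ContinuousOn φ₁ (Icc (-τ) 0) → ContinuousOn φ₂ (Icc (-τ) 0) →
      (∀ θ ∈ Icc (-τ) 0, 0 ≤ φ₁ θ ∧ 0 ≤ φ₂ θ) →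
      (∀ θ ∈ Icc (-τ) 0, max |φ₁ θ - K| |φ₂ θ - 0| < δ) →
      ∀ x y : ℝ → ℝ, IsSolution r K a γ β N τ φ₁ φ₂ x y →
        (∀ t ≥ (0 : ℝ), max |x t - K| |y t - 0| < ε) ∧
        Tendsto (fun t => (x t, y t)) atTop (nhds (K, 0)) := by
  intro ε hε
  have hc₀pos : 0 < γ * K ^ 2 / (a ^ 2 + K ^ 2) := by positivity
  obtain ⟨c', hc'gt, hc'lt, hc'pos⟩ :
      ∃ c : ℝ, γ * K ^ 2 / (a ^ 2 + K ^ 2) < c ∧ c < β ∧ 0 < c :=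
    ⟨(γ * K ^ 2 / (a ^ 2 + K ^ 2) + β) / 2, by linarith, by linarith, by linarith⟩
  -- ε₁ from continuity of the reproduction coefficient
  obtain ⟨ε₁, hε₁pos, hball⟩ : ∃ ε₁ > (0:ℝ), ∀ u v : ℝ, |u - K| < ε₁ → |v| < ε₁ →
      γ * u ^ 2 / (a ^ 2 + u ^ 2) * Real.exp (-v / N) < c' := by
    have h1 : Continuous (fun p : ℝ × ℝ => γ * p.1 ^ 2 / (a ^ 2 + p.1 ^ 2) * Real.exp (-p.2 / N)) := by
      apply Continuous.mul
      · exact Continuous.div (by continuity) (by continuity) (fun p => by positivity)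
      · exact Real.continuous_exp.comp (by continuity)
    obtain ⟨d, hd, hdp⟩ := Metric.continuousAt_iff.mp (h1.continuousAt (x := ((K, 0) : ℝ × ℝ)))
      (c' - γ * K ^ 2 / (a ^ 2 + K ^ 2)) (by linarith)
    refine ⟨d, hd, fun u v hu hv => ?_⟩
    have h2 := hdp (x := (u, v)) (by
      rw [Prod.dist_eq]
      simp only [Real.dist_eq]
      rw [sub_zero]
      exact max_lt hu hv)
    rw [Real.dist_eq] at h2
    simp only [neg_zero, zero_div, Real.exp_zero, mul_one] at h2
    have := abs_lt.mp h2
    linarith [this.2]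
  -- decay rate for y
  obtain ⟨lam, hlam_pos, hlam⟩ : ∃ lam > (0:ℝ), c' * Real.exp (lam * τ) + lam < β := by
    have hcont : ContinuousAt (fun l : ℝ => c' * Real.exp (l * τ) + l) 0 :=
      ((continuous_const.mul (Real.continuous_exp.comp (continuous_id.mul continuous_const))).add
        continuous_id).continuousAt
    obtain ⟨d, hd, hdp⟩ := Metric.continuousAt_iff.mp hcont (β - c') (by linarith)
    refine ⟨d / 2, by linarith, ?_⟩
    have h2 := hdp (x := d / 2) (by rw [Real.dist_eq, sub_zero, abs_of_pos (by linarith)]; linarith)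
    rw [Real.dist_eq] at h2
    simp only [zero_mul, Real.exp_zero, mul_one, add_zero] at h2
    have := abs_lt.mp h2
    linarith [this.2]
  obtain ⟨ε₂, hε₂pos, hε₂ε, hε₂ε₁, hε₂K⟩ :
      ∃ e : ℝ, 0 < e ∧ e < ε ∧ e < ε₁ ∧ e ≤ K / 2 := by
    refine ⟨min (min ε ε₁) K / 2, by positivity, ?_, ?_, ?_⟩
    · have h3 : min (min ε ε₁) K ≤ ε := le_trans (min_le_left _ _) (min_le_left _ _)
      linarith
    · have h3 : min (min ε ε₁) K ≤ ε₁ := le_trans (min_le_left _ _) (min_le_right _ _)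
      linarith
    · have h3 : min (min ε ε₁) K ≤ K := min_le_right _ _
      linarith
  obtain ⟨δ, hδpos, hδε₂, hγδ⟩ :
      ∃ d : ℝ, 0 < d ∧ d < ε₂ ∧ γ * d ≤ r * ε₂ / 4 := by
    refine ⟨min ε₂ (r * ε₂ / (2 * γ)) / 2, by positivity, ?_, ?_⟩
    · have h3 : min ε₂ (r * ε₂ / (2 * γ)) ≤ ε₂ := min_le_left _ _
      linarith
    · have h4 : min ε₂ (r * ε₂ / (2 * γ)) / 2 ≤ r * ε₂ / (2 * γ) / 2 := by
        have h3 : min ε₂ (r * ε₂ / (2 * γ)) ≤ r * ε₂ / (2 * γ) := min_le_right _ _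
        linarith
      calc γ * (min ε₂ (r * ε₂ / (2 * γ)) / 2) ≤ γ * (r * ε₂ / (2 * γ) / 2) :=
            mul_le_mul_of_nonneg_left h4 hγ.le
        _ = r * ε₂ / 4 := by field_simp; ring
  obtain ⟨ρ, hρpos, hρlam, hρr⟩ : ∃ p : ℝ, 0 < p ∧ p ≤ lam ∧ p ≤ r / 4 :=
    ⟨min lam (r / 4), lt_min hlam_pos (by linarith), min_le_left _ _, min_le_right _ _⟩
  obtain ⟨D, hDpos, hDε₂, hD4, hD7⟩ :
      ∃ DD : ℝ, 0 < DD ∧ ε₂ < DD ∧ 4 * γ * δ / r ≤ DD ∧ γ * δ < r / 4 * DD := by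
    refine ⟨ε₂ + 4 * γ * δ / r + 1, by positivity, ?_, ?_, ?_⟩
    · have h0 : 0 ≤ 4 * γ * δ / r := by positivity
      linarith
    · linarith [hε₂pos]
    · have e : r / 4 * (ε₂ + 4 * γ * δ / r + 1) = r / 4 * ε₂ + γ * δ + r / 4 := by
        field_simp
      rw [e]
      have hp1 : (0:ℝ) < r / 4 * ε₂ := by positivity
      linarith
  refine ⟨δ, hδpos, ?_⟩
  intro φ₁ φ₂ hφ₁c hφ₂c hφnn hφδ x y hsol
  obtain ⟨hxc, hyc, hinit, hder⟩ := hsol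
  have hIci : Ici (0:ℝ) ⊆ Ici (-τ) := Ici_subset_Ici.mpr (by linarith)
  have hxc0 : ContinuousOn x (Ici 0) := hxc.mono hIci
  have hyc0 : ContinuousOn y (Ici 0) := hyc.mono hIci
  have hexpc : ∀ q : ℝ, Continuous (fun u : ℝ => Real.exp (q * u)) := fun q =>
    Real.continuous_exp.comp (continuous_const.mul continuous_id)
  have hexpd : ∀ (q s : ℝ), HasDerivAt (fun u : ℝ => Real.exp (q * u)) (Real.exp (q * s) * q) s := by
    intro q s
    have hlin : HasDerivAt (fun u : ℝ => q * u) q s := by simpa using (hasDerivAt_id s).const_mul q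
    exact (Real.hasDerivAt_exp (q * s)).comp s hlin
  -- initial bounds
  have hinitb : ∀ θ ∈ Icc (-τ) 0, |x θ - K| < δ ∧ |y θ| < δ := by
    intro θ hθ
    obtain ⟨h1, h2⟩ := hinit θ hθ
    have h3 := hφδ θ hθ
    rw [sub_zero] at h3
    rw [h1, h2]
    exact ⟨lt_of_le_of_lt (le_max_left _ _) h3, lt_of_le_of_lt (le_max_right _ _) h3⟩
  have hx0 : |x 0 - K| < δ := (hinitb 0 ⟨by linarith, le_refl 0⟩).1
  have hy0 : |y 0| < δ := (hinitb 0 ⟨by linarith, le_refl 0⟩).2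
  -- generic bound on the predation term
  have habs : ∀ X Y : ℝ, |γ * X ^ 2 * Y / (a ^ 2 + X ^ 2)| ≤ γ * |Y| := by
    intro X Y
    rw [abs_div, abs_of_pos (show (0:ℝ) < a ^ 2 + X ^ 2 by positivity), abs_mul, abs_mul,
      abs_of_pos hγ, abs_of_nonneg (sq_nonneg X), div_le_iff₀ (by positivity)]
    nlinarith [mul_nonneg (mul_nonneg hγ.le (abs_nonneg Y)) (sq_nonneg a)]
  ---------------------------------------------------------------
  -- PART 1 : the bootstrap (invariant region)
  ---------------------------------------------------------------
  set f : ℝ → ℝ := fun s => max (max ((x s - K) / ε₂) ((K - x s) / ε₂))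
      (max (y s / δ) (-y s / δ)) with hfdef
  have hfc : ContinuousOn f (Ici 0) := by
    apply ContinuousOn.max'
    · exact ContinuousOn.max' ((hxc0.sub continuousOn_const).div_const _)
        ((continuousOn_const.sub hxc0).div_const _)
    · exact ContinuousOn.max' (hyc0.div_const _) ((hyc0.neg).div_const _)
  have hf0 : f 0 < 1 := by
    obtain ⟨h1, h2⟩ := abs_lt.mp hx0
    obtain ⟨h3, h4⟩ := abs_lt.mp hy0
    rw [hfdef]
    simp only [max_lt_iff]
    refine ⟨⟨?_, ?_⟩, ?_, ?_⟩
    · exact (div_lt_one hε₂pos).mpr (by linarith)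
    · exact (div_lt_one hε₂pos).mpr (by linarith)
    · exact (div_lt_one hδpos).mpr (by linarith)
    · exact (div_lt_one hδpos).mpr (by linarith)
  have hkey : ∀ t > (0:ℝ), (∀ s ∈ Icc 0 t, f s ≤ 1) → f t = 1 → False := by
    intro t ht hprev heq
    have hb : ∀ s ∈ Icc (0:ℝ) t, |x s - K| ≤ ε₂ ∧ |y s| ≤ δ := by
      intro s hs
      have h := hprev s hs
      rw [hfdef] at h
      simp only [max_le_iff] at h
      obtain ⟨⟨h1, h2⟩, h3, h4⟩ := h
      rw [div_le_one hε₂pos] at h1 h2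
      rw [div_le_one hδpos] at h3 h4
      exact ⟨abs_le.mpr ⟨by linarith only [h2], by linarith only [h1]⟩,
        abs_le.mpr ⟨by linarith only [h4], by linarith only [h3]⟩⟩
    have hhist : ∀ s ∈ Icc (-τ) t, |x s - K| ≤ ε₂ ∧ |y s| ≤ δ := by
      intro s hs
      rcases le_or_gt s 0 with h | h
      · obtain ⟨h1, h2⟩ := hinitb s ⟨hs.1, h⟩
        exact ⟨by linarith only [h1, hδε₂], h2.le⟩
      · exact hb s ⟨h.le, hs.2⟩
    have hC : ∀ p ∈ Icc (-τ) t,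
        γ * (x p) ^ 2 / (a ^ 2 + (x p) ^ 2) * Real.exp (-(y p) / N) < c' := by
      intro p hp
      obtain ⟨h1, h2⟩ := hhist p hp
      exact hball _ _ (lt_of_le_of_lt h1 hε₂ε₁)
        (lt_of_le_of_lt h2 (by linarith only [hδε₂, hε₂ε₁]))
    have hGb : ∀ p ∈ Icc (-τ) t,
        |γ * (x p) ^ 2 / (a ^ 2 + (x p) ^ 2) * y p * Real.exp (-(y p) / N)| ≤ c' * δ := by
      intro p hp
      have h1 := hC p hp
      have h2 := (hhist p hp).2
      have heq2 : |γ * (x p) ^ 2 / (a ^ 2 + (x p) ^ 2) * y p * Real.exp (-(y p) / N)|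
          = γ * (x p) ^ 2 / (a ^ 2 + (x p) ^ 2) * Real.exp (-(y p) / N) * |y p| := by
        rw [abs_mul, abs_mul,
          abs_of_nonneg (show 0 ≤ γ * (x p) ^ 2 / (a ^ 2 + (x p) ^ 2) by positivity),
          abs_of_nonneg (Real.exp_pos _).le]
        ring
      rw [heq2]
      exact mul_le_mul h1.le h2 (abs_nonneg _) hc'pos.le
    have hyt : |y t| ≤ δ := (hb t ⟨ht.le, le_refl t⟩).2
    have hTt : |γ * (x t) ^ 2 * y t / (a ^ 2 + (x t) ^ 2)| ≤ γ * δ :=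
      le_trans (habs (x t) (y t)) (mul_le_mul_of_nonneg_left hyt hγ.le)
    obtain ⟨hTlo, hThi⟩ := abs_le.mp hTt
    obtain ⟨hdx, hdy⟩ := hder t ht
    rw [hfdef] at heq
    rcases max_eq_iff.mp heq with ⟨hA, -⟩ | ⟨hB, -⟩
    · rcases max_eq_iff.mp hA with ⟨hA1, -⟩ | ⟨hA2, -⟩
      · -- x t = K + ε₂ : upper boundary for x
        have hxt : x t - K = ε₂ := (div_eq_one_iff_eq (ne_of_gt hε₂pos)).mp hA1
        have hd1 : HasDerivAt (fun s => (x s - K) / ε₂)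
            ((r * (1 - x t / K) * x t - γ * (x t) ^ 2 * y t / (a ^ 2 + (x t) ^ 2)) / ε₂) t :=
          (hdx.sub_const K).div_const ε₂
        have hslope := deriv_nonneg_of_max _ ht hd1 (by
          intro s hs
          show (x s - K) / ε₂ ≤ (x t - K) / ε₂
          rw [hA1]
          have h := hprev s hs
          rw [hfdef] at h
          exact le_trans (le_trans (le_max_left _ _) (le_max_left _ _)) h)
        have h0X : 0 ≤ r * (1 - x t / K) * x t - γ * (x t) ^ 2 * y t / (a ^ 2 + (x t) ^ 2) := by
          have h5 := mul_nonneg hslope hε₂pos.le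
          rwa [div_mul_cancel₀ _ (ne_of_gt hε₂pos)] at h5
        have hxt' : x t = K + ε₂ := by linarith only [hxt]
        have h1 : r * (1 - x t / K) * x t ≤ -(r * ε₂) := by
          have e1 : r * (1 - x t / K) * x t = -(r * ε₂ * (K + ε₂) / K) := by
            rw [hxt']; field_simp; ring
          rw [e1, neg_le_neg_iff]
          rw [le_div_iff₀ hK]
          linarith only [mul_nonneg (mul_pos hr hε₂pos).le hε₂pos.le]
        linarith only [h0X, h1, hTlo, hγδ, mul_pos hr hε₂pos]
      · -- x t = K - ε₂ : lower boundary for x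
        have hxt : K - x t = ε₂ := (div_eq_one_iff_eq (ne_of_gt hε₂pos)).mp hA2
        have hd1 : HasDerivAt (fun s => (K - x s) / ε₂)
            (-(r * (1 - x t / K) * x t - γ * (x t) ^ 2 * y t / (a ^ 2 + (x t) ^ 2)) / ε₂) t :=
          (hdx.const_sub K).div_const ε₂
        have hslope := deriv_nonneg_of_max _ ht hd1 (by
          intro s hs
          show (K - x s) / ε₂ ≤ (K - x t) / ε₂
          rw [hA2]
          have h := hprev s hs
          rw [hfdef] at h
          exact le_trans (le_trans (le_max_right _ _) (le_max_left _ _)) h)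
        have h0X : r * (1 - x t / K) * x t - γ * (x t) ^ 2 * y t / (a ^ 2 + (x t) ^ 2) ≤ 0 := by
          have h5 := mul_nonneg hslope hε₂pos.le
          rw [div_mul_cancel₀ _ (ne_of_gt hε₂pos)] at h5
          linarith only [h5]
        have hxt' : x t = K - ε₂ := by linarith only [hxt]
        have h1 : r * ε₂ / 2 ≤ r * (1 - x t / K) * x t := by
          have e1 : r * (1 - x t / K) * x t = r * ε₂ * (K - ε₂) / K := by
            rw [hxt']; field_simp; ring
          rw [e1, div_le_div_iff₀ (by norm_num : (0:ℝ) < 2) hK]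
          linarith only [mul_nonneg (mul_pos hr hε₂pos).le
            (show (0:ℝ) ≤ K - 2 * ε₂ by linarith only [hε₂K])]
        linarith only [h0X, h1, hThi, hγδ, mul_pos hr hε₂pos]
    · -- |y t| = δ : boundary for y, integral-free comparison
      have hψder : ∀ σ : ℝ, ∀ s ∈ Ioo (0:ℝ) t,
          HasDerivAt (fun u => c' * δ * Real.exp (β * u) - β * (σ * (y u * Real.exp (β * u))))
            (c' * δ * (Real.exp (β * s) * β) -
              β * (σ * ((-β * y s + γ * (x (s - τ)) ^ 2 / (a ^ 2 + (x (s - τ)) ^ 2) * y (s - τ) *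
                Real.exp (-(y (s - τ)) / N)) * Real.exp (β * s) + y s * (Real.exp (β * s) * β)))) s := by
        intro σ s hs
        obtain ⟨-, hdys⟩ := hder s hs.1
        exact (HasDerivAt.const_mul (c' * δ) (hexpd β s)).sub
          (HasDerivAt.const_mul β (HasDerivAt.const_mul σ (hdys.mul (hexpd β s))))
      have hψ : ∀ σ : ℝ, σ = 1 ∨ σ = -1 →
          MonotoneOn (fun u => c' * δ * Real.exp (β * u) - β * (σ * (y u * Real.exp (β * u))))
            (Icc 0 t) := by
        intro σ hσ
        apply monotoneOn_of_deriv_nonneg (convex_Icc 0 t)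
        · apply ContinuousOn.sub
          · exact (continuous_const.mul (hexpc β)).continuousOn
          · exact continuousOn_const.mul (continuousOn_const.mul
              ((hyc0.mono Icc_subset_Ici_self).mul (hexpc β).continuousOn))
        · intro s hs
          rw [interior_Icc] at hs
          exact (hψder σ s hs).differentiableAt.differentiableWithinAt
        · intro s hs
          rw [interior_Icc] at hs
          rw [(hψder σ s hs).deriv]
          have hG := hGb (s - τ) ⟨by linarith only [hs.1, hτ], by linarith only [hs.2, hτ]⟩
          obtain ⟨hG1, hG2⟩ := abs_le.mp hG
          have he := Real.exp_pos (β * s)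
          have hrw : c' * δ * (Real.exp (β * s) * β) -
              β * (σ * ((-β * y s + γ * (x (s - τ)) ^ 2 / (a ^ 2 + (x (s - τ)) ^ 2) * y (s - τ) *
                Real.exp (-(y (s - τ)) / N)) * Real.exp (β * s) + y s * (Real.exp (β * s) * β)))
              = β * Real.exp (β * s) * (c' * δ - σ * (γ * (x (s - τ)) ^ 2 /
                (a ^ 2 + (x (s - τ)) ^ 2) * y (s - τ) * Real.exp (-(y (s - τ)) / N))) := by
            ring
          rw [hrw]
          rcases hσ with h | h <;> rw [h]
          · exact mul_nonneg (mul_nonneg hβ.le he.le) (by linarith only [hG2])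
          · exact mul_nonneg (mul_nonneg hβ.le he.le) (by linarith only [hG1])
      have hmem0 : (0:ℝ) ∈ Icc (0:ℝ) t := ⟨le_refl 0, ht.le⟩
      have hmemt : t ∈ Icc (0:ℝ) t := ⟨ht.le, le_refl t⟩
      have he1 : (1:ℝ) < Real.exp (β * t) := by
        rw [show (1:ℝ) = Real.exp 0 by simp]
        exact Real.exp_lt_exp.mpr (by positivity)
      obtain ⟨hy0lo, hy0hi⟩ := abs_lt.mp hy0
      rcases max_eq_iff.mp hB with ⟨hB1, -⟩ | ⟨hB2, -⟩
      · -- y t = δ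
        have hyteq : y t = δ := (div_eq_one_iff_eq (ne_of_gt hδpos)).mp hB1
        have h5 := hψ 1 (Or.inl rfl) hmem0 hmemt ht.le
        simp only [mul_zero, Real.exp_zero, mul_one, one_mul] at h5
        rw [hyteq] at h5
        linarith only [h5, mul_lt_mul_of_pos_right hc'lt (mul_pos hδpos (sub_pos.mpr he1)),
          mul_lt_mul_of_pos_left hy0hi hβ]
      · -- y t = -δ
        have hyteq : y t = -δ := by
          have h9 := (div_eq_one_iff_eq (ne_of_gt hδpos)).mp hB2
          linarith only [h9]
        have h5 := hψ (-1) (Or.inr rfl) hmem0 hmemt ht.le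
        simp only [mul_zero, Real.exp_zero, mul_one, neg_one_mul, neg_mul, mul_neg,
          sub_neg_eq_add] at h5
        rw [hyteq] at h5
        linarith only [h5, mul_lt_mul_of_pos_right hc'lt (mul_pos hδpos (sub_pos.mpr he1)),
          mul_lt_mul_of_pos_left hy0lo hβ]
  have hboot := crossing f 1 hfc hf0 hkey
  have hglob : ∀ t ≥ (0:ℝ), |x t - K| < ε₂ ∧ |y t| < δ := by
    intro t ht
    have h := hboot t ht
    rw [hfdef] at h
    simp only [max_lt_iff] at h
    obtain ⟨⟨h1, h2⟩, h3, h4⟩ := h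
    rw [div_lt_one hε₂pos] at h1 h2
    rw [div_lt_one hδpos] at h3 h4
    exact ⟨abs_lt.mpr ⟨by linarith, by linarith⟩, abs_lt.mpr ⟨by linarith, by linarith⟩⟩
  have hglob' : ∀ s, -τ ≤ s → |x s - K| ≤ ε₂ ∧ |y s| ≤ δ := by
    intro s hs
    rcases le_or_gt s 0 with h | h
    · obtain ⟨h1, h2⟩ := hinitb s ⟨hs, h⟩
      exact ⟨by linarith, h2.le⟩
    · obtain ⟨h1, h2⟩ := hglob s h.le
      exact ⟨h1.le, h2.le⟩
  have hpart1 : ∀ t ≥ (0:ℝ), max |x t - K| |y t - 0| < ε := by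
    intro t ht
    obtain ⟨h1, h2⟩ := hglob t ht
    rw [sub_zero]
    exact max_lt (by linarith) (by linarith)
  -- global coefficient bounds
  have hGbg : ∀ p, -τ ≤ p →
      |γ * (x p) ^ 2 / (a ^ 2 + (x p) ^ 2) * y p * Real.exp (-(y p) / N)| ≤ c' * |y p| := by
    intro p hp
    obtain ⟨h1, h2⟩ := hglob' p hp
    have hc := hball (x p) (y p) (lt_of_le_of_lt h1 hε₂ε₁) (lt_of_le_of_lt h2 (by linarith))
    have heq2 : |γ * (x p) ^ 2 / (a ^ 2 + (x p) ^ 2) * y p * Real.exp (-(y p) / N)|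
        = γ * (x p) ^ 2 / (a ^ 2 + (x p) ^ 2) * Real.exp (-(y p) / N) * |y p| := by
      rw [abs_mul, abs_mul,
        abs_of_nonneg (show 0 ≤ γ * (x p) ^ 2 / (a ^ 2 + (x p) ^ 2) by positivity),
        abs_of_nonneg (Real.exp_pos _).le]
      ring
    rw [heq2]
    exact mul_le_mul_of_nonneg_right hc.le (abs_nonneg _)
  ---------------------------------------------------------------
  -- PART 2 : Halanay-type decay for y
  ---------------------------------------------------------------
  set g : ℝ → ℝ := fun s => max (y s * Real.exp (lam * s) / δ) (-(y s * Real.exp (lam * s)) / δ)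
    with hgdef
  have hgc : ContinuousOn g (Ici 0) := by
    apply ContinuousOn.max'
    · exact (hyc0.mul (hexpc lam).continuousOn).div_const _
    · exact ((hyc0.mul (hexpc lam).continuousOn).neg).div_const _
  have hg0 : g 0 < 1 := by
    obtain ⟨h3, h4⟩ := abs_lt.mp hy0
    rw [hgdef]
    simp only [mul_zero, Real.exp_zero, mul_one, max_lt_iff]
    constructor
    · exact (div_lt_one hδpos).mpr (by linarith)
    · exact (div_lt_one hδpos).mpr (by linarith)
  have hgkey : ∀ t > (0:ℝ), (∀ s ∈ Icc 0 t, g s ≤ 1) → g t = 1 → False := by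
    intro t ht hprev heq
    have hbd : ∀ s ∈ Icc (0:ℝ) t, |y s * Real.exp (lam * s)| ≤ δ := by
      intro s hs
      have h := hprev s hs
      rw [hgdef] at h
      simp only [max_le_iff] at h
      obtain ⟨h1, h2⟩ := h
      rw [div_le_one hδpos] at h1 h2
      exact abs_le.mpr ⟨by linarith only [h2], h1⟩
    -- bound on the delayed term
    have hEt := Real.exp_pos (lam * t)
    have hytau : |y (t - τ)| ≤ δ * Real.exp (lam * (τ - t)) := by
      rcases le_or_gt 0 (t - τ) with h | h
      · have hb1 := hbd (t - τ) ⟨h, by linarith only [hτ]⟩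
        rw [abs_mul, abs_of_pos (Real.exp_pos _)] at hb1
        have hE := Real.exp_pos (lam * (t - τ))
        rw [show lam * (τ - t) = -(lam * (t - τ)) by ring, Real.exp_neg, ← div_eq_mul_inv,
          le_div_iff₀ hE]
        exact hb1
      · have h2 := (hinitb (t - τ) ⟨by linarith only [ht], by linarith only [h]⟩).2
        have h3 : (1:ℝ) ≤ Real.exp (lam * (τ - t)) := by
          rw [show (1:ℝ) = Real.exp 0 by simp]
          exact Real.exp_le_exp.mpr (by
            linarith only [mul_nonneg hlam_pos.le (show (0:ℝ) ≤ τ - t by linarith only [h])])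
        linarith only [h2, mul_le_mul_of_nonneg_left h3 hδpos.le]
    have hGv := hGbg (t - τ) (by linarith only [ht])
    have hGv2 : |γ * (x (t - τ)) ^ 2 / (a ^ 2 + (x (t - τ)) ^ 2) * y (t - τ) *
        Real.exp (-(y (t - τ)) / N)| ≤ c' * (δ * Real.exp (lam * (τ - t))) :=
      le_trans hGv (mul_le_mul_of_nonneg_left hytau hc'pos.le)
    have hsplit : Real.exp (lam * (τ - t)) * Real.exp (lam * t) = Real.exp (lam * τ) := by
      rw [← Real.exp_add]; congr 1; ring
    obtain ⟨-, hdy⟩ := hder t ht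
    rw [hgdef] at heq
    rcases max_eq_iff.mp heq with ⟨hB1, -⟩ | ⟨hB2, -⟩
    · -- y t * exp(lam t) = δ
      have hyt : y t * Real.exp (lam * t) = δ := (div_eq_one_iff_eq (ne_of_gt hδpos)).mp hB1
      have hd1 : HasDerivAt (fun s => y s * Real.exp (lam * s) / δ)
          (((-β * y t + γ * (x (t - τ)) ^ 2 / (a ^ 2 + (x (t - τ)) ^ 2) * y (t - τ) *
            Real.exp (-(y (t - τ)) / N)) * Real.exp (lam * t) +
            y t * (Real.exp (lam * t) * lam)) / δ) t :=
        (hdy.mul (hexpd lam t)).div_const δ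
      have hslope := deriv_nonneg_of_max _ ht hd1 (by
        intro s hs
        show y s * Real.exp (lam * s) / δ ≤ y t * Real.exp (lam * t) / δ
        rw [hB1]
        have h := hprev s hs
        rw [hgdef] at h
        exact le_trans (le_max_left _ _) h)
      have h0Y : 0 ≤ (-β * y t + γ * (x (t - τ)) ^ 2 / (a ^ 2 + (x (t - τ)) ^ 2) * y (t - τ) *
          Real.exp (-(y (t - τ)) / N)) * Real.exp (lam * t) + y t * (Real.exp (lam * t) * lam) := by
        have h5 := mul_nonneg hslope hδpos.le
        rwa [div_mul_cancel₀ _ (ne_of_gt hδpos)] at h5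
      have hXX : (-β * y t + γ * (x (t - τ)) ^ 2 / (a ^ 2 + (x (t - τ)) ^ 2) * y (t - τ) *
          Real.exp (-(y (t - τ)) / N)) * Real.exp (lam * t) + y t * (Real.exp (lam * t) * lam)
          = -(β * δ) + (γ * (x (t - τ)) ^ 2 / (a ^ 2 + (x (t - τ)) ^ 2) * y (t - τ) *
            Real.exp (-(y (t - τ)) / N)) * Real.exp (lam * t) + lam * δ := by
        linear_combination (lam - β) * hyt
      have hGE : (γ * (x (t - τ)) ^ 2 / (a ^ 2 + (x (t - τ)) ^ 2) * y (t - τ) *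
          Real.exp (-(y (t - τ)) / N)) * Real.exp (lam * t) ≤ c' * δ * Real.exp (lam * τ) := by
        have h6 := mul_le_mul_of_nonneg_right (le_trans (le_abs_self _) hGv2) hEt.le
        calc (γ * (x (t - τ)) ^ 2 / (a ^ 2 + (x (t - τ)) ^ 2) * y (t - τ) *
            Real.exp (-(y (t - τ)) / N)) * Real.exp (lam * t)
            ≤ c' * (δ * Real.exp (lam * (τ - t))) * Real.exp (lam * t) := h6
          _ = c' * δ * (Real.exp (lam * (τ - t)) * Real.exp (lam * t)) := by ring
          _ = c' * δ * Real.exp (lam * τ) := by rw [hsplit]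
      rw [hXX] at h0Y
      linarith only [h0Y, hGE, mul_lt_mul_of_pos_right hlam hδpos]
    · -- y t * exp(lam t) = -δ
      have hyt : y t * Real.exp (lam * t) = -δ := by
        have h9 := (div_eq_one_iff_eq (ne_of_gt hδpos)).mp hB2
        linarith only [h9]
      have hd1 : HasDerivAt (fun s => -(y s * Real.exp (lam * s)) / δ)
          (-(((-β * y t + γ * (x (t - τ)) ^ 2 / (a ^ 2 + (x (t - τ)) ^ 2) * y (t - τ) *
            Real.exp (-(y (t - τ)) / N)) * Real.exp (lam * t) +
            y t * (Real.exp (lam * t) * lam))) / δ) t :=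
        ((hdy.mul (hexpd lam t)).neg).div_const δ
      have hslope := deriv_nonneg_of_max _ ht hd1 (by
        intro s hs
        show -(y s * Real.exp (lam * s)) / δ ≤ -(y t * Real.exp (lam * t)) / δ
        rw [hB2]
        have h := hprev s hs
        rw [hgdef] at h
        exact le_trans (le_max_right _ _) h)
      have h0Y : (-β * y t + γ * (x (t - τ)) ^ 2 / (a ^ 2 + (x (t - τ)) ^ 2) * y (t - τ) *
          Real.exp (-(y (t - τ)) / N)) * Real.exp (lam * t) + y t * (Real.exp (lam * t) * lam) ≤ 0 := by
        have h5 := mul_nonneg hslope hδpos.le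
        rw [div_mul_cancel₀ _ (ne_of_gt hδpos)] at h5
        linarith only [h5]
      have hXX : (-β * y t + γ * (x (t - τ)) ^ 2 / (a ^ 2 + (x (t - τ)) ^ 2) * y (t - τ) *
          Real.exp (-(y (t - τ)) / N)) * Real.exp (lam * t) + y t * (Real.exp (lam * t) * lam)
          = β * δ + (γ * (x (t - τ)) ^ 2 / (a ^ 2 + (x (t - τ)) ^ 2) * y (t - τ) *
            Real.exp (-(y (t - τ)) / N)) * Real.exp (lam * t) - lam * δ := by
        linear_combination (lam - β) * hyt
      have hGE : -(c' * δ * Real.exp (lam * τ)) ≤ (γ * (x (t - τ)) ^ 2 /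
          (a ^ 2 + (x (t - τ)) ^ 2) * y (t - τ) * Real.exp (-(y (t - τ)) / N)) * Real.exp (lam * t) := by
        have h7 := (abs_le.mp hGv2).1
        have h6 := mul_le_mul_of_nonneg_right h7 hEt.le
        calc -(c' * δ * Real.exp (lam * τ))
            = -(c' * (δ * Real.exp (lam * (τ - t)))) * Real.exp (lam * t) := by
              rw [← hsplit]; ring
          _ ≤ _ := h6
      rw [hXX] at h0Y
      linarith only [h0Y, hGE, mul_lt_mul_of_pos_right hlam hδpos]
  have hhal := crossing g 1 hgc hg0 hgkey
  have hydecay : ∀ t ≥ (0:ℝ), |y t| * Real.exp (lam * t) ≤ δ := by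
    intro t ht
    have h := hhal t ht
    rw [hgdef] at h
    simp only [max_lt_iff] at h
    obtain ⟨h1, h2⟩ := h
    rw [div_lt_one hδpos] at h1 h2
    have h3 : |y t * Real.exp (lam * t)| ≤ δ := abs_le.mpr ⟨by linarith, h1.le⟩
    rwa [abs_mul, abs_of_pos (Real.exp_pos _)] at h3
  ---------------------------------------------------------------
  -- PART 3 : exponential convergence of x to K
  ---------------------------------------------------------------
  set w : ℝ → ℝ := fun s => max ((x s - K) * Real.exp (ρ * s) / D)
      ((K - x s) * Real.exp (ρ * s) / D) with hwdef
  have hwc : ContinuousOn w (Ici 0) := by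
    apply ContinuousOn.max'
    · exact ((hxc0.sub continuousOn_const).mul (hexpc ρ).continuousOn).div_const _
    · exact ((continuousOn_const.sub hxc0).mul (hexpc ρ).continuousOn).div_const _
  have hw0 : w 0 < 1 := by
    obtain ⟨h1, h2⟩ := abs_lt.mp hx0
    rw [hwdef]
    simp only [mul_zero, Real.exp_zero, mul_one, max_lt_iff]
    constructor
    · exact (div_lt_one hDpos).mpr (by linarith)
    · exact (div_lt_one hDpos).mpr (by linarith)
  have hwkey : ∀ t > (0:ℝ), (∀ s ∈ Icc 0 t, w s ≤ 1) → w t = 1 → False := by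
    intro t ht hprev heq
    obtain ⟨hdx, -⟩ := hder t ht
    have hE := Real.exp_pos (ρ * t)
    have hyb : |y t| ≤ δ * (Real.exp (ρ * t))⁻¹ := by
      have h1 := hydecay t ht.le
      have h2 : Real.exp (ρ * t) ≤ Real.exp (lam * t) :=
        Real.exp_le_exp.mpr (mul_le_mul_of_nonneg_right hρlam ht.le)
      rw [← div_eq_mul_inv, le_div_iff₀ hE]
      calc |y t| * Real.exp (ρ * t) ≤ |y t| * Real.exp (lam * t) :=
            mul_le_mul_of_nonneg_left h2 (abs_nonneg _)
        _ ≤ δ := h1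
    have hT2 : |γ * (x t) ^ 2 * y t / (a ^ 2 + (x t) ^ 2)| ≤ γ * (δ * (Real.exp (ρ * t))⁻¹) :=
      le_trans (habs (x t) (y t)) (mul_le_mul_of_nonneg_left hyb hγ.le)
    obtain ⟨hTlo, hThi⟩ := abs_le.mp hT2
    have hxb := (hglob t ht.le).1
    have h6 : ρ * D ≤ r / 4 * D := mul_le_mul_of_nonneg_right hρr hDpos.le
    have h7 : γ * δ < r / 4 * D := hD7
    rw [hwdef] at heq
    rcases max_eq_iff.mp heq with ⟨hB1, -⟩ | ⟨hB2, -⟩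
    · -- upper crossing : (x t - K) * exp(ρ t) = D
      have hxt : (x t - K) * Real.exp (ρ * t) = D := (div_eq_one_iff_eq (ne_of_gt hDpos)).mp hB1
      have hu : 0 < x t - K := by
        have hmul : 0 < (x t - K) * Real.exp (ρ * t) := by rw [hxt]; exact hDpos
        rcases mul_pos_iff.mp hmul with ⟨h8, -⟩ | ⟨-, h8⟩
        · exact h8
        · exact absurd hE (by linarith only [h8])
      have hd1 : HasDerivAt (fun s => (x s - K) * Real.exp (ρ * s) / D)
          (((r * (1 - x t / K) * x t - γ * (x t) ^ 2 * y t / (a ^ 2 + (x t) ^ 2)) *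
            Real.exp (ρ * t) + (x t - K) * (Real.exp (ρ * t) * ρ)) / D) t :=
        ((hdx.sub_const K).mul (hexpd ρ t)).div_const D
      have hslope := deriv_nonneg_of_max _ ht hd1 (by
        intro s hs
        show (x s - K) * Real.exp (ρ * s) / D ≤ (x t - K) * Real.exp (ρ * t) / D
        rw [hB1]
        have h := hprev s hs
        rw [hwdef] at h
        exact le_trans (le_max_left _ _) h)
      have h0X : 0 ≤ (r * (1 - x t / K) * x t - γ * (x t) ^ 2 * y t / (a ^ 2 + (x t) ^ 2)) *
          Real.exp (ρ * t) + (x t - K) * (Real.exp (ρ * t) * ρ) := by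
        have h5 := mul_nonneg hslope hDpos.le
        rwa [div_mul_cancel₀ _ (ne_of_gt hDpos)] at h5
      have h1 : r * (1 - x t / K) * x t ≤ -(r * (x t - K)) := by
        have e1 : r * (1 - x t / K) * x t = -(r * (x t - K) * x t / K) := by
          field_simp; ring
        rw [e1, neg_le_neg_iff, le_div_iff₀ hK]
        linarith only [mul_nonneg (mul_nonneg hr.le hu.le) hu.le]
      have h2 : (r * (1 - x t / K) * x t - γ * (x t) ^ 2 * y t / (a ^ 2 + (x t) ^ 2)) *
          Real.exp (ρ * t) ≤ -(r * D) + γ * δ := by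
        have h3 : r * (1 - x t / K) * x t - γ * (x t) ^ 2 * y t / (a ^ 2 + (x t) ^ 2)
            ≤ -(r * (x t - K)) + γ * (δ * (Real.exp (ρ * t))⁻¹) := by
              linarith only [h1, hTlo]
        calc (r * (1 - x t / K) * x t - γ * (x t) ^ 2 * y t / (a ^ 2 + (x t) ^ 2)) *
            Real.exp (ρ * t)
            ≤ (-(r * (x t - K)) + γ * (δ * (Real.exp (ρ * t))⁻¹)) * Real.exp (ρ * t) :=
              mul_le_mul_of_nonneg_right h3 hE.le
          _ = -(r * ((x t - K) * Real.exp (ρ * t))) + γ * δ := by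
              field_simp
          _ = -(r * D) + γ * δ := by rw [hxt]
      have h4 : (x t - K) * (Real.exp (ρ * t) * ρ) = ρ * D := by
        rw [show (x t - K) * (Real.exp (ρ * t) * ρ)
          = ((x t - K) * Real.exp (ρ * t)) * ρ by ring, hxt]
        ring
      rw [h4] at h0X
      linarith only [h0X, h2, h6, h7, mul_pos hr hDpos]
    · -- lower crossing : (K - x t) * exp(ρ t) = D
      have hxt : (K - x t) * Real.exp (ρ * t) = D := (div_eq_one_iff_eq (ne_of_gt hDpos)).mp hB2
      have hu : 0 < K - x t := by
        have hmul : 0 < (K - x t) * Real.exp (ρ * t) := by rw [hxt]; exact hDpos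
        rcases mul_pos_iff.mp hmul with ⟨h8, -⟩ | ⟨-, h8⟩
        · exact h8
        · exact absurd hE (by linarith only [h8])
      have hxK2 : K / 2 ≤ x t := by
        have h9 := (abs_lt.mp hxb).1
        linarith only [h9, hε₂K]
      have hd1 : HasDerivAt (fun s => (K - x s) * Real.exp (ρ * s) / D)
          ((-(r * (1 - x t / K) * x t - γ * (x t) ^ 2 * y t / (a ^ 2 + (x t) ^ 2)) *
            Real.exp (ρ * t) + (K - x t) * (Real.exp (ρ * t) * ρ)) / D) t :=
        ((hdx.const_sub K).mul (hexpd ρ t)).div_const D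
      have hslope := deriv_nonneg_of_max _ ht hd1 (by
        intro s hs
        show (K - x s) * Real.exp (ρ * s) / D ≤ (K - x t) * Real.exp (ρ * t) / D
        rw [hB2]
        have h := hprev s hs
        rw [hwdef] at h
        exact le_trans (le_max_right _ _) h)
      have h0X : 0 ≤ -(r * (1 - x t / K) * x t - γ * (x t) ^ 2 * y t / (a ^ 2 + (x t) ^ 2)) *
          Real.exp (ρ * t) + (K - x t) * (Real.exp (ρ * t) * ρ) := by
        have h5 := mul_nonneg hslope hDpos.le
        rwa [div_mul_cancel₀ _ (ne_of_gt hDpos)] at h5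
      have h1 : r * (K - x t) / 2 ≤ r * (1 - x t / K) * x t := by
        have e1 : r * (1 - x t / K) * x t = r * (K - x t) * x t / K := by
          field_simp
        rw [e1, div_le_div_iff₀ (by norm_num : (0:ℝ) < 2) hK]
        linarith only [mul_nonneg (mul_nonneg hr.le hu.le)
          (show (0:ℝ) ≤ 2 * x t - K by linarith only [hxK2])]
      have h2 : -(r * (1 - x t / K) * x t - γ * (x t) ^ 2 * y t / (a ^ 2 + (x t) ^ 2)) *
          Real.exp (ρ * t) ≤ -(r / 2 * D) + γ * δ := by
        have h3 : -(r * (1 - x t / K) * x t - γ * (x t) ^ 2 * y t / (a ^ 2 + (x t) ^ 2))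
            ≤ -(r * (K - x t) / 2) + γ * (δ * (Real.exp (ρ * t))⁻¹) := by
              linarith only [h1, hThi]
        calc -(r * (1 - x t / K) * x t - γ * (x t) ^ 2 * y t / (a ^ 2 + (x t) ^ 2)) *
            Real.exp (ρ * t)
            ≤ (-(r * (K - x t) / 2) + γ * (δ * (Real.exp (ρ * t))⁻¹)) * Real.exp (ρ * t) :=
              mul_le_mul_of_nonneg_right h3 hE.le
          _ = -(r / 2 * ((K - x t) * Real.exp (ρ * t))) + γ * δ := by
              field_simp
          _ = -(r / 2 * D) + γ * δ := by rw [hxt]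
      have h4 : (K - x t) * (Real.exp (ρ * t) * ρ) = ρ * D := by
        rw [show (K - x t) * (Real.exp (ρ * t) * ρ)
          = ((K - x t) * Real.exp (ρ * t)) * ρ by ring, hxt]
        ring
      rw [h4] at h0X
      linarith only [h0X, h2, h6, h7]
  have hwcr := crossing w 1 hwc hw0 hwkey
  have hxdecay : ∀ t ≥ (0:ℝ), |x t - K| * Real.exp (ρ * t) ≤ D := by
    intro t ht
    have h := hwcr t ht
    rw [hwdef] at h
    simp only [max_lt_iff] at h
    obtain ⟨h1, h2⟩ := h
    rw [div_lt_one hDpos] at h1 h2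
    have h3 : |(x t - K) * Real.exp (ρ * t)| ≤ D := abs_le.mpr ⟨by linarith, h1.le⟩
    rwa [abs_mul, abs_of_pos (Real.exp_pos _)] at h3
  ---------------------------------------------------------------
  -- Conclusion
  ---------------------------------------------------------------
  have hdecay0 : ∀ (c q : ℝ), 0 < q → Tendsto (fun t : ℝ => c * (Real.exp (q * t))⁻¹) atTop (nhds 0) := by
    intro c q hq
    have h1 : Tendsto (fun t : ℝ => q * t) atTop atTop :=
      Tendsto.const_mul_atTop hq tendsto_id
    have h2 : Tendsto (fun t : ℝ => -(q * t)) atTop atBot := tendsto_neg_atBot_iff.mpr h1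
    have h3 : Tendsto (fun t : ℝ => Real.exp (-(q * t))) atTop (nhds 0) :=
      Real.tendsto_exp_atBot.comp h2
    have h4 : (fun t : ℝ => Real.exp (-(q * t))) = fun t : ℝ => (Real.exp (q * t))⁻¹ := by
      funext t; rw [Real.exp_neg]
    rw [h4] at h3
    simpa using h3.const_mul c
  have hytend : Tendsto y atTop (nhds 0) := by
    refine squeeze_zero_norm' ?_ (hdecay0 δ lam hlam_pos)
    filter_upwards [eventually_ge_atTop (0:ℝ)] with t ht
    have h1 := hydecay t ht
    have hE := Real.exp_pos (lam * t)
    rw [Real.norm_eq_abs, ← div_eq_mul_inv, le_div_iff₀ hE]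
    exact h1
  have hxtend : Tendsto x atTop (nhds K) := by
    have h1 : Tendsto (fun t => x t - K) atTop (nhds 0) := by
      refine squeeze_zero_norm' ?_ (hdecay0 D ρ hρpos)
      filter_upwards [eventually_ge_atTop (0:ℝ)] with t ht
      have h2 := hxdecay t ht
      have hE := Real.exp_pos (ρ * t)
      rw [Real.norm_eq_abs, ← div_eq_mul_inv, le_div_iff₀ hE]
      exact h2
    have h2 := h1.add (tendsto_const_nhds : Tendsto (fun _ : ℝ => K) atTop (nhds K))
    simpa using h2
  exact ⟨hpart1, Tendsto.prodMk_nhds hxtend hytend⟩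
end

section
/- Let r, K, a, γ, β, N be positive parameters and let (x*, y*) with x* > 0, y* > 0 satisfy the equilibrium identities γx*y*/(a² + x*²) = r(1 − x*/K) and β = (γx*²/(a² + x*²)) e^{−y*/N}. Define m = r(1 − x*/K)(2a²/(a² + x*²) − 1) + β + r x*/K, n = β(y*/N − 1), p = −β(β − m), and q = −βr(1 − 2x*/K). Assume (H2): (r x*/K + β y*/N)/(r(1 − x*/K)) > 1 − 2a²/(a² + x*²), and (H3): γ x* y* a²/(a² + x*²)² > r(1 − 2x*/K). Then m + n > 0, p + q > 0, p − q > 0, and hence p² − q² > 0. -/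
/-- At a positive equilibrium `(x*, y*)` of the delayed predator–prey
system, under hypotheses (H2) and (H3), the coefficients `m, n, p, q` of the
characteristic equation satisfy `m + n > 0`, `p + q > 0`, `p − q > 0`, and hence
`p² − q² > 0`. -/
theorem coefficients_at_positive_equilibrium
    (r K a γ β N xs ys : ℝ) (hr : 0 < r) (hK : 0 < K) (ha : 0 < a) (hγ : 0 < γ)
    (hβ : 0 < β) (hN : 0 < N) (hxs : 0 < xs) (hys : 0 < ys)
    (heq1 : γ * xs * ys / (a ^ 2 + xs ^ 2) = r * (1 - xs / K))
    (heq2 : β = γ * xs ^ 2 / (a ^ 2 + xs ^ 2) * Real.exp (-ys / N))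
    (m n p q : ℝ)
    (hm : m = r * (1 - xs / K) * (2 * a ^ 2 / (a ^ 2 + xs ^ 2) - 1) + β + r * xs / K)
    (hn : n = β * (ys / N - 1))
    (hp : p = -β * (β - m))
    (hq : q = -β * r * (1 - 2 * xs / K))
    (hH2 : (r * xs / K + β * ys / N) / (r * (1 - xs / K)) > 1 - 2 * a ^ 2 / (a ^ 2 + xs ^ 2))
    (hH3 : γ * xs * ys * a ^ 2 / (a ^ 2 + xs ^ 2) ^ 2 > r * (1 - 2 * xs / K)) :
    m + n > 0 ∧ p + q > 0 ∧ p - q > 0 ∧ p ^ 2 - q ^ 2 > 0 := by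
  have hD : 0 < a ^ 2 + xs ^ 2 := by positivity
  have hR : 0 < r * (1 - xs / K) := by
    rw [← heq1]; positivity
  set t : ℝ := r * (1 - xs / K) * (a ^ 2 / (a ^ 2 + xs ^ 2)) with ht
  have htpos : 0 < t := by positivity
  have hγxy : γ * xs * ys = r * (1 - xs / K) * (a ^ 2 + xs ^ 2) := by
    rw [div_eq_iff hD.ne'] at heq1; exact heq1
  have hfact : t > r * (1 - 2 * xs / K) := by
    have : γ * xs * ys * a ^ 2 / (a ^ 2 + xs ^ 2) ^ 2 = t := by
      rw [hγxy, ht]; field_simp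
    linarith [this ▸ hH3]
  have hm' : m = 2 * t - r * (1 - xs / K) + β + r * xs / K := by
    rw [hm, ht]; ring
  have h2' : r * (1 - xs / K) - 2 * t < r * xs / K + β * ys / N := by
    have := (lt_div_iff₀ hR).mp hH2
    have e : (1 - 2 * a ^ 2 / (a ^ 2 + xs ^ 2)) * (r * (1 - xs / K))
        = r * (1 - xs / K) - 2 * t := by rw [ht]; ring
    linarith [e ▸ this]
  have hn' : n = β * ys / N - β := by rw [hn]; ring
  have h1 : m + n > 0 := by
    rw [hm', hn']; linarith [h2']
  have h2 : p + q > 0 := by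
    have e : p + q = 2 * β * (t - r * (1 - 2 * xs / K)) := by
      rw [hp, hq, hm']; ring
    rw [e]
    have : 0 < t - r * (1 - 2 * xs / K) := by linarith
    positivity
  have h3 : p - q > 0 := by
    have e : p - q = 2 * β * t := by
      rw [hp, hq, hm']; ring
    rw [e]; positivity
  have e : p ^ 2 - q ^ 2 = (p + q) * (p - q) := by ring
  exact ⟨h1, h2, h3, e ▸ mul_pos h2 h3⟩
end

section
/- Let r, K, a, γ, β, N be positive parameters with γK²/(a² + K²) > β, and let (x*, y*) with x* > 0, y* > 0 satisfy γx*y*/(a² + x*²) = r(1 − x*/K) and β = (γx*²/(a² + x*²)) e^{−y*/N}. Define m = r(1 − x*/K)(2a²/(a² + x*²) − 1) + β + r x*/K, n = β(y*/N − 1), p = −β(β − m), q = −βr(1 − 2x*/K), and assume (H2): (r x*/K + β y*/N)/(r(1 − x*/K)) > 1 − 2a²/(a² + x*²), (H3): γ x* y* a²/(a² + x*²)² > r(1 − 2x*/K), and in addition 2p + n² − m² < 0. Then for every delay τ ≥ 0, every complex root λ of λ² + mλ + nλe^{−λτ} + p + qe^{−λτ} = 0 has negative real part; that is, the positive equilibrium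 (x*, y*) is locally absolutely stable. -/
set_option maxHeartbeats 1000000 in
/-- At a positive equilibrium `(x*, y*)` of the delayed predator–prey
system, under hypotheses (H2), (H3) and `2p + n² − m² < 0`, every complex root of the
characteristic equation `λ² + mλ + nλe^{−λτ} + p + qe^{−λτ} = 0` has negative real part
for every delay `τ ≥ 0`; i.e. the positive equilibrium is locally absolutely stable. -/
theorem positive_equilibrium_absolutely_stable
    (r K a γ β N xs ys : ℝ) (hr : 0 < r) (hK : 0 < K) (ha : 0 < a) (hγ : 0 < γ)
    (hβ : 0 < β) (hN : 0 < N)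
    (hexist : γ * K ^ 2 / (a ^ 2 + K ^ 2) > β)
    (hxs : 0 < xs) (hys : 0 < ys)
    (heq1 : γ * xs * ys / (a ^ 2 + xs ^ 2) = r * (1 - xs / K))
    (heq2 : β = γ * xs ^ 2 / (a ^ 2 + xs ^ 2) * Real.exp (-ys / N))
    (m n p q : ℝ)
    (hm : m = r * (1 - xs / K) * (2 * a ^ 2 / (a ^ 2 + xs ^ 2) - 1) + β + r * xs / K)
    (hn : n = β * (ys / N - 1))
    (hp : p = -β * (β - m))
    (hq : q = -β * r * (1 - 2 * xs / K))
    (hH2 : (r * xs / K + β * ys / N) / (r * (1 - xs / K)) > 1 - 2 * a ^ 2 / (a ^ 2 + xs ^ 2))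
    (hH3 : γ * xs * ys * a ^ 2 / (a ^ 2 + xs ^ 2) ^ 2 > r * (1 - 2 * xs / K))
    (hA : 2 * p + n ^ 2 - m ^ 2 < 0) :
    ∀ τ : ℝ, 0 ≤ τ → ∀ z : ℂ,
      z ^ 2 + (m : ℂ) * z + (n : ℂ) * z * Complex.exp (-z * (τ : ℂ)) +
        (p : ℂ) + (q : ℂ) * Complex.exp (-z * (τ : ℂ)) = 0 →
      z.re < 0 := by
  -- First, the scalar consequences of the hypotheses.
  have hS : (0:ℝ) < a ^ 2 + xs ^ 2 := by positivity
  have hc : 0 < r * (1 - xs / K) := by rw [← heq1]; positivity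
  have h2 : (1 - 2 * a ^ 2 / (a ^ 2 + xs ^ 2)) * (r * (1 - xs / K)) <
      r * xs / K + β * ys / N := (lt_div_iff₀ hc).mp hH2
  have hmn : 0 < m + n := by
    rw [hm, hn]; ring_nf at h2 ⊢; linarith
  have hkey : r * (1 - xs / K) * a ^ 2 / (a ^ 2 + xs ^ 2)
      = γ * xs * ys * a ^ 2 / (a ^ 2 + xs ^ 2) ^ 2 := by
    rw [← heq1]; field_simp
  have hpq' : 0 < p - q := by
    have key : p - q = 2 * β * (r * (1 - xs / K) * a ^ 2 / (a ^ 2 + xs ^ 2)) := by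
      rw [hp, hq, hm]; field_simp; ring
    rw [key]; positivity
  have hpq : 0 < p + q := by
    have key : p + q = 2 * β * (r * (1 - xs / K) * a ^ 2 / (a ^ 2 + xs ^ 2)
        - r * (1 - 2 * xs / K)) := by
      rw [hp, hq, hm]; field_simp; ring
    rw [key, hkey]
    have : 0 < γ * xs * ys * a ^ 2 / (a ^ 2 + xs ^ 2) ^ 2 - r * (1 - 2 * xs / K) := by
      linarith
    positivity
  have hp0 : 0 < p := by linarith
  have hA' : 0 < m ^ 2 - n ^ 2 - 2 * p := by linarith
  have hmn' : 0 < m - n := by nlinarith [hmn, hp0, hA']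
  have hm0 : 0 < m := by linarith
  clear hr hK ha hγ hβ hN hexist hxs hys heq1 heq2 hm hn hp hq hH2 hH3 hA hS hc h2 hkey hp0
  -- Now the complex-analytic part.
  intro τ hτ z hz
  by_contra hre
  push_neg at hre
  set x := z.re with hxdef
  set y := z.im with hydef
  have he : (z ^ 2 + (m : ℂ) * z + (p : ℂ)) =
      -(((n : ℂ) * z + (q : ℂ)) * Complex.exp (-z * (τ : ℂ))) := by
    linear_combination hz
  have hre' : (-z * (τ : ℂ)).re = -(x * τ) := by
    simp [Complex.mul_re, hxdef]
  have habs : ‖z ^ 2 + (m : ℂ) * z + (p : ℂ)‖ =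
      ‖(n : ℂ) * z + (q : ℂ)‖ * Real.exp (-(x * τ)) := by
    rw [he, norm_neg, norm_mul, Complex.norm_exp, hre']
  have hexp1 : Real.exp (-(x * τ)) ≤ 1 := by
    rw [Real.exp_le_one_iff]
    nlinarith
  have hle : ‖z ^ 2 + (m : ℂ) * z + (p : ℂ)‖ ≤
      ‖(n : ℂ) * z + (q : ℂ)‖ := by
    rw [habs]
    calc ‖(n : ℂ) * z + (q : ℂ)‖ * Real.exp (-(x * τ))
        ≤ ‖(n : ℂ) * z + (q : ℂ)‖ * 1 :=
          mul_le_mul_of_nonneg_left hexp1 (norm_nonneg _)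
      _ = _ := mul_one _
  have hsq : Complex.normSq (z ^ 2 + (m : ℂ) * z + (p : ℂ)) ≤
      Complex.normSq ((n : ℂ) * z + (q : ℂ)) := by
    rw [← Complex.sq_norm, ← Complex.sq_norm]
    exact pow_le_pow_left₀ (norm_nonneg _) hle 2
  have h1 : (z ^ 2 + (m : ℂ) * z + (p : ℂ)).re = x ^ 2 - y ^ 2 + m * x + p := by
    simp only [pow_two, Complex.add_re, Complex.mul_re, Complex.ofReal_re,
      Complex.ofReal_im, ← hxdef, ← hydef]
    ring
  have h2 : (z ^ 2 + (m : ℂ) * z + (p : ℂ)).im = 2 * x * y + m * y := by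
    simp only [pow_two, Complex.add_im, Complex.mul_im, Complex.ofReal_re,
      Complex.ofReal_im, ← hxdef, ← hydef]
    ring
  have h3 : ((n : ℂ) * z + (q : ℂ)).re = n * x + q := by simp [hxdef]
  have h4 : ((n : ℂ) * z + (q : ℂ)).im = n * y := by simp [hydef]
  rw [Complex.normSq_apply, Complex.normSq_apply, h1, h2, h3, h4] at hsq
  have hB : 0 ≤ 2 * x ^ 2 + 2 * m * x + (m ^ 2 - n ^ 2 - 2 * p) := by nlinarith
  have hC : 0 < (x ^ 2 + (m - n) * x + (p - q)) * (x ^ 2 + (m + n) * x + (p + q)) := by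
    apply mul_pos <;> nlinarith
  nlinarith [hsq, hC, mul_nonneg (sq_nonneg y) hB, sq_nonneg (y ^ 2)]
end
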